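/- arXiv:1412.5428 — 4 statements merged into one kernel-verified Lean document; each statement's English description precedes it below -/
import Mathlib

section
/- The pair (W^Γ, {w_I : I ∈ S̄}) satisfies the Exchange Condition: let w ∈ W^Γ with λ(w) = p, let w = w_{J_1} ⋯ w_{J_p} with J_i ∈ S̄, and let I ∈ S̄ be such that λ(w_I w) ≤ λ(w). Then there exists i ∈ {1, …, p} such that w_I w = w_{J_1} ⋯ w_{J_{i-1}} w_{J_{i+1}} ⋯ w_{J_p}. -/
open CoxeterSystem

/-- The subgroup of fixed points of a group `Γ` of automorphisms of `W`. -/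
def fixedSubgroup {W : Type*} [Group W] (Γ : Subgroup (MulAut W)) : Subgroup W where
  carrier := {w | ∀ γ ∈ Γ, γ w = w}
  one_mem' := fun γ _ => map_one γ
  mul_mem' := fun {a b} ha hb γ hγ => by rw [map_mul, ha γ hγ, hb γ hγ]
  inv_mem' := fun {a} ha γ hγ => by rw [map_inv, ha γ hγ]

/-- `I` is a `Γ`-orbit on the set `S` of simple reflections of `(W, S)` such that the
standard parabolic subgroup `W_I` generated by `I` is finite. -/
def IsFinParabolicOrbit {B W : Type*} [Group W] {M : CoxeterMatrix B}
    (cs : CoxeterSystem M W) (Γ : Subgroup (MulAut W)) (I : Set W) : Prop :=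
  (∃ s ∈ Set.range cs.simple, I = {t | ∃ γ ∈ Γ, γ s = t}) ∧
    Finite ↥(Subgroup.closure I)

/-- `w` is the longest element of the standard parabolic subgroup `W_I` generated by `I`. -/
def IsLongestIn {B W : Type*} [Group W] {M : CoxeterMatrix B}
    (cs : CoxeterSystem M W) (I : Set W) (w : W) : Prop :=
  w ∈ Subgroup.closure I ∧ ∀ u ∈ Subgroup.closure I, cs.length u ≤ cs.length w

/-- The word length of `w` with respect to a generating set `gen` consisting of
involutions: the least number of factors from `gen` whose product is `w`. -/
noncomputable def wordLength {W : Type*} [Group W] (gen : Set W) (w : W) : ℕ :=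
  sInf {n : ℕ | ∃ L : List W, L.length = n ∧ (∀ x ∈ L, x ∈ gen) ∧ L.prod = w}

open List

namespace ExchAux

variable {B W : Type*} [Group W] {M : CoxeterMatrix B} (cs : CoxeterSystem M W)

local prefix:100 "s" => cs.simple
local prefix:100 "π" => cs.wordProd
local prefix:100 "ℓ" => cs.length
local prefix:100 "ris" => cs.rightInvSeq
local prefix:100 "lis" => cs.leftInvSeq

theorem ris_append (α β : List B) :
    ris (α ++ β) = (ris α).map (fun t => (π β)⁻¹ * t * π β) ++ ris β := by
  induction α with
  | nil => simp
  | cons i α ih =>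
      show (π (α ++ β))⁻¹ * s i * π (α ++ β) :: ris (α ++ β)
        = ((ris (i :: α)).map (fun t => (π β)⁻¹ * t * π β)) ++ ris β
      show _ = (((π α)⁻¹ * s i * π α :: ris α).map (fun t => (π β)⁻¹ * t * π β)) ++ ris β
      rw [ih, cs.wordProd_append, map_cons]
      simp only [cons_append, mul_inv_rev]
      congr 1
      group

theorem lis_eq_map_ris (ω : List B) :
    lis ω = (ris ω).map (fun t => π ω * t * (π ω)⁻¹) := by
  apply List.ext_getElem (by simp)
  intro k h1 h2
  have h1' : k < ω.length := by simpa using h1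
  rw [List.getElem_map, ← List.getD_eq_getElem (lis ω) 1, ← List.getD_eq_getElem (ris ω) 1,
    cs.getD_rightInvSeq, cs.getD_leftInvSeq, List.getElem?_eq_getElem h1']
  simp only [Option.map_some, Option.getD_some]
  have htk : ω.take (k+1) = ω.take k ++ [ω.get ⟨k, h1'⟩] := by
    have := (List.take_concat_get h1').symm
    rwa [List.concat_eq_append] at this
  have hω : π ω = π (ω.take k) * s (ω.get ⟨k, h1'⟩) * π (ω.drop (k+1)) := by
    calc π ω = π (ω.take (k+1) ++ ω.drop (k+1)) := by rw [List.take_append_drop]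
    _ = _ := by rw [cs.wordProd_append, htk, cs.wordProd_append, cs.wordProd_singleton, mul_assoc]
  rw [hω, List.get_eq_getElem]
  group

/-! ### alternating word combinatorics -/

theorem alt_drop (i j : B) : ∀ n d, (alternatingWord i j n).drop d = alternatingWord i j (n - d)
  | 0, d => by simp [alternatingWord]
  | (n+1), 0 => by simp
  | (n+1), (d+1) => by
      rw [alternatingWord_succ' i j n, List.drop_succ_cons, alt_drop i j n d]
      congr 1
      omega

theorem alt_get? (i j : B) : ∀ n k, k < n →
    (alternatingWord i j n)[k]? = some (if Even (n - k) then i else j)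
  | 0, k, h => by omega
  | (n+1), 0, h => by
      rw [alternatingWord_succ' i j n]
      simp only [List.getElem?_cons_zero, Nat.sub_zero]
      rcases Nat.even_or_odd n with he | ho
      · rw [if_pos he, if_neg (by simpa [Nat.even_add_one] using he)]
      · have hne : ¬ Even n := Nat.not_even_iff_odd.mpr ho
        rw [if_neg hne, if_pos (by simpa [Nat.even_add_one] using hne)]
  | (n+1), (k+1), h => by
      rw [alternatingWord_succ' i j n, List.getElem?_cons_succ, alt_get? i j n k (by omega)]
      have : n + 1 - (k + 1) = n - k := by omega
      rw [this]

theorem alt_add (i j : B) (m : ℕ) : ∀ n, alternatingWord i j (n + m) =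
    (if Even m then alternatingWord i j n else alternatingWord j i n) ++ alternatingWord i j m
  | 0 => by simp [alternatingWord]
  | (n+1) => by
      have : n + 1 + m = (n + m) + 1 := by omega
      rw [this, alternatingWord_succ' i j (n+m), alt_add i j m n]
      rcases Nat.even_or_odd m with he | ho
      · rw [if_pos he, if_pos he, alternatingWord_succ' i j n]
        have : Even (n + m) ↔ Even n := by
          rw [Nat.even_add]; tauto
        rcases Nat.even_or_odd n with hn | hn
        · rw [if_pos (this.mpr hn), if_pos hn]; rfl
        · have hn' : ¬ Even n := Nat.not_even_iff_odd.mpr hn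
          rw [if_neg (fun hh => hn' (this.mp hh)), if_neg hn']; rfl
      · have ho' : ¬ Even m := Nat.not_even_iff_odd.mpr ho
        rw [if_neg ho', if_neg ho', alternatingWord_succ' j i n]
        have : Even (n + m) ↔ ¬ Even n := by
          rw [Nat.even_add]; tauto
        rcases Nat.even_or_odd n with hn | hn
        · rw [if_neg (by tauto), if_pos hn]; rfl
        · have hn' : ¬ Even n := Nat.not_even_iff_odd.mpr hn
          rw [if_pos (this.mpr hn'), if_neg hn']; rfl


/-! ### dihedral conjugation lemmas -/

section Dihedral

variable {i j : B} {m : ℕ}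

theorem sj_conj_c : s j * (s i * s j) * s j = (s i * s j)⁻¹ := by
  have h := cs.simple_mul_simple_self j
  rw [mul_inv_rev, cs.inv_simple, cs.inv_simple]
  calc s j * (s i * s j) * s j = s j * s i * (s j * s j) := by group
  _ = s j * s i := by rw [h, mul_one]

theorem si_conj_c : s i * (s i * s j) * s i = (s i * s j)⁻¹ := by
  have h := cs.simple_mul_simple_self i
  rw [mul_inv_rev, cs.inv_simple, cs.inv_simple]
  calc s i * (s i * s j) * s i = (s i * s i) * s j * s i := by group
  _ = s j * s i := by rw [h, one_mul]

theorem semiconj_sj (k : ℕ) : s j * (s i * s j)^k = ((s i * s j)⁻¹)^k * s j := by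
  have h : SemiconjBy (s j) (s i * s j) ((s i * s j)⁻¹) := by
    unfold SemiconjBy
    have h2 := sj_conj_c cs (i := i) (j := j)
    calc s j * (s i * s j) = (s j * (s i * s j) * s j) * s j := by
          rw [mul_assoc _ (s j) (s j), cs.simple_mul_simple_self, mul_one]
    _ = (s i * s j)⁻¹ * s j := by rw [h2]
  exact (h.pow_right k).eq

theorem semiconj_si (k : ℕ) : s i * (s i * s j)^k = ((s i * s j)⁻¹)^k * s i := by
  have h : SemiconjBy (s i) (s i * s j) ((s i * s j)⁻¹) := by
    unfold SemiconjBy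
    have h2 := si_conj_c cs (i := i) (j := j)
    calc s i * (s i * s j) = (s i * (s i * s j) * s i) * s i := by
          rw [mul_assoc _ (s i) (s i), cs.simple_mul_simple_self, mul_one]
    _ = (s i * s j)⁻¹ * s i := by rw [h2]
  exact (h.pow_right k).eq

/-- In the even case, `π (alternatingWord i j m)` is a central involution of the dihedral
subgroup. -/
theorem even_comm_si (hm : (s i * s j) ^ m = 1) (he : Even m) :
    Commute (π (alternatingWord i j m)) (s i) ∧ Commute (π (alternatingWord i j m)) (s j) := by
  have hq : π (alternatingWord i j m) = (s i * s j) ^ (m / 2) := by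
    rw [cs.prod_alternatingWord_eq_mul_pow, if_pos he, one_mul]
  have hsq : (s i * s j) ^ (m / 2) * (s i * s j) ^ (m / 2) = 1 := by
    rw [← pow_add]
    obtain ⟨k, hk⟩ := he
    have hh : m / 2 + m / 2 = m := by omega
    rw [hh, hm]
  have hinv : ((s i * s j) ^ (m / 2))⁻¹ = (s i * s j) ^ (m / 2) :=
    inv_eq_of_mul_eq_one_right hsq
  constructor
  · rw [hq]
    have h1 : s i * (s i * s j)^(m/2) = ((s i * s j)^(m/2))⁻¹ * s i := by
      rw [semiconj_si cs, inv_pow]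
    rw [Commute, SemiconjBy, h1, hinv]
  · rw [hq]
    have h1 : s j * (s i * s j)^(m/2) = ((s i * s j)^(m/2))⁻¹ * s j := by
      rw [semiconj_sj cs, inv_pow]
    rw [Commute, SemiconjBy, h1, hinv]

theorem odd_swap (hm : (s i * s j)^m = 1) (ho : ¬ Even m) :
    (π (alternatingWord i j m))⁻¹ * s i * π (alternatingWord i j m) = s j ∧
    (π (alternatingWord i j m))⁻¹ * s j * π (alternatingWord i j m) = s i := by
  set c := s i * s j with hc
  have hq : π (alternatingWord i j m) = s j * c ^ (m / 2) := by
    rw [cs.prod_alternatingWord_eq_mul_pow, if_neg ho]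
  have hsemi : s j * c ^ (m/2) = (c ^ (m/2))⁻¹ * s j := by rw [semiconj_sj cs, inv_pow]
  have hqinv : (π (alternatingWord i j m))⁻¹ = (c ^ (m/2))⁻¹ * s j := by
    rw [hq, mul_inv_rev, cs.inv_simple]
  have hji : s j * s i = c⁻¹ := by rw [hc, mul_inv_rev, cs.inv_simple, cs.inv_simple]
  have hmodd : m % 2 = 1 := Nat.not_even_iff.mp ho
  have hfull : c ^ (m/2) * c * c ^ (m/2) = 1 := by
    rw [← pow_succ, ← pow_add, show m/2 + 1 + m/2 = m by omega, hm]
  have h2k : c * (c ^ (m/2) * c ^ (m/2)) = 1 := by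
    rw [← pow_add, ← pow_succ', show (m/2 + m/2) + 1 = m by omega, hm]
  constructor
  · rw [hqinv, hq]
    calc (c ^ (m/2))⁻¹ * s j * s i * (s j * c ^ (m/2))
        = (c ^ (m/2))⁻¹ * (s j * s i) * (s j * c ^ (m/2)) := by group
    _ = (c ^ (m/2))⁻¹ * c⁻¹ * ((c ^ (m/2))⁻¹ * s j) := by rw [hji, hsemi]
    _ = (c ^ (m/2) * c * c ^ (m/2))⁻¹ * s j := by group
    _ = s j := by rw [hfull, inv_one, one_mul]
  · rw [hqinv, hq]
    calc (c ^ (m/2))⁻¹ * s j * s j * (s j * c ^ (m/2))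
        = (c ^ (m/2))⁻¹ * (s j * s j) * (s j * c ^ (m/2)) := by group
    _ = (c ^ (m/2))⁻¹ * (s j * c ^ (m/2)) := by rw [cs.simple_mul_simple_self, mul_one]
    _ = (c ^ (m/2) * c ^ (m/2))⁻¹ * s j := by rw [hsemi]; group
    _ = c * s j := by rw [inv_eq_of_mul_eq_one_left h2k]
    _ = s i * (s j * s j) := by rw [hc]; group
    _ = s i := by rw [cs.simple_mul_simple_self, mul_one]

theorem odd_conj_word (hm : (s i * s j)^m = 1) (ho : ¬ Even m) (r : ℕ) :
    (π (alternatingWord i j m))⁻¹ * π (alternatingWord j i r) * π (alternatingWord i j m)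
      = π (alternatingWord i j r) ∧
    (π (alternatingWord i j m))⁻¹ * π (alternatingWord i j r) * π (alternatingWord i j m)
      = π (alternatingWord j i r) := by
  set q := π (alternatingWord i j m) with hqdef
  induction r with
  | zero => constructor <;> simp [alternatingWord]
  | succ r ih =>
      have hswap := odd_swap cs hm ho
      have key : ∀ (a b : W), q⁻¹ * (a * b) * q = (q⁻¹ * a * q) * (q⁻¹ * b * q) := by
        intro a b; group
      constructor
      · rw [alternatingWord_succ' j i r, cs.wordProd_cons, key, ih.1,
          alternatingWord_succ' i j r, cs.wordProd_cons]
        congr 1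
        rcases Nat.even_or_odd r with he | hoo
        · rw [if_pos he, if_pos he, hswap.1]
        · rw [if_neg (Nat.not_even_iff_odd.mpr hoo), if_neg (Nat.not_even_iff_odd.mpr hoo),
            hswap.2]
      · rw [alternatingWord_succ' i j r, cs.wordProd_cons, key, ih.2,
          alternatingWord_succ' j i r, cs.wordProd_cons]
        congr 1
        rcases Nat.even_or_odd r with he | hoo
        · rw [if_pos he, if_pos he, hswap.2]
        · rw [if_neg (Nat.not_even_iff_odd.mpr hoo), if_neg (Nat.not_even_iff_odd.mpr hoo),
            hswap.1]

theorem even_comm_word (hm : (s i * s j)^m = 1) (he : Even m) (r : ℕ) :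
    Commute (π (alternatingWord i j m)) (π (alternatingWord i j r)) := by
  induction r with
  | zero => simp [alternatingWord, Commute.one_right]
  | succ r ih =>
      rw [alternatingWord_succ' i j r, cs.wordProd_cons]
      apply Commute.mul_right _ ih
      rcases Nat.even_or_odd r with hr | hr
      · rw [if_pos hr]; exact (even_comm_si cs hm he).2
      · rw [if_neg (Nat.not_even_iff_odd.mpr hr)]; exact (even_comm_si cs hm he).1

theorem even_ris_conj (hm : (s i * s j)^m = 1) (he : Even m) :
    (ris (alternatingWord i j m)).map
      (fun t => (π (alternatingWord i j m))⁻¹ * t * π (alternatingWord i j m))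
      = ris (alternatingWord i j m) := by
  have : ∀ t ∈ ris (alternatingWord i j m),
      (π (alternatingWord i j m))⁻¹ * t * π (alternatingWord i j m) = t := by
    intro t ht
    obtain ⟨k, hk, rfl⟩ := List.getElem_of_mem ht
    have hk' : k < m := by simpa using hk
    rw [← List.getD_eq_getElem _ 1, cs.getD_rightInvSeq, alt_drop,
      alt_get? i j m k hk']
    have hcw := even_comm_word cs hm he (m - (k+1))
    have hcs : Commute (π (alternatingWord i j m)) ((Option.map cs.simple
        (some (if Even (m - k) then i else j))).getD 1) := by
      simp only [Option.map_some, Option.getD_some]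
      rcases em (Even (m - k)) with hh | hh
      · rw [if_pos hh]; exact (even_comm_si cs hm he).1
      · rw [if_neg hh]; exact (even_comm_si cs hm he).2
    set q := π (alternatingWord i j m)
    set X := π (alternatingWord i j (m - (k+1)))
    set g : W := (Option.map cs.simple (some (if Even (m - k) then i else j))).getD 1
    have hcomm : Commute q (X⁻¹ * g * X) := (hcw.inv_right.mul_right hcs).mul_right hcw
    calc q⁻¹ * (X⁻¹ * g * X) * q = ((X⁻¹ * g * X) * q⁻¹) * q := by rw [hcomm.inv_left.eq]
    _ = X⁻¹ * g * X := by group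
  rw [List.map_congr_left this]
  simp

theorem odd_ris_conj (hm : (s i * s j)^m = 1) (ho : ¬ Even m) :
    (ris (alternatingWord j i m)).map
      (fun t => (π (alternatingWord i j m))⁻¹ * t * π (alternatingWord i j m))
      = ris (alternatingWord i j m) := by
  apply List.ext_getElem (by simp [length_alternatingWord])
  intro k h1 h2
  have hk : k < m := by simpa [length_alternatingWord] using h2
  rw [List.getElem_map, ← List.getD_eq_getElem (ris (alternatingWord j i m)) 1,
    ← List.getD_eq_getElem (ris (alternatingWord i j m)) 1,
    cs.getD_rightInvSeq, cs.getD_rightInvSeq, alt_drop, alt_drop,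
    alt_get? j i m k hk, alt_get? i j m k hk]
  simp only [Option.map_some, Option.getD_some]
  set q := π (alternatingWord i j m) with hq
  set X' := π (alternatingWord j i (m - (k+1))) with hX'
  set X := π (alternatingWord i j (m - (k+1))) with hX
  have hXq : q⁻¹ * X' * q = X := (odd_conj_word cs hm ho (m - (k+1))).1
  have hg : q⁻¹ * s (if Even (m-k) then j else i) * q = s (if Even (m-k) then i else j) := by
    rcases em (Even (m-k)) with hh | hh
    · rw [if_pos hh, if_pos hh]; exact (odd_swap cs hm ho).2
    · rw [if_neg hh, if_neg hh]; exact (odd_swap cs hm ho).1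
  calc q⁻¹ * (X'⁻¹ * s (if Even (m-k) then j else i) * X') * q
      = (q⁻¹ * X' * q)⁻¹ * (q⁻¹ * s (if Even (m-k) then j else i) * q) * (q⁻¹ * X' * q) := by
        group
  _ = X⁻¹ * s (if Even (m-k) then i else j) * X := by rw [hXq, hg]

end Dihedral

/-! ### the sign permutation representation -/

section Signrep

open scoped Classical

noncomputable def sigmaFun (i : B) : (W × ZMod 2) → (W × ZMod 2) :=
  fun p => (s i * p.1 * s i, if p.1 = s i then p.2 + 1 else p.2)

theorem sigmaFun_involutive (i : B) : Function.Involutive (sigmaFun cs i) := by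
  rintro ⟨a, e⟩
  have hs : s i * s i = 1 := cs.simple_mul_simple_self i
  have h1 : s i * (s i * a * s i) * s i = a := by
    calc s i * (s i * a * s i) * s i = (s i * s i) * a * (s i * s i) := by group
    _ = a := by rw [hs]; group
  have h2 : (s i * a * s i = s i) ↔ (a = s i) :=
    ⟨fun h => by
      have h3 : s i * (s i * a * s i) * s i = s i * s i * s i := by rw [h]
      rwa [h1, hs, one_mul] at h3,
    fun h => by rw [h, hs, one_mul]⟩
  simp only [sigmaFun, h1]
  rcases em (a = s i) with ha | ha
  · rw [if_pos ha, if_pos (h2.mpr ha), add_assoc]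
    have h11 : (1 : ZMod 2) + 1 = 0 := by decide
    rw [h11, add_zero]
  · rw [if_neg ha, if_neg (fun hh => ha (h2.mp hh))]

noncomputable def sigmaPerm (i : B) : Equiv.Perm (W × ZMod 2) :=
  (sigmaFun_involutive cs i).toPerm

theorem sigmaPerm_apply (i : B) (p : W × ZMod 2) :
    sigmaPerm cs i p = (s i * p.1 * s i, if p.1 = s i then p.2 + 1 else p.2) := rfl

theorem conj_eq_iff (g x y : W) : g * x * g⁻¹ = y ↔ x = g⁻¹ * y * g :=
  ⟨fun h => by rw [← h]; group, fun h => by rw [h]; group⟩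

theorem sigma_word_apply (ω : List B) (p : W × ZMod 2) :
    ((ω.map (sigmaPerm cs)).prod) p
      = (π ω * p.1 * (π ω)⁻¹, p.2 + ((ris ω).count p.1 : ZMod 2)) := by
  induction ω generalizing p with
  | nil => simp
  | cons i ω ih =>
      rw [List.map_cons, List.prod_cons]
      have hcomp : ((sigmaPerm cs i) * ((ω.map (sigmaPerm cs)).prod)) p
          = sigmaPerm cs i (((ω.map (sigmaPerm cs)).prod) p) := rfl
      rw [hcomp, ih, sigmaPerm_apply]
      have hris : ris (i :: ω) = ((π ω)⁻¹ * s i * π ω) :: ris ω := rfl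
      apply Prod.ext
      · show s i * (π ω * p.1 * (π ω)⁻¹) * s i = π (i :: ω) * p.1 * (π (i :: ω))⁻¹
        rw [cs.wordProd_cons, mul_inv_rev, cs.inv_simple]
        group
      · show (if π ω * p.1 * (π ω)⁻¹ = s i then p.2 + ((ris ω).count p.1 : ZMod 2) + 1
              else p.2 + ((ris ω).count p.1 : ZMod 2))
          = p.2 + ((ris (i :: ω)).count p.1 : ZMod 2)
        rw [hris, List.count_cons]
        simp only [beq_iff_eq]
        have hiff := conj_eq_iff (π ω) p.1 (s i)
        rcases em (p.1 = (π ω)⁻¹ * s i * π ω) with hc | hc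
        · rw [if_pos (hiff.mpr hc), if_pos hc.symm]
          push_cast
          ring
        · rw [if_neg (fun hh => hc (hiff.mp hh)), if_neg (fun hh => hc hh.symm)]
          push_cast
          ring

theorem sigma_alt_prod (i j : B) (m : ℕ) :
    ((alternatingWord i j (2*m)).map (sigmaPerm cs)).prod
      = ((sigmaPerm cs i) * (sigmaPerm cs j))^m := by
  induction m with
  | zero => simp [alternatingWord]
  | succ m ih =>
      have h2 : 2 * (m+1) = (2*m) + 1 + 1 := by omega
      rw [h2, alternatingWord_succ', alternatingWord_succ']
      rw [if_neg (by simp [Nat.even_add_one, Nat.even_mul]), if_pos (by simp [Nat.even_mul])]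
      rw [List.map_cons, List.map_cons, List.prod_cons, List.prod_cons, ih, pow_succ']
      rw [mul_assoc]

theorem isLiftable_sigmaPerm : M.IsLiftable (sigmaPerm cs) := by
  intro i j
  rcases Nat.eq_zero_or_pos (M i j) with h0 | hpos
  · rw [h0, pow_zero]
  · have hrel : (s i * s j)^(M i j) = 1 := cs.simple_mul_simple_pow i j
    set m := M i j with hmdef
    rw [← sigma_alt_prod]
    apply Equiv.ext
    rintro ⟨a, e⟩
    have hπ : π (alternatingWord i j (2*m)) = 1 := by
      rw [cs.prod_alternatingWord_eq_mul_pow, if_pos (by simp [Nat.even_mul]), one_mul]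
      have h22 : 2*m/2 = m := by omega
      rw [h22, hrel]
    have hsplit : alternatingWord i j (2*m)
        = (if Even m then alternatingWord i j m else alternatingWord j i m)
          ++ alternatingWord i j m := by
      rw [show 2*m = m + m by omega]
      exact alt_add i j m m
    have hcount : ((ris (alternatingWord i j (2*m))).count a) % 2 = 0 := by
      rw [hsplit, ris_append cs, List.count_append]
      rcases Nat.even_or_odd m with he | ho
      · rw [if_pos he, even_ris_conj cs hrel he]
        omega
      · rw [if_neg (Nat.not_even_iff_odd.mpr ho), odd_ris_conj cs hrel (Nat.not_even_iff_odd.mpr ho)]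
        omega
    rw [sigma_word_apply, hπ]
    have hz : (((ris (alternatingWord i j (2*m))).count a : ℕ) : ZMod 2) = 0 :=
      (ZMod.natCast_eq_zero_iff _ 2).mpr (Nat.dvd_of_mod_eq_zero hcount)
    rw [hz, add_zero]
    show (1 * a * 1⁻¹, e) = _
    rw [one_mul, inv_one, mul_one]
    rfl

theorem count_conj_map (g : W) (l : List W) (t : W) :
    ((l.map (fun x => g⁻¹ * x * g)).count t) = l.count (g * t * g⁻¹) := by
  induction l with
  | nil => simp
  | cons x l ih =>
      rw [List.map_cons, List.count_cons, List.count_cons, ih]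
      congr 1
      simp only [beq_iff_eq]
      have : (g⁻¹ * x * g = t) ↔ (x = g * t * g⁻¹) := by
        constructor
        · intro h; rw [← h]; group
        · intro h; rw [h]; group
      rcases em (x = g * t * g⁻¹) with hc | hc
      · rw [if_pos (this.mpr hc), if_pos hc]
      · rw [if_neg (fun hh => hc (this.mp hh)), if_neg hc]

noncomputable def etaPerm : W →* Equiv.Perm (W × ZMod 2) :=
  cs.lift ⟨sigmaPerm cs, isLiftable_sigmaPerm cs⟩

theorem etaPerm_simple (i : B) : etaPerm cs (s i) = sigmaPerm cs i :=
  cs.lift_apply_simple _ i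

theorem etaPerm_wordProd (ω : List B) : etaPerm cs (π ω) = (ω.map (sigmaPerm cs)).prod := by
  show etaPerm cs (List.prod (ω.map cs.simple)) = _
  rw [map_list_prod (etaPerm cs), List.map_map]
  congr 1
  exact List.map_congr_left (fun i _ => etaPerm_simple cs i)

theorem etaPerm_word_apply (ω : List B) (p : W × ZMod 2) :
    etaPerm cs (π ω) p = (π ω * p.1 * (π ω)⁻¹, p.2 + ((ris ω).count p.1 : ZMod 2)) := by
  rw [etaPerm_wordProd, sigma_word_apply]

noncomputable def eta (w t : W) : ZMod 2 := (etaPerm cs w (t, 0)).2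

theorem eta_count (ω : List B) (t : W) : eta cs (π ω) t = ((ris ω).count t : ZMod 2) := by
  rw [eta, etaPerm_word_apply]
  exact zero_add _

theorem etaPerm_snd (w t : W) (e : ZMod 2) :
    (etaPerm cs w (t, e)).2 = e + eta cs w t := by
  obtain ⟨ω, rfl⟩ := cs.wordProd_surjective w
  rw [etaPerm_word_apply, eta_count]

theorem eta_cocycle (a b t : W) :
    eta cs (a * b) t = eta cs b t + eta cs a (b * t * b⁻¹) := by
  rw [eta, map_mul]
  have : (etaPerm cs a * etaPerm cs b) (t, 0) = etaPerm cs a (etaPerm cs b (t, 0)) := rfl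
  rw [this]
  have hb : etaPerm cs b (t, 0) = (b * t * b⁻¹, eta cs b t) := by
    obtain ⟨ω, rfl⟩ := cs.wordProd_surjective b
    rw [etaPerm_word_apply, eta_count]
    exact congrArg _ (zero_add _)
  rw [hb, etaPerm_snd]

theorem eta_self {t : W} (ht : cs.IsReflection t) : eta cs t t = 1 := by
  obtain ⟨w, i, rfl⟩ := ht
  obtain ⟨ω, rfl⟩ := cs.wordProd_surjective w
  set w := π ω with hwdef
  have hρ : π (ω ++ (i :: ω.reverse)) = w * s i * w⁻¹ := by
    rw [cs.wordProd_append, cs.wordProd_cons, cs.wordProd_reverse, ← mul_assoc]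
  have hkey := eta_count cs (ω ++ (i :: ω.reverse)) (w * s i * w⁻¹)
  rw [hρ] at hkey
  rw [hkey, ris_append cs]
  have hβ : π (i :: ω.reverse) = s i * w⁻¹ := by
    rw [cs.wordProd_cons, cs.wordProd_reverse]
  have hcons : ris (i :: ω.reverse) = ((π ω.reverse)⁻¹ * s i * π ω.reverse) :: ris ω.reverse := rfl
  rw [List.count_append, hβ, hcons]
  have hhead : (π ω.reverse)⁻¹ * s i * π ω.reverse = w * s i * w⁻¹ := by
    rw [cs.wordProd_reverse, inv_inv]
  rw [hhead, List.count_cons]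
  have hss : s i * s i = 1 := cs.simple_mul_simple_self i
  -- first part
  have hconj1 : (s i * w⁻¹) * (w * s i * w⁻¹) * (s i * w⁻¹)⁻¹ = s i := by group
  have h1 : ((ris ω).map (fun t => (s i * w⁻¹)⁻¹ * t * (s i * w⁻¹))).count (w * s i * w⁻¹)
      = (ris ω).count (s i) := by
    rw [count_conj_map (s i * w⁻¹) (cs.rightInvSeq ω) (w * s i * w⁻¹), hconj1]
  rw [h1]
  -- last part
  have hconj2 : w⁻¹ * (w * s i * w⁻¹) * (w⁻¹)⁻¹ = s i := by group
  have h2 : (ris ω.reverse).count (w * s i * w⁻¹) = (ris ω).count (s i) := by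
    rw [rightInvSeq_reverse, List.count_reverse, lis_eq_map_ris cs]
    have heq : ((ris ω).map (fun x => w * x * w⁻¹)).count (w * s i * w⁻¹)
        = ((ris ω).map (fun x => (w⁻¹)⁻¹ * x * w⁻¹)).count (w * s i * w⁻¹) := by
      congr 1
      exact List.map_congr_left (fun x _ => by rw [inv_inv])
    rw [← hwdef, heq, count_conj_map (w⁻¹) (cs.rightInvSeq ω) (w * s i * w⁻¹), hconj2]
  rw [h2]
  rw [if_pos (beq_iff_eq.mpr rfl)]
  have hcc : (ris ω).count (s i) + ((ris ω).count (s i) + 1)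
      = 2 * (ris ω).count (s i) + 1 := by omega
  rw [hcc]
  push_cast
  have h2z : (2 : ZMod 2) = 0 := by decide
  rw [h2z, zero_mul, zero_add]

theorem eta_one_of_descent {t w : W} (ht : cs.IsReflection t) (h : ℓ (w * t) < ℓ w) :
    eta cs w t = 1 := by
  have hco : eta cs ((w * t) * t) t = eta cs t t + eta cs (w * t) (t * t * t⁻¹) :=
    eta_cocycle cs (w * t) t t
  have htt : t * t * t⁻¹ = t := by group
  have hwt : w * t * t = w := by
    have := ht.mul_self
    rw [mul_assoc, this, mul_one]
  rw [htt, hwt, eta_self cs ht] at hco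
  have hz : eta cs (w * t) t = 0 := by
    by_contra hne
    have h1 : eta cs (w * t) t = 1 := by
      rcases (by decide : ∀ x : ZMod 2, x = 0 ∨ x = 1) (eta cs (w * t) t) with h' | h'
      · exact absurd h' hne
      · exact h'
    -- then w * t has t as right descent, contradiction
    obtain ⟨ω, hred, hw⟩ := cs.exists_reduced_word' (w * t)
    rw [hw, eta_count] at h1
    have hmem : t ∈ ris ω := by
      by_contra hmem
      rw [List.count_eq_zero.mpr hmem] at h1
      exact absurd h1 (by decide)
    have := cs.isRightInversion_of_mem_rightInvSeq hred hmem
    rw [← hw] at this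
    have h2 : ℓ (w * t * t) < ℓ (w * t) := this.2
    rw [hwt] at h2
    omega
  rw [hz, add_zero] at hco
  exact hco

theorem eta_one_iff_descent {t w : W} (ht : cs.IsReflection t) :
    eta cs w t = 1 ↔ ℓ (w * t) < ℓ w := by
  constructor
  · intro h
    obtain ⟨ω, hred, hw⟩ := cs.exists_reduced_word' w
    rw [hw, eta_count] at h
    have hmem : t ∈ ris ω := by
      by_contra hmem
      rw [List.count_eq_zero.mpr hmem] at h
      exact absurd h (by decide)
    have := cs.isRightInversion_of_mem_rightInvSeq hred hmem
    rw [← hw] at this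
    exact this.2
  · exact eta_one_of_descent cs ht

theorem descent_mem_ris {t : W} {ω : List B} (ht : cs.IsReflection t)
    (hred : cs.IsReduced ω) (h : ℓ (π ω * t) < ℓ (π ω)) : t ∈ ris ω := by
  have h1 : eta cs (π ω) t = 1 := eta_one_of_descent cs ht h
  rw [eta_count] at h1
  by_contra hmem
  rw [List.count_eq_zero.mpr hmem] at h1
  exact absurd h1 (by decide)

theorem strong_exchange_right {t : W} {ω : List B} (ht : cs.IsReflection t)
    (hred : cs.IsReduced ω) (h : ℓ (π ω * t) < ℓ (π ω)) :
    ∃ j < ω.length, π ω * t = π (ω.eraseIdx j) := by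
  have hmem := descent_mem_ris cs ht hred h
  obtain ⟨j, hj, hjt⟩ := List.mem_iff_getElem.mp hmem
  have hj' : j < ω.length := by simpa using hj
  refine ⟨j, hj', ?_⟩
  have := cs.wordProd_mul_getD_rightInvSeq ω j
  rwa [List.getD_eq_getElem _ 1 hj, hjt] at this

theorem descent_mem_lis {t : W} {ω : List B} (ht : cs.IsReflection t)
    (hred : cs.IsReduced ω) (h : ℓ (t * π ω) < ℓ (π ω)) : t ∈ lis ω := by
  set w := π ω with hwdef
  have ht' : cs.IsReflection (w⁻¹ * t * w) := by
    have := ht.conj w⁻¹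
    rwa [inv_inv] at this
  have hl : ℓ (w * (w⁻¹ * t * w)) < ℓ w := by
    have hx : w * (w⁻¹ * t * w) = t * w := by group
    rw [hx]; exact h
  have hmem := descent_mem_ris cs ht' hred hl
  rw [lis_eq_map_ris cs]
  obtain ⟨j, hj, hjt⟩ := List.mem_iff_getElem.mp hmem
  refine List.mem_map.mpr ⟨w⁻¹ * t * w, hmem, ?_⟩
  calc w * (w⁻¹ * t * w) * w⁻¹ = (w * w⁻¹) * t * (w * w⁻¹) := by group
  _ = t := by rw [mul_inv_cancel, mul_one, one_mul]

theorem strong_exchange_left {t : W} {ω : List B} (ht : cs.IsReflection t)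
    (hred : cs.IsReduced ω) (h : ℓ (t * π ω) < ℓ (π ω)) :
    ∃ j < ω.length, t * π ω = π (ω.eraseIdx j) := by
  have hmem := descent_mem_lis cs ht hred h
  obtain ⟨j, hj, hjt⟩ := List.mem_iff_getElem.mp hmem
  have hj' : j < ω.length := by simpa using hj
  refine ⟨j, hj', ?_⟩
  have := cs.getD_leftInvSeq_mul_wordProd ω j
  rwa [List.getD_eq_getElem _ 1 hj, hjt] at this

noncomputable def etaL (w t : W) : ZMod 2 := eta cs w (w⁻¹ * t * w)

theorem etaL_one_iff_descent {t w : W} (ht : cs.IsReflection t) :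
    etaL cs w t = 1 ↔ ℓ (t * w) < ℓ w := by
  have ht' : cs.IsReflection (w⁻¹ * t * w) := by
    have := ht.conj w⁻¹
    rwa [inv_inv] at this
  rw [etaL, eta_one_iff_descent cs ht']
  have hx : w * (w⁻¹ * t * w) = t * w := by group
  rw [hx]

theorem etaL_cocycle (a b t : W) :
    etaL cs (a * b) t = etaL cs a t + etaL cs b (a⁻¹ * t * a) := by
  rw [etaL, eta_cocycle cs a b ((a*b)⁻¹ * t * (a*b))]
  have h1 : b * ((a*b)⁻¹ * t * (a*b)) * b⁻¹ = a⁻¹ * t * a := by group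
  have h2 : (a*b)⁻¹ * t * (a*b) = b⁻¹ * ((a⁻¹ * t * a)) * b := by group
  rw [h1, h2]
  rw [add_comm]
  rfl

end Signrep

/-! ### deletion -/

theorem deletion {ω : List B} (h : ¬ cs.IsReduced ω) :
    ∃ ω' : List B, ω' <+ ω ∧ ω'.length + 2 = ω.length ∧ π ω' = π ω := by
  classical
  have hex : ∃ k, ¬ cs.IsReduced (ω.take (k+1)) := by
    refine ⟨ω.length - 1, ?_⟩
    have hne : ω ≠ [] := by
      rintro rfl
      exact h (by simp [CoxeterSystem.IsReduced])
    have hlen : 1 ≤ ω.length := by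
      cases ω with
      | nil => exact absurd rfl hne
      | cons a l => simp
    rwa [show ω.length - 1 + 1 = ω.length by omega, List.take_length]
  set k := Nat.find hex with hkdef
  have hk : ¬ cs.IsReduced (ω.take (k+1)) := Nat.find_spec hex
  have hklt : k < ω.length := by
    have h1 : k ≤ ω.length - 1 := Nat.find_min' hex (by
      have hne : ω ≠ [] := by
        rintro rfl
        exact h (by simp [CoxeterSystem.IsReduced])
      have hlen : 1 ≤ ω.length := by
        cases ω with
        | nil => exact absurd rfl hne
        | cons a l => simp
      rwa [show ω.length - 1 + 1 = ω.length by omega, List.take_length])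
    have hne : ω ≠ [] := by
      rintro rfl
      exact h (by simp [CoxeterSystem.IsReduced])
    have hlen : 1 ≤ ω.length := by
      cases ω with
      | nil => exact absurd rfl hne
      | cons a l => simp
    omega
  have hredk : cs.IsReduced (ω.take k) := by
    cases hkk : k with
    | zero => simp [CoxeterSystem.IsReduced]
    | succ j =>
        have h2 := Nat.find_min hex (show j < k by omega)
        exact not_not.mp h2
  have htk : ω.take (k+1) = ω.take k ++ [ω[k]] := by
    have := (List.take_concat_get hklt).symm
    rwa [List.concat_eq_append] at this
  have hlentk : (ω.take k).length = k := by
    rw [List.length_take]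
    omega
  have hlenred : ℓ (π (ω.take k)) = k := by
    rw [hredk]
    exact hlentk
  have hlt : ℓ (π (ω.take k) * s (ω[k])) < ℓ (π (ω.take k)) := by
    rcases cs.length_mul_simple (π (ω.take k)) (ω[k]) with hc | hc
    · exfalso
      apply hk
      show ℓ (π (ω.take (k+1))) = (ω.take (k+1)).length
      rw [htk, cs.wordProd_append, cs.wordProd_singleton, hc, hlenred]
      rw [List.length_append, hlentk]
      simp
    · omega
  obtain ⟨j, hj, hjer⟩ := strong_exchange_right cs (cs.isReflection_simple (ω[k])) hredk hlt
  rw [hlentk] at hj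
  refine ⟨(ω.take k).eraseIdx j ++ ω.drop (k+1), ?_, ?_, ?_⟩
  · have h1 : (ω.take k).eraseIdx j <+ ω.take k := List.eraseIdx_sublist _ j
    have h2 : ω.take k <+ ω.take (k+1) := by
      rw [htk]
      exact List.sublist_append_left _ _
    have h3 : (ω.take k).eraseIdx j ++ ω.drop (k+1) <+ ω.take (k+1) ++ ω.drop (k+1) :=
      List.Sublist.append (h1.trans h2) (List.Sublist.refl _)
    rwa [List.take_append_drop] at h3
  · rw [List.length_append, List.length_eraseIdx]
    rw [if_pos (by omega : j < (ω.take k).length), hlentk, List.length_drop]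
    omega
  · rw [cs.wordProd_append, ← hjer]
    calc π (ω.take k) * s (ω[k]) * π (ω.drop (k+1))
        = π (ω.take (k+1)) * π (ω.drop (k+1)) := by
          rw [htk, cs.wordProd_append, cs.wordProd_singleton]
    _ = π ω := by rw [← cs.wordProd_append, List.take_append_drop]

/-! ### parabolic subgroups -/

section Parabolic

variable {SI : Set W}

theorem exists_word_subset (hSI : SI ⊆ Set.range cs.simple) {w : W}
    (hw : w ∈ Subgroup.closure SI) :
    ∃ ω : List B, (∀ b ∈ ω, s b ∈ SI) ∧ π ω = w := by
  induction hw using Subgroup.closure_induction with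
  | mem x hx =>
      obtain ⟨b, hb⟩ := hSI hx
      exact ⟨[b], by simpa [hb], by simpa using hb⟩
  | one => exact ⟨[], by simp, by simp⟩
  | mul x y _ _ ihx ihy =>
      obtain ⟨ωx, hx1, hx2⟩ := ihx
      obtain ⟨ωy, hy1, hy2⟩ := ihy
      refine ⟨ωx ++ ωy, ?_, by rw [cs.wordProd_append, hx2, hy2]⟩
      intro b hb
      rcases List.mem_append.mp hb with h | h
      · exact hx1 b h
      · exact hy1 b h
  | inv x _ ihx =>
      obtain ⟨ωx, hx1, hx2⟩ := ihx
      refine ⟨ωx.reverse, ?_, by rw [cs.wordProd_reverse, hx2]⟩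
      intro b hb
      exact hx1 b (List.mem_reverse.mp hb)

theorem exists_reduced_word_subset (hSI : SI ⊆ Set.range cs.simple) {w : W}
    (hw : w ∈ Subgroup.closure SI) :
    ∃ ω : List B, cs.IsReduced ω ∧ (∀ b ∈ ω, s b ∈ SI) ∧ π ω = w := by
  obtain ⟨ω, hmem, hπ⟩ := exists_word_subset cs hSI hw
  clear hw
  suffices h : ∀ n (ω : List B), ω.length ≤ n → (∀ b ∈ ω, s b ∈ SI) →
      ∃ ω', cs.IsReduced ω' ∧ (∀ b ∈ ω', s b ∈ SI) ∧ π ω' = π ω by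
    obtain ⟨ω', h1, h2, h3⟩ := h ω.length ω le_rfl hmem
    exact ⟨ω', h1, h2, by rw [h3, hπ]⟩
  intro n
  induction n with
  | zero =>
      intro ω hl hmem
      have hnil : ω = [] := List.length_eq_zero_iff.mp (by omega)
      subst hnil
      exact ⟨[], by simp [CoxeterSystem.IsReduced], by simp, rfl⟩
  | succ n ih =>
      intro ω hl hmem
      by_cases hred : cs.IsReduced ω
      · exact ⟨ω, hred, hmem, rfl⟩
      · obtain ⟨ω', hsub, hlen, hπ'⟩ := deletion cs hred
        obtain ⟨ω'', h1, h2, h3⟩ := ih ω' (by omega) (fun b hb => hmem b (hsub.mem hb))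
        exact ⟨ω'', h1, h2, by rw [h3, hπ']⟩

theorem left_descent_parab (hSI : SI ⊆ Set.range cs.simple) {w : W}
    (hw : w ∈ Subgroup.closure SI) (hne : w ≠ 1) :
    ∃ t ∈ SI, ℓ (t * w) < ℓ w := by
  obtain ⟨ω, hred, hmem, hπ⟩ := exists_reduced_word_subset cs hSI hw
  cases ω with
  | nil => exact absurd (by rw [← hπ]; simp) hne
  | cons b ω' =>
      refine ⟨s b, hmem b (by simp), ?_⟩
      have h1 : s b * w = π ω' := by
        rw [← hπ, cs.wordProd_cons, cs.simple_mul_simple_cancel_left]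
      rw [h1, ← hπ, hred]
      calc ℓ (π ω') ≤ ω'.length := cs.length_wordProd_le ω'
      _ < (b :: ω').length := by simp

theorem right_descent_parab (hSI : SI ⊆ Set.range cs.simple) {w : W}
    (hw : w ∈ Subgroup.closure SI) (hne : w ≠ 1) :
    ∃ t ∈ SI, ℓ (w * t) < ℓ w := by
  obtain ⟨t, htSI, hlt⟩ := left_descent_parab cs hSI (inv_mem hw) (by simpa using hne)
  obtain ⟨b, hb⟩ := hSI htSI
  refine ⟨t, htSI, ?_⟩
  have hti : t⁻¹ = t := by rw [← hb, cs.inv_simple]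
  calc ℓ (w * t) = ℓ ((w * t)⁻¹) := (cs.length_inv _).symm
  _ = ℓ (t * w⁻¹) := by rw [mul_inv_rev, hti]
  _ < ℓ w⁻¹ := hlt
  _ = ℓ w := cs.length_inv w

theorem lis_subset_closure {ω : List B} (hmem : ∀ b ∈ ω, s b ∈ SI) :
    ∀ t ∈ lis ω, t ∈ Subgroup.closure SI := by
  induction ω with
  | nil => simp [leftInvSeq]
  | cons b ω ih =>
      intro t ht
      rcases List.mem_cons.mp ht with h | h
      · rw [h]
        exact Subgroup.subset_closure (hmem b (by simp))
      · obtain ⟨x, hx, hxt⟩ := List.mem_map.mp h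
        have hxcl : x ∈ Subgroup.closure SI := ih (fun c hc => hmem c (by simp [hc])) x hx
        have hb : s b ∈ Subgroup.closure SI := Subgroup.subset_closure (hmem b (by simp))
        rw [← hxt]
        simpa using mul_mem (mul_mem hb hxcl) (inv_mem hb)

theorem refl_descent_mem_closure (hSI : SI ⊆ Set.range cs.simple) {x t : W}
    (hx : x ∈ Subgroup.closure SI) (ht : cs.IsReflection t) (hlt : ℓ (t * x) < ℓ x) :
    t ∈ Subgroup.closure SI := by
  obtain ⟨ξ, hred, hmem, hπ⟩ := exists_reduced_word_subset cs hSI hx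
  subst hπ
  exact lis_subset_closure cs hmem t (descent_mem_lis cs ht hred hlt)

theorem coset_min_additive (hSI : SI ⊆ Set.range cs.simple) {b : W}
    (hmin : ∀ c ∈ Subgroup.closure SI, ℓ b ≤ ℓ (c * b)) :
    ∀ c ∈ Subgroup.closure SI, ℓ (c * b) = ℓ c + ℓ b := by
  suffices h : ∀ n, ∀ c ∈ Subgroup.closure SI, ℓ c ≤ n → ℓ (c * b) = ℓ c + ℓ b by
    intro c hc
    exact h (ℓ c) c hc le_rfl
  intro n
  induction n with
  | zero =>
      intro c hc hl
      have h1 : c = 1 := cs.length_eq_zero_iff.mp (by omega)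
      subst h1
      simp
  | succ n ih =>
      intro c hc hl
      by_cases hone : c = 1
      · subst hone; simp
      obtain ⟨t, htSI, hdesc⟩ := left_descent_parab cs hSI hc hone
      obtain ⟨b₀, hb₀⟩ := hSI htSI
      set c' := t * c with hc'def
      have hc'eq : ℓ (t * c) = ℓ c' := rfl
      have hcc' : c = t * c' := by
        rw [hc'def, ← mul_assoc, ← hb₀, cs.simple_mul_simple_self, one_mul]
      have hc'mem : c' ∈ Subgroup.closure SI :=
        mul_mem (Subgroup.subset_closure htSI) hc
      have hlc' : ℓ c' + 1 = ℓ c := by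
        rcases cs.length_simple_mul c b₀ with hcase | hcase
        · exfalso
          rw [hb₀, hc'eq] at hcase
          omega
        · rw [hb₀, hc'eq] at hcase
          exact hcase
      have ihc' : ℓ (c' * b) = ℓ c' + ℓ b := ih c' hc'mem (by omega)
      -- show t is not a left descent of c' * b
      have hkey : ℓ (t * (c' * b)) = ℓ (c' * b) + 1 := by
        rcases cs.length_simple_mul (c' * b) b₀ with hcase | hcase
        · rw [hb₀] at hcase; exact hcase
        · exfalso
          rw [hb₀] at hcase
          -- t is a left inversion of c' * b; use strong exchange
          obtain ⟨γ, hγred, hγmem, hγπ⟩ := exists_reduced_word_subset cs hSI hc'mem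
          obtain ⟨β, hβred, hβπ⟩ := cs.exists_reduced_word' b
          have hπcb : π (γ ++ β) = c' * b := by rw [cs.wordProd_append, hγπ, ← hβπ]
          have hγlen : ℓ c' = γ.length := by rw [← hγπ]; exact hγred
          have hβlen : ℓ b = β.length := by rw [hβπ]; exact hβred
          have hredcb : cs.IsReduced (γ ++ β) := by
            show ℓ (π (γ ++ β)) = (γ ++ β).length
            rw [hπcb, ihc', List.length_append]
            omega
          have hlt : ℓ (t * π (γ ++ β)) < ℓ (π (γ ++ β)) := by
            rw [hπcb]
            omega
          obtain ⟨j, hj, hjer⟩ := strong_exchange_left cs (by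
            rw [← hb₀]; exact cs.isReflection_simple b₀) hredcb hlt
          rw [hπcb] at hjer
          rcases Nat.lt_or_ge j γ.length with hjγ | hjγ
          · rw [List.eraseIdx_append_of_lt_length hjγ, cs.wordProd_append, ← hβπ] at hjer
            have hcancel : t * c' = π (γ.eraseIdx j) := by
              have h3 : t * (c' * b) = (t * c') * b := by group
              rw [h3] at hjer
              exact mul_right_cancel hjer
            have h4 : ℓ (t * c') ≤ (γ.eraseIdx j).length := by
              rw [hcancel]; exact cs.length_wordProd_le _
            rw [List.length_eraseIdx, if_pos hjγ] at h4
            rw [← hcc'] at h4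
            omega
          · rw [List.eraseIdx_append_of_length_le hjγ, cs.wordProd_append, hγπ] at hjer
            have hcancel : (c'⁻¹ * t * c') * b = π (β.eraseIdx (j - γ.length)) := by
              calc (c'⁻¹ * t * c') * b = c'⁻¹ * (t * (c' * b)) := by group
              _ = c'⁻¹ * (c' * π (β.eraseIdx (j - γ.length))) := by rw [hjer]
              _ = π (β.eraseIdx (j - γ.length)) := by group
            have hmem2 : c'⁻¹ * t * c' ∈ Subgroup.closure SI :=
              mul_mem (mul_mem (inv_mem hc'mem) (Subgroup.subset_closure htSI)) hc'mem
            have h4 : ℓ ((c'⁻¹ * t * c') * b) ≤ (β.eraseIdx (j - γ.length)).length := by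
              rw [hcancel]; exact cs.length_wordProd_le _
            have hjlt : j - γ.length < β.length := by
              rw [List.length_append] at hj
              omega
            have h5 : (β.eraseIdx (j - γ.length)).length = β.length - 1 := by
              rw [List.length_eraseIdx, if_pos hjlt]
            have h7 := hmin _ hmem2
            omega
      calc ℓ (c * b) = ℓ (t * (c' * b)) := by rw [hcc', mul_assoc]
      _ = ℓ c' + ℓ b + 1 := by rw [hkey, ihc']
      _ = ℓ c + ℓ b := by omega

theorem exists_min_decomp (hSI : SI ⊆ Set.range cs.simple) (w : W) :
    ∃ a b : W, a ∈ Subgroup.closure SI ∧ w = a * b ∧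
      (∀ c ∈ Subgroup.closure SI, ℓ (c * b) = ℓ c + ℓ b) := by
  classical
  have hex : ∃ n, ∃ c ∈ Subgroup.closure SI, ℓ (c * w) = n := ⟨ℓ w, 1, one_mem _, by simp⟩
  obtain ⟨c₀, hc₀, hlc₀⟩ := Nat.find_spec hex
  set b := c₀ * w with hbdef
  have hmin : ∀ c ∈ Subgroup.closure SI, ℓ b ≤ ℓ (c * b) := by
    intro c hc
    have h1 : c * b = (c * c₀) * w := by rw [hbdef]; group
    have h2 : ∃ n, (∃ c' ∈ Subgroup.closure SI, ℓ (c' * w) = n) ∧ n = ℓ (c * b) :=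
      ⟨ℓ (c * b), ⟨c * c₀, mul_mem hc hc₀, h1.symm ▸ rfl⟩, rfl⟩
    obtain ⟨n, hn1, hn2⟩ := h2
    have := Nat.find_min' hex hn1
    omega
  refine ⟨c₀⁻¹, b, inv_mem hc₀, ?_, coset_min_additive cs hSI hmin⟩
  rw [hbdef]
  group

/-! ### longest elements of finite parabolic subgroups -/

theorem longest_refl_descent {u : W} (hu : IsLongestIn cs SI u) {t : W}
    (ht : cs.IsReflection t) (htm : t ∈ Subgroup.closure SI) : ℓ (t * u) < ℓ u :=
  lt_of_le_of_ne (hu.2 _ (mul_mem htm hu.1)) (ht.length_mul_right_ne u)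

theorem invSet_eq_lis (hSI : SI ⊆ Set.range cs.simple) {x : W}
    (hx : x ∈ Subgroup.closure SI) :
    ∃ ξ : List B, cs.IsReduced ξ ∧ (∀ b ∈ ξ, s b ∈ SI) ∧ π ξ = x ∧
      {t | cs.IsReflection t ∧ ℓ (t * x) < ℓ x} = {t | t ∈ lis ξ} := by
  obtain ⟨ξ, hred, hmem, hπ⟩ := exists_reduced_word_subset cs hSI hx
  refine ⟨ξ, hred, hmem, hπ, ?_⟩
  subst hπ
  ext t
  constructor
  · rintro ⟨h1, h2⟩
    exact descent_mem_lis cs h1 hred h2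
  · intro h
    exact ⟨cs.isReflection_of_mem_leftInvSeq ξ h,
      (cs.isLeftInversion_of_mem_leftInvSeq hred h).2⟩

theorem length_eq_ncard_invSet (hSI : SI ⊆ Set.range cs.simple) {x : W}
    (hx : x ∈ Subgroup.closure SI) :
    {t | cs.IsReflection t ∧ ℓ (t * x) < ℓ x}.ncard = ℓ x := by
  classical
  obtain ⟨ξ, hred, hmem, hπ, hset⟩ := invSet_eq_lis cs hSI hx
  rw [hset]
  have h1 : {t | t ∈ lis ξ} = ↑(lis ξ).toFinset := by
    ext t; simp
  rw [h1, Set.ncard_coe_finset, List.toFinset_card_of_nodup hred.nodup_leftInvSeq,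
    cs.length_leftInvSeq, ← hπ, hred]

theorem longest_mul_left_add (hSI : SI ⊆ Set.range cs.simple)
    (hfin : Finite (Subgroup.closure SI)) {u : W} (hu : IsLongestIn cs SI u) {v : W}
    (hv : v ∈ Subgroup.closure SI) : ℓ (v⁻¹ * u) + ℓ v = ℓ u := by
  classical
  set x := v⁻¹ * u with hxdef
  have hx : x ∈ Subgroup.closure SI := mul_mem (inv_mem hv) hu.1
  have huvx : u = v * x := by rw [hxdef]; group
  set T := {t : W | cs.IsReflection t ∧ t ∈ Subgroup.closure SI} with hTdef
  have hTfin : T.Finite := by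
    apply Set.Finite.subset (Set.toFinite ((Subgroup.closure SI : Subgroup W) : Set W))
    intro t ht
    exact ht.2
  set Dv := {t : W | cs.IsReflection t ∧ ℓ (t * v) < ℓ v} with hDvdef
  set Dx := {t : W | cs.IsReflection t ∧ ℓ (t * x) < ℓ x} with hDxdef
  have hDvT : Dv ⊆ T := fun t ht => ⟨ht.1, refl_descent_mem_closure cs hSI hv ht.1 ht.2⟩
  have hDxT : Dx ⊆ T := fun t ht => ⟨ht.1, refl_descent_mem_closure cs hSI hx ht.1 ht.2⟩
  -- etaL bookkeeping
  have hcoc : ∀ t : W, etaL cs u t = etaL cs v t + etaL cs x (v⁻¹ * t * v) := by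
    intro t
    rw [huvx]
    exact etaL_cocycle cs v x t
  have hTeta : ∀ t ∈ T, etaL cs u t = 1 := fun t ht =>
    (etaL_one_iff_descent cs ht.1).mpr (longest_refl_descent cs hu ht.1 ht.2)
  have key : Dx = (fun t => v⁻¹ * t * v) '' (T \ Dv) := by
    ext t'
    constructor
    · rintro ⟨ht'refl, ht'desc⟩
      have ht'cl : t' ∈ Subgroup.closure SI := refl_descent_mem_closure cs hSI hx ht'refl ht'desc
      refine ⟨v * t' * v⁻¹, ⟨⟨?_, ?_⟩, ?_⟩, by group⟩
      · have := ht'refl.conj v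
        exact this
      · exact mul_mem (mul_mem hv ht'cl) (inv_mem hv)
      · -- v * t' * v⁻¹ ∉ Dv
        intro hDv
        have h1 := hcoc (v * t' * v⁻¹)
        have h2 : v⁻¹ * (v * t' * v⁻¹) * v = t' := by group
        rw [h2] at h1
        have h3 : etaL cs u (v * t' * v⁻¹) = 1 := hTeta _ ⟨hDv.1,
          refl_descent_mem_closure cs hSI hv hDv.1 hDv.2⟩
        have h4 : etaL cs v (v * t' * v⁻¹) = 1 := (etaL_one_iff_descent cs hDv.1).mpr hDv.2
        have h5 : etaL cs x t' = 1 := (etaL_one_iff_descent cs ht'refl).mpr ht'desc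
        rw [h3, h4, h5] at h1
        exact absurd h1 (by decide)
    · rintro ⟨t, ⟨htT, htnDv⟩, rfl⟩
      have htrefl : cs.IsReflection (v⁻¹ * t * v) := by
        have := htT.1.conj v⁻¹
        rwa [inv_inv] at this
      refine ⟨htrefl, ?_⟩
      have h1 := hcoc t
      have h3 : etaL cs u t = 1 := hTeta _ htT
      have h4 : etaL cs v t = 0 := by
        rcases (by decide : ∀ z : ZMod 2, z = 0 ∨ z = 1) (etaL cs v t) with h | h
        · exact h
        · exact absurd ((etaL_one_iff_descent cs htT.1).mp h) (fun hh => htnDv ⟨htT.1, hh⟩)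
      rw [h3, h4, zero_add] at h1
      exact (etaL_one_iff_descent cs htrefl).mp h1.symm
  -- cardinalities
  have hinj : Function.Injective (fun t : W => v⁻¹ * t * v) := by
    intro a b h
    simp only at h
    calc a = v * (v⁻¹ * a * v) * v⁻¹ := by group
    _ = v * (v⁻¹ * b * v) * v⁻¹ := by rw [h]
    _ = b := by group
  have hcards : Dx.ncard = (T \ Dv).ncard := by
    rw [key, Set.ncard_image_of_injective _ hinj]
  have hdiff : (T \ Dv).ncard + Dv.ncard = T.ncard :=
    Set.ncard_diff_add_ncard_of_subset hDvT hTfin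
  have hlu : T.ncard = ℓ u := by
    have hset : {t | cs.IsReflection t ∧ ℓ (t * u) < ℓ u} = T := by
      ext t
      exact ⟨fun ht => ⟨ht.1, refl_descent_mem_closure cs hSI hu.1 ht.1 ht.2⟩,
        fun ht => ⟨ht.1, longest_refl_descent cs hu ht.1 ht.2⟩⟩
    rw [← hset, length_eq_ncard_invSet cs hSI hu.1]
  have hlv : Dv.ncard = ℓ v := length_eq_ncard_invSet cs hSI hv
  have hlx : Dx.ncard = ℓ x := length_eq_ncard_invSet cs hSI hx
  omega

theorem longest_unique (hSI : SI ⊆ Set.range cs.simple)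
    (hfin : Finite (Subgroup.closure SI)) {u u' : W} (hu : IsLongestIn cs SI u)
    (hu' : IsLongestIn cs SI u') : u = u' := by
  have h1 := longest_mul_left_add cs hSI hfin hu hu'.1
  have h2 : ℓ u = ℓ u' := le_antisymm (hu'.2 _ hu.1) (hu.2 _ hu'.1)
  have h3 : ℓ (u'⁻¹ * u) = 0 := by omega
  have h4 : u'⁻¹ * u = 1 := cs.length_eq_zero_iff.mp h3
  calc u = u' * (u'⁻¹ * u) := by group
  _ = u' := by rw [h4, mul_one]

theorem longest_inv (hSI : SI ⊆ Set.range cs.simple)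
    (hfin : Finite (Subgroup.closure SI)) {u : W} (hu : IsLongestIn cs SI u) : u⁻¹ = u := by
  have hu' : IsLongestIn cs SI u⁻¹ := by
    refine ⟨inv_mem hu.1, fun w hw => ?_⟩
    rw [cs.length_inv]
    exact hu.2 w hw
  exact longest_unique cs hSI hfin hu' hu

theorem longest_sq (hSI : SI ⊆ Set.range cs.simple)
    (hfin : Finite (Subgroup.closure SI)) {u : W} (hu : IsLongestIn cs SI u) : u * u = 1 := by
  nth_rw 1 [← longest_inv cs hSI hfin hu]
  group

theorem longest_mul_right_add (hSI : SI ⊆ Set.range cs.simple)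
    (hfin : Finite (Subgroup.closure SI)) {u : W} (hu : IsLongestIn cs SI u) {v : W}
    (hv : v ∈ Subgroup.closure SI) : ℓ (u * v) + ℓ v = ℓ u := by
  have h1 := longest_mul_left_add cs hSI hfin hu hv
  have h2 : ℓ (u * v) = ℓ (v⁻¹ * u) := by
    calc ℓ (u * v) = ℓ ((u * v)⁻¹) := (cs.length_inv _).symm
    _ = ℓ (v⁻¹ * u⁻¹) := by rw [mul_inv_rev]
    _ = ℓ (v⁻¹ * u) := by rw [longest_inv cs hSI hfin hu]
  omega

theorem all_descents_eq_longest (hSI : SI ⊆ Set.range cs.simple)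
    (hfin : Finite (Subgroup.closure SI)) {u : W} (hu : IsLongestIn cs SI u) {a : W}
    (ha : a ∈ Subgroup.closure SI) (hd : ∀ t ∈ SI, ℓ (t * a) < ℓ a) : a = u := by
  set x := u * a⁻¹ with hxdef
  have hxmem : x ∈ Subgroup.closure SI := mul_mem hu.1 (inv_mem ha)
  have hadd : ℓ x + ℓ a = ℓ u := by
    have := longest_mul_right_add cs hSI hfin hu (inv_mem ha)
    rwa [cs.length_inv] at this
  by_contra hne
  have hxne : x ≠ 1 := by
    intro hx1
    apply hne
    have : u * a⁻¹ = 1 := hx1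
    calc a = (u * a⁻¹)⁻¹ * u * a⁻¹ * a := by group
    _ = 1⁻¹ * u * a⁻¹ * a := by rw [this]
    _ = u := by group
  obtain ⟨t, htSI, hlt⟩ := right_descent_parab cs hSI hxmem hxne
  obtain ⟨b₀, hb₀⟩ := hSI htSI
  have htt : t * t = 1 := by rw [← hb₀]; exact cs.simple_mul_simple_self b₀
  have hu_eq : u = (x * t) * (t * a) := by
    calc u = x * a := by rw [hxdef]; group
    _ = x * (t * t) * a := by rw [htt, mul_one]
    _ = (x * t) * (t * a) := by group
  have h1 : ℓ u ≤ ℓ (x * t) + ℓ (t * a) := by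
    rw [hu_eq]
    exact cs.length_mul_le _ _
  have h2 := hd t htSI
  omega

theorem descents_additive (hSI : SI ⊆ Set.range cs.simple)
    (hfin : Finite (Subgroup.closure SI)) {u : W} (hu : IsLongestIn cs SI u) {w : W}
    (hd : ∀ t ∈ SI, ℓ (t * w) < ℓ w) :
    ℓ w = ℓ u + ℓ (u * w) := by
  obtain ⟨a, b, hamem, hab, hCL⟩ := exists_min_decomp cs hSI w
  have hbw : ∀ t ∈ SI, ℓ (t * a) < ℓ a := by
    intro t ht
    have htmem : t ∈ Subgroup.closure SI := Subgroup.subset_closure ht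
    have h1 : ℓ (t * w) = ℓ (t * a) + ℓ b := by
      rw [hab, ← mul_assoc]
      exact hCL _ (mul_mem htmem hamem)
    have h2 : ℓ w = ℓ a + ℓ b := by
      rw [hab]
      exact hCL _ hamem
    have := hd t ht
    omega
  have hau : a = u := all_descents_eq_longest cs hSI hfin hu hamem hbw
  have huw : u * w = b := by
    rw [hab, hau, ← mul_assoc, longest_sq cs hSI hfin hu, one_mul]
  rw [huw, hab, hau, hCL _ hu.1]

theorem no_descent_additive (hSI : SI ⊆ Set.range cs.simple) {w : W}
    (hnd : ∀ t ∈ SI, ¬ ℓ (t * w) < ℓ w) :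
    ∀ c ∈ Subgroup.closure SI, ℓ (c * w) = ℓ c + ℓ w := by
  obtain ⟨a, b, hamem, hab, hCL⟩ := exists_min_decomp cs hSI w
  have ha1 : a = 1 := by
    by_contra hane
    obtain ⟨t, htSI, hlt⟩ := left_descent_parab cs hSI hamem hane
    apply hnd t htSI
    have h1 : ℓ (t * w) = ℓ (t * a) + ℓ b := by
      rw [hab, ← mul_assoc]
      exact hCL _ (mul_mem (Subgroup.subset_closure htSI) hamem)
    have h2 : ℓ w = ℓ a + ℓ b := by
      rw [hab]
      exact hCL _ hamem
    omega
  rw [ha1, one_mul] at hab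
  subst hab
  exact hCL

end Parabolic

/-! ### the group of diagram automorphisms -/

section Gamma

variable {Γ : Subgroup (MulAut W)}

theorem exists_word_image (hΓ : ∀ γ ∈ Γ, ⇑γ '' Set.range cs.simple = Set.range cs.simple)
    {γ : MulAut W} (hγ : γ ∈ Γ) (ω : List B) :
    ∃ ω' : List B, ω'.length = ω.length ∧ π ω' = γ (π ω) := by
  induction ω with
  | nil => exact ⟨[], rfl, by simp⟩
  | cons i ω ih =>
      obtain ⟨ω', hlen, hπ⟩ := ih
      have h1 : γ (s i) ∈ Set.range cs.simple := by
        rw [← hΓ γ hγ]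
        exact ⟨s i, ⟨i, rfl⟩, rfl⟩
      obtain ⟨i', hi'⟩ := h1
      refine ⟨i' :: ω', by simp [hlen], ?_⟩
      rw [cs.wordProd_cons, cs.wordProd_cons, map_mul, hi', hπ]

theorem length_mulaut (hΓ : ∀ γ ∈ Γ, ⇑γ '' Set.range cs.simple = Set.range cs.simple)
    {γ : MulAut W} (hγ : γ ∈ Γ) (w : W) : ℓ (γ w) = ℓ w := by
  have hle : ∀ γ' ∈ Γ, ∀ v : W, ℓ (γ' v) ≤ ℓ v := by
    intro γ' hγ' v
    obtain ⟨ω, hlen, hπ⟩ := cs.exists_reduced_word v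
    obtain ⟨ω', hlen', hπ'⟩ := exists_word_image cs hΓ hγ' ω
    calc ℓ (γ' v) = ℓ (π ω') := by rw [hπ', ← hπ]
    _ ≤ ω'.length := cs.length_wordProd_le ω'
    _ = ℓ v := by rw [hlen', hπ]; exact hlen.symm
  refine le_antisymm (hle γ hγ w) ?_
  have h2 := hle γ⁻¹ (inv_mem hγ) (γ w)
  have h3 : γ⁻¹ (γ w) = w := by
    show (γ⁻¹ * γ) w = w
    rw [inv_mul_cancel]
    rfl
  rwa [h3] at h2

/-- Facts about a `Γ`-orbit of simple reflections. -/
theorem orbit_subset_simple (hΓ : ∀ γ ∈ Γ, ⇑γ '' Set.range cs.simple = Set.range cs.simple)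
    {I : Set W} (hI : IsFinParabolicOrbit cs Γ I) : I ⊆ Set.range cs.simple := by
  obtain ⟨⟨s₀, hs₀, hIeq⟩, _⟩ := hI
  intro t ht
  rw [hIeq] at ht
  obtain ⟨γ, hγ, rfl⟩ := ht
  rw [← hΓ γ hγ]
  exact ⟨s₀, hs₀, rfl⟩

theorem orbit_gamma_mem {I : Set W} (hI : IsFinParabolicOrbit cs Γ I)
    {γ : MulAut W} (hγ : γ ∈ Γ) {t : W} (ht : t ∈ I) : γ t ∈ I := by
  obtain ⟨⟨s₀, hs₀, hIeq⟩, _⟩ := hI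
  rw [hIeq] at ht ⊢
  obtain ⟨γ', hγ', rfl⟩ := ht
  exact ⟨γ * γ', mul_mem hγ hγ', rfl⟩

theorem orbit_gamma_closure {I : Set W} (hI : IsFinParabolicOrbit cs Γ I)
    {γ : MulAut W} (hγ : γ ∈ Γ) {x : W} (hx : x ∈ Subgroup.closure I) :
    γ x ∈ Subgroup.closure I := by
  induction hx using Subgroup.closure_induction with
  | mem y hy => exact Subgroup.subset_closure (orbit_gamma_mem cs hI hγ hy)
  | one => rw [map_one]; exact one_mem _
  | mul a b _ _ iha ihb => rw [map_mul]; exact mul_mem iha ihb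
  | inv a _ iha => rw [map_inv]; exact inv_mem iha

theorem orbit_longest_fixed (hΓ : ∀ γ ∈ Γ, ⇑γ '' Set.range cs.simple = Set.range cs.simple)
    {I : Set W} (hI : IsFinParabolicOrbit cs Γ I) {u : W} (hu : IsLongestIn cs I u) :
    u ∈ fixedSubgroup Γ := by
  intro γ hγ
  have hu' : IsLongestIn cs I (γ u) := by
    refine ⟨orbit_gamma_closure cs hI hγ hu.1, fun z hz => ?_⟩
    have h1 : γ⁻¹ z ∈ Subgroup.closure I := orbit_gamma_closure cs hI (inv_mem hγ) hz
    have h2 := hu.2 _ h1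
    have h3 : ℓ (γ⁻¹ z) = ℓ z := length_mulaut cs hΓ (inv_mem hγ) z
    have h4 : ℓ (γ u) = ℓ u := length_mulaut cs hΓ hγ u
    omega
  exact longest_unique cs (orbit_subset_simple cs hΓ hI) hI.2 hu' hu

theorem orbit_nonempty {I : Set W} (hI : IsFinParabolicOrbit cs Γ I) :
    ∃ s₀ ∈ I, s₀ ∈ Set.range cs.simple := by
  obtain ⟨⟨s₀, hs₀, hIeq⟩, _⟩ := hI
  refine ⟨s₀, ?_, hs₀⟩
  rw [hIeq]
  exact ⟨1, one_mem _, rfl⟩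

theorem orbit_longest_ne_one {I : Set W} (hI : IsFinParabolicOrbit cs Γ I) {u : W}
    (hu : IsLongestIn cs I u) : u ≠ 1 := by
  obtain ⟨s₀, hs₀I, b, hb⟩ := orbit_nonempty cs hI
  intro h1
  have h2 := hu.2 s₀ (Subgroup.subset_closure hs₀I)
  rw [h1, ← hb] at h2
  rw [cs.length_simple, cs.length_one] at h2
  omega

/-- If one element of the orbit is a left descent of a `Γ`-fixed element, so are all others. -/
theorem orbit_descent_all (hΓ : ∀ γ ∈ Γ, ⇑γ '' Set.range cs.simple = Set.range cs.simple)
    {I : Set W} (hI : IsFinParabolicOrbit cs Γ I) {w : W} (hw : w ∈ fixedSubgroup Γ)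
    {t t' : W} (ht : t ∈ I) (ht' : t' ∈ I) (hlt : ℓ (t * w) < ℓ w) : ℓ (t' * w) < ℓ w := by
  obtain ⟨⟨s₀, hs₀, hIeq⟩, _⟩ := hI
  have h1 : ∀ x ∈ I, ∀ y ∈ I, ∃ γ ∈ Γ, γ x = y := by
    intro x hx y hy
    rw [hIeq] at hx hy
    obtain ⟨γ₁, hγ₁, rfl⟩ := hx
    obtain ⟨γ₂, hγ₂, rfl⟩ := hy
    refine ⟨γ₂ * γ₁⁻¹, mul_mem hγ₂ (inv_mem hγ₁), ?_⟩
    show γ₂ (γ₁⁻¹ (γ₁ s₀)) = γ₂ s₀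
    congr 1
    show (γ₁⁻¹ * γ₁) s₀ = s₀
    rw [inv_mul_cancel]
    rfl
  obtain ⟨γ, hγ, hγt⟩ := h1 t ht t' ht'
  have h2 : γ (t * w) = t' * w := by
    rw [map_mul, hγt, hw γ hγ]
  calc ℓ (t' * w) = ℓ (γ (t * w)) := by rw [h2]
  _ = ℓ (t * w) := length_mulaut cs hΓ hγ _
  _ < ℓ w := hlt

/-- The only nontrivial `Γ`-fixed element of the parabolic subgroup of a single finite orbit
is its longest element. -/
theorem fixed_in_orbit_parabolic (hΓ : ∀ γ ∈ Γ, ⇑γ '' Set.range cs.simple = Set.range cs.simple)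
    {I : Set W} (hI : IsFinParabolicOrbit cs Γ I) {u : W} (hu : IsLongestIn cs I u)
    {v : W} (hv : v ∈ Subgroup.closure I) (hvf : v ∈ fixedSubgroup Γ) (hvne : v ≠ 1) :
    v = u := by
  have hIsub := orbit_subset_simple cs hΓ hI
  have hfin := hI.2
  have hall : ∀ z : W, z ∈ Subgroup.closure I → z ∈ fixedSubgroup Γ → z ≠ 1 →
      ∀ t ∈ I, ℓ (t * z) < ℓ z := by
    intro z hz hzf hzne t ht
    obtain ⟨t₀, ht₀I, hlt₀⟩ := left_descent_parab cs hIsub hz hzne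
    exact orbit_descent_all cs hΓ hI hzf ht₀I ht hlt₀
  have h1 : ℓ v = ℓ u + ℓ (u * v) :=
    descents_additive cs hIsub hfin hu (hall v hv hvf hvne)
  have hune : u ≠ 1 := orbit_longest_ne_one cs hI hu
  have hlu : 1 ≤ ℓ u := by
    by_contra hh
    exact hune (cs.length_eq_zero_iff.mp (by omega))
  by_cases hv1 : u * v = 1
  · have : v = u⁻¹ := by
      calc v = u⁻¹ * (u * v) := by group
      _ = u⁻¹ := by rw [hv1, mul_one]
    rw [this, longest_inv cs hIsub hfin hu]
  · have hv1mem : u * v ∈ Subgroup.closure I := mul_mem hu.1 hv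
    have hv1f : u * v ∈ fixedSubgroup Γ :=
      mul_mem (orbit_longest_fixed cs hΓ hI hu) hvf
    have h2 : ℓ (u * v) = ℓ u + ℓ (u * (u * v)) :=
      descents_additive cs hIsub hfin hu (hall (u * v) hv1mem hv1f hv1)
    have h3 : u * (u * v) = v := by
      rw [← mul_assoc, longest_sq cs hIsub hfin hu, one_mul]
    rw [h3] at h2
    omega

/-- The core exchange property: if left multiplication by `wI I` decreases Coxeter length,
then it removes one factor from any product expression. -/
theorem exchange_core (hΓ : ∀ γ ∈ Γ, ⇑γ '' Set.range cs.simple = Set.range cs.simple)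
    (wI : Set W → W)
    (hwI : ∀ I : Set W, IsFinParabolicOrbit cs Γ I → IsLongestIn cs I (wI I))
    {w : W} (hw : w ∈ fixedSubgroup Γ) {Js : List (Set W)}
    (hJs : ∀ J ∈ Js, IsFinParabolicOrbit cs Γ J)
    (hprod : w = (Js.map wI).prod) {I : Set W} (hI : IsFinParabolicOrbit cs Γ I)
    (hlt : ℓ (wI I * w) < ℓ w) :
    ∃ i < Js.length, wI I * w = ((Js.eraseIdx i).map wI).prod := by
  classical
  set u := wI I with hudef
  have hu : IsLongestIn cs I u := hwI I hI
  have hIsub := orbit_subset_simple cs hΓ hI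
  have hufix := orbit_longest_fixed cs hΓ hI hu
  have hfixJ : ∀ J ∈ Js, wI J ∈ fixedSubgroup Γ := fun J hJ =>
    orbit_longest_fixed cs hΓ (hJs J hJ) (hwI J (hJs J hJ))
  set A : ℕ → W := fun k => ((Js.take k).map wI).prod with hAdef
  have hA0 : A 0 = 1 := by simp [hAdef]
  have hAp : A Js.length = w := by
    rw [hAdef]
    simp only [List.take_length]
    exact hprod.symm
  have hAfix : ∀ k, A k ∈ fixedSubgroup Γ := by
    intro k
    apply list_prod_mem
    intro x hx
    obtain ⟨J, hJ, rfl⟩ := List.mem_map.mp hx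
    exact hfixJ J ((List.take_sublist k Js).mem hJ)
  have hAsucc : ∀ (k : ℕ) (hk : k < Js.length), A (k+1) = A k * wI (Js[k]'hk) := by
    intro k hk
    have htk : Js.take (k+1) = Js.take k ++ [Js[k]] := by
      have := (List.take_concat_get hk).symm
      rwa [List.concat_eq_append] at this
    rw [hAdef]
    simp only
    rw [htk, List.map_append, List.prod_append, List.map_singleton, List.prod_singleton]
  obtain ⟨s₀, hs₀I, hs₀r⟩ := orbit_nonempty cs hI
  have hdesc : ∀ t ∈ I, ℓ (t * w) < ℓ w := by
    have hsome : ∃ t ∈ I, ℓ (t * w) < ℓ w := by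
      by_contra hno
      push_neg at hno
      have hnd : ∀ t ∈ I, ¬ ℓ (t * w) < ℓ w := by
        intro t ht hcon
        have := hno t ht
        omega
      have h1 := no_descent_additive cs hIsub hnd u hu.1
      omega
    obtain ⟨t₀, ht₀, hlt₀⟩ := hsome
    exact fun t ht => orbit_descent_all cs hΓ hI hw ht₀ ht hlt₀
  have hexk : ∃ k, ℓ (s₀ * A k) < ℓ (A k) := ⟨Js.length, by rw [hAp]; exact hdesc s₀ hs₀I⟩
  set k0 := Nat.find hexk with hk0
  have hk0spec : ℓ (s₀ * A k0) < ℓ (A k0) := Nat.find_spec hexk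
  have hk0le : k0 ≤ Js.length := Nat.find_min' hexk (by rw [hAp]; exact hdesc s₀ hs₀I)
  have hk0pos : k0 ≠ 0 := by
    intro h
    rw [h, hA0, mul_one, cs.length_one] at hk0spec
    omega
  obtain ⟨m, hm⟩ : ∃ m, k0 = m + 1 := ⟨k0 - 1, by omega⟩
  have hmlt : m < Js.length := by omega
  set J' := Js[m]'hmlt with hJ'def
  have hJ'orb : IsFinParabolicOrbit cs Γ J' := hJs _ (List.getElem_mem hmlt)
  set u' := wI J' with hu'def
  have hu' : IsLongestIn cs J' u' := hwI J' hJ'orb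
  have hAm1 : A (m+1) = A m * u' := hAsucc m hmlt
  have htrans : ∀ t ∈ I, (ℓ (t * A (m+1)) < ℓ (A (m+1))) ∧ ¬ (ℓ (t * A m) < ℓ (A m)) := by
    intro t ht
    constructor
    · have h1 : ℓ (s₀ * A (m+1)) < ℓ (A (m+1)) := by rw [← hm]; exact hk0spec
      exact orbit_descent_all cs hΓ hI (hAfix (m+1)) hs₀I ht h1
    · intro hcon
      have h2 : ℓ (s₀ * A m) < ℓ (A m) := orbit_descent_all cs hΓ hI (hAfix m) ht hs₀I hcon
      exact (Nat.find_min hexk (show m < k0 by omega)) h2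
  have hconj : ∀ t ∈ I, (A m)⁻¹ * t * (A m) ∈ Subgroup.closure J' := by
    intro t ht
    obtain ⟨b, hb⟩ := hIsub ht
    have htrefl : cs.IsReflection t := by rw [← hb]; exact cs.isReflection_simple b
    have hxrefl : cs.IsReflection ((A m)⁻¹ * t * (A m)) := by
      have := htrefl.conj (A m)⁻¹
      rwa [inv_inv] at this
    have hcoc := etaL_cocycle cs (A m) u' t
    rw [← hAm1] at hcoc
    have h1 : etaL cs (A (m+1)) t = 1 := (etaL_one_iff_descent cs htrefl).mpr (htrans t ht).1
    have h0 : etaL cs (A m) t = 0 := by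
      rcases (by decide : ∀ z : ZMod 2, z = 0 ∨ z = 1) (etaL cs (A m) t) with h | h
      · exact h
      · exact absurd ((etaL_one_iff_descent cs htrefl).mp h) (htrans t ht).2
    rw [h1, h0, zero_add] at hcoc
    have h2 : ℓ (((A m)⁻¹ * t * (A m)) * u') < ℓ u' :=
      (etaL_one_iff_descent cs hxrefl).mp hcoc.symm
    exact refl_descent_mem_closure cs (orbit_subset_simple cs hΓ hJ'orb) hu'.1 hxrefl h2
  set v := (A m)⁻¹ * u * (A m) with hvdef
  have hvmem : v ∈ Subgroup.closure J' := by
    have hind : ∀ x ∈ Subgroup.closure I, (A m)⁻¹ * x * (A m) ∈ Subgroup.closure J' := by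
      intro x hx
      induction hx using Subgroup.closure_induction with
      | mem y hy => exact hconj y hy
      | one => simpa using one_mem _
      | mul a b _ _ iha ihb =>
          have heq : (A m)⁻¹ * (a * b) * (A m)
              = ((A m)⁻¹ * a * (A m)) * ((A m)⁻¹ * b * (A m)) := by group
          rw [heq]
          exact mul_mem iha ihb
      | inv a _ iha =>
          have heq : (A m)⁻¹ * a⁻¹ * (A m) = ((A m)⁻¹ * a * (A m))⁻¹ := by group
          rw [heq]
          exact inv_mem iha
    exact hind u hu.1
  have hvfix : v ∈ fixedSubgroup Γ :=
    mul_mem (mul_mem (inv_mem (hAfix m)) hufix) (hAfix m)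
  have hvne : v ≠ 1 := by
    intro h
    apply orbit_longest_ne_one cs hI hu
    calc u = (A m) * v * (A m)⁻¹ := by rw [hvdef]; group
    _ = 1 := by rw [h]; group
  have hveq : v = u' := fixed_in_orbit_parabolic cs hΓ hJ'orb hu' hvmem hvfix hvne
  refine ⟨m, hmlt, ?_⟩
  have hw_split : w = A (m+1) * ((Js.drop (m+1)).map wI).prod := by
    rw [hprod]
    conv_lhs => rw [← List.take_append_drop (m+1) Js]
    rw [List.map_append, List.prod_append]
  have herase : ((Js.eraseIdx m).map wI).prod = A m * ((Js.drop (m+1)).map wI).prod := by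
    rw [List.eraseIdx_eq_take_drop_succ, List.map_append, List.prod_append]
  have hsq : u' * u' = 1 := longest_sq cs (orbit_subset_simple cs hΓ hJ'orb) hJ'orb.2 hu'
  have hueq : u = A m * u' * (A m)⁻¹ := by
    rw [← hveq, hvdef]
    group
  rw [herase, hw_split, hAm1, hueq]
  calc (A m * u' * (A m)⁻¹) * (A m * u' * ((Js.drop (m+1)).map wI).prod)
      = A m * (u' * u') * ((Js.drop (m+1)).map wI).prod := by group
  _ = A m * ((Js.drop (m+1)).map wI).prod := by rw [hsq, mul_one]

end Gamma

end ExchAux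


/-- the pair `(W^Γ, {w_I : I ∈ S̄})` satisfies the Exchange Condition. -/
theorem exchange_condition {B W : Type*} [Finite B] [Group W] {M : CoxeterMatrix B}
    (cs : CoxeterSystem M W) (Γ : Subgroup (MulAut W))
    (hΓ : ∀ γ ∈ Γ, ⇑γ '' Set.range cs.simple = Set.range cs.simple)
    (wI : Set W → W)
    (hwI : ∀ I : Set W, IsFinParabolicOrbit cs Γ I → IsLongestIn cs I (wI I))
    (w : W) (hw : w ∈ fixedSubgroup Γ)
    (Js : List (Set W))
    (hJs : ∀ J ∈ Js, IsFinParabolicOrbit cs Γ J)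
    (hprod : w = (Js.map wI).prod)
    (hp : Js.length = wordLength {x : W | ∃ I : Set W, IsFinParabolicOrbit cs Γ I ∧ x = wI I} w)
    (I : Set W) (hI : IsFinParabolicOrbit cs Γ I)
    (hle : wordLength {x : W | ∃ I : Set W, IsFinParabolicOrbit cs Γ I ∧ x = wI I} (wI I * w) ≤
      wordLength {x : W | ∃ I : Set W, IsFinParabolicOrbit cs Γ I ∧ x = wI I} w) :
    ∃ i < Js.length, wI I * w = ((Js.eraseIdx i).map wI).prod := by
  classical
  set gen := {x : W | ∃ I : Set W, IsFinParabolicOrbit cs Γ I ∧ x = wI I} with hgen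
  set u := wI I with hudef
  have hu : IsLongestIn cs I u := hwI I hI
  have hIsub := ExchAux.orbit_subset_simple cs hΓ hI
  have hune := ExchAux.orbit_longest_ne_one cs hI hu
  have hlu : 1 ≤ cs.length u := by
    by_contra hh
    exact hune (cs.length_eq_zero_iff.mp (by omega))
  by_cases hsome : ∃ t ∈ I, cs.length (t * w) < cs.length w
  · obtain ⟨t₀, ht₀, hlt₀⟩ := hsome
    have hall : ∀ t ∈ I, cs.length (t * w) < cs.length w := fun t ht =>
      ExchAux.orbit_descent_all cs hΓ hI hw ht₀ ht hlt₀
    have hadd := ExchAux.descents_additive cs hIsub hI.2 hu hall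
    have hlt : cs.length (u * w) < cs.length w := by omega
    exact ExchAux.exchange_core cs hΓ wI hwI hw hJs hprod hI hlt
  · exfalso
    push_neg at hsome
    have hnd : ∀ t ∈ I, ¬ cs.length (t * w) < cs.length w := by
      intro t ht hcon
      have := hsome t ht
      omega
    have hplus := ExchAux.no_descent_additive cs hIsub hnd u hu.1
    set v := u * w with hvdef
    have hvset : wordLength gen v ∈
        {n : ℕ | ∃ L : List W, L.length = n ∧ (∀ x ∈ L, x ∈ gen) ∧ L.prod = v} := by
      apply Nat.sInf_mem
      refine ⟨Js.length + 1, u :: Js.map wI, by simp, ?_, ?_⟩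
      · intro x hx
        rcases List.mem_cons.mp hx with h | h
        · exact ⟨I, hI, by rw [h, hudef]⟩
        · obtain ⟨J, hJ, rfl⟩ := List.mem_map.mp h
          exact ⟨J, hJs J hJ, rfl⟩
      · rw [List.prod_cons, ← hprod]
    obtain ⟨L, hLlen, hLgen, hLprod⟩ := hvset
    have hconv : ∀ L : List W, (∀ x ∈ L, x ∈ gen) → ∃ Ks : List (Set W),
        (∀ K ∈ Ks, IsFinParabolicOrbit cs Γ K) ∧ Ks.map wI = L := by
      intro L hL
      induction L with
      | nil => exact ⟨[], by simp, rfl⟩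
      | cons x L ih =>
          obtain ⟨Ks, h1, h2⟩ := ih (fun y hy => hL y (by simp [hy]))
          obtain ⟨K, hK, hxK⟩ := hL x (by simp)
          refine ⟨K :: Ks, ?_, by rw [List.map_cons, h2, ← hxK]⟩
          intro K' hK'
          rcases List.mem_cons.mp hK' with h | h
          · rw [h]; exact hK
          · exact h1 K' h
    obtain ⟨Ks, hKs, hKsmap⟩ := hconv L hLgen
    have hvfix : v ∈ fixedSubgroup Γ :=
      mul_mem (ExchAux.orbit_longest_fixed cs hΓ hI hu) hw
    have husq : u * u = 1 := ExchAux.longest_sq cs hIsub hI.2 hu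
    have huv : u * v = w := by rw [hvdef, ← mul_assoc, husq, one_mul]
    have hlt' : cs.length (u * v) < cs.length v := by
      rw [huv]
      omega
    obtain ⟨i, hi, heq⟩ := ExchAux.exchange_core cs hΓ wI hwI hvfix hKs
      (by rw [hKsmap, hLprod]) hI hlt'
    have hwle : wordLength gen w ≤ Ks.length - 1 := by
      apply Nat.sInf_le
      refine ⟨(Ks.eraseIdx i).map wI, ?_, ?_, ?_⟩
      · rw [List.length_map, List.length_eraseIdx, if_pos hi]
      · intro x hx
        obtain ⟨K, hK, rfl⟩ := List.mem_map.mp hx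
        exact ⟨K, hKs K ((List.eraseIdx_sublist Ks i).mem hK), rfl⟩
      · rw [← heq, huv]
    have hKslen : Ks.length = wordLength gen v := by
      rw [← hLlen, ← hKsmap, List.length_map]
    omega
end

section
/- In the proof of the Exchange Condition, the following conjugacy fact holds: let I, J ∈ S̄ and z ∈ W^Γ, and suppose there exists s ∈ I such that z^{-1} s z ∈ W_J. Then z^{-1} w_I z = w_J. -/
open CoxeterSystem

namespace ConjAux

open List

variable {B W : Type*} [Group W] {M : CoxeterMatrix B} (cs : CoxeterSystem M W)

local prefix:100 "σ" => cs.simple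
local prefix:100 "π" => cs.wordProd
local prefix:100 "ℓ" => cs.length

theorem zmod2_cases (x : ZMod 2) : x = 0 ∨ x = 1 := by revert x; decide

theorem zmod2_add_self (x : ZMod 2) : x + x = 0 := by revert x; decide

theorem zmod2_eq_of_add_eq_zero (a b : ZMod 2) (h : a + b = 0) : b = a := by
  revert a b; decide

theorem zmod2_aab (a : ZMod 2) : a + (1 + a) = 1 := by revert a; decide

/-! ### The sign permutation representation on `W × ZMod 2` -/

noncomputable local instance : DecidableEq W := Classical.decEq W

/-- The basic involution attached to a simple reflection. -/
noncomputable def etaFun (i : B) : W × ZMod 2 → W × ZMod 2 :=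
  fun p => (σ i * p.1 * σ i, p.2 + if p.1 = σ i then 1 else 0)

theorem simple_conj_simple (i : B) (x : W) : σ i * (σ i * x * σ i) * σ i = x := by
  simp [mul_assoc, cs.simple_mul_simple_cancel_left, cs.simple_mul_simple_self]

theorem simple_conj_eq_iff (i : B) (t x : W) : (σ i * t * σ i = x) ↔ (t = σ i * x * σ i) := by
  constructor
  · rintro rfl
    rw [simple_conj_simple]
  · rintro rfl
    rw [simple_conj_simple]

theorem conj_eq_iff (g a x : W) : (g * a * g⁻¹ = x) ↔ (a = g⁻¹ * x * g) := by
  constructor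
  · rintro rfl
    group
  · rintro rfl
    group

theorem etaFun_involutive (i : B) : Function.Involutive (etaFun cs i) := by
  intro p
  unfold etaFun
  have h2 : (σ i * p.1 * σ i = σ i) ↔ p.1 = σ i := by
    rw [simple_conj_eq_iff, cs.simple_mul_simple_self, one_mul]
  ext
  · exact simple_conj_simple cs i p.1
  · show p.2 + _ + _ = p.2
    simp only [if_congr h2 rfl rfl, add_assoc, zmod2_add_self, add_zero]

/-- The basic involution as a permutation. -/
noncomputable def eta (i : B) : Equiv.Perm (W × ZMod 2) :=
  (etaFun_involutive cs i).toPerm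

theorem eta_apply (i : B) (p : W × ZMod 2) :
    eta cs i p = (σ i * p.1 * σ i, p.2 + if p.1 = σ i then 1 else 0) := rfl

theorem eta_mul_pow (i j : B) (m : ℕ) (t : W) (ε : ZMod 2) :
    ((eta cs i * eta cs j) ^ m) (t, ε) =
      ((σ i * σ j) ^ m * t * ((σ i * σ j) ^ m)⁻¹,
        ε + ∑ k ∈ Finset.range m,
          ((if t = ((σ i * σ j) ^ k)⁻¹ * σ j * (σ i * σ j) ^ k then (1 : ZMod 2) else 0)
            + (if t = ((σ i * σ j) ^ k)⁻¹ * (σ j * σ i * σ j) * (σ i * σ j) ^ k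
                then (1 : ZMod 2) else 0))) := by
  obtain ⟨p, hp⟩ : ∃ p : W, σ i * σ j = p := ⟨_, rfl⟩
  rw [hp]
  induction m generalizing t ε with
  | zero => simp
  | succ m ih =>
    have hstep : (eta cs i * eta cs j) (t, ε) =
        (p * t * p⁻¹,
          ε + ((if t = σ j then (1 : ZMod 2) else 0)
            + (if t = σ j * σ i * σ j then (1 : ZMod 2) else 0))) := by
      rw [Equiv.Perm.mul_apply, eta_apply, eta_apply]
      refine Prod.ext ?_ ?_
      · show σ i * (σ j * t * σ j) * σ i = p * t * p⁻¹
        rw [← hp, mul_inv_rev, cs.inv_simple, cs.inv_simple]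
        group
      · show ε + _ + _ = ε + _
        rw [if_congr (simple_conj_eq_iff cs j t (σ i)) rfl rfl, add_assoc]
    rw [pow_succ, Equiv.Perm.mul_apply, hstep, ih]
    refine Prod.ext ?_ ?_
    · show p ^ m * (p * t * p⁻¹) * (p ^ m)⁻¹ = p ^ (m + 1) * t * (p ^ (m + 1))⁻¹
      rw [pow_succ, mul_inv_rev]
      group
    · show _ + _ = _ + _
      rw [Finset.sum_range_succ']
      have hterm : ∀ k : ℕ,
          ((if p * t * p⁻¹ = (p ^ k)⁻¹ * σ j * p ^ k then (1 : ZMod 2) else 0)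
            + (if p * t * p⁻¹ = (p ^ k)⁻¹ * (σ j * σ i * σ j) * p ^ k then (1 : ZMod 2) else 0))
          = ((if t = (p ^ (k + 1))⁻¹ * σ j * p ^ (k + 1) then (1 : ZMod 2) else 0)
            + (if t = (p ^ (k + 1))⁻¹ * (σ j * σ i * σ j) * p ^ (k + 1)
                then (1 : ZMod 2) else 0)) := by
        intro k
        have h1 : p⁻¹ * ((p ^ k)⁻¹ * σ j * p ^ k) * p = (p ^ (k + 1))⁻¹ * σ j * p ^ (k + 1) := by
          rw [pow_succ, mul_inv_rev]
          group
        have h2 : p⁻¹ * ((p ^ k)⁻¹ * (σ j * σ i * σ j) * p ^ k) * p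
            = (p ^ (k + 1))⁻¹ * (σ j * σ i * σ j) * p ^ (k + 1) := by
          rw [pow_succ, mul_inv_rev]
          group
        rw [if_congr ((conj_eq_iff p t _).trans (by rw [h1])) rfl rfl,
          if_congr ((conj_eq_iff p t _).trans (by rw [h2])) rfl rfl]
      rw [Finset.sum_congr rfl fun k _ => hterm k]
      simp only [pow_zero, inv_one, one_mul, mul_one]
      abel

theorem eta_liftable : M.IsLiftable (eta cs) := by
  intro i j
  apply Equiv.ext
  rintro ⟨t, ε⟩
  rw [eta_mul_pow]
  have hpm : (σ i * σ j) ^ M i j = 1 := cs.simple_mul_simple_pow i j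
  have hbase : σ j * (σ i * σ j) = (σ i * σ j)⁻¹ * σ j := by
    rw [mul_inv_rev, cs.inv_simple, cs.inv_simple]
    group
  have hsss : σ j * σ i * σ j = (σ i * σ j)⁻¹ * σ j := by
    rw [mul_inv_rev, cs.inv_simple, cs.inv_simple]
  obtain ⟨p, hp⟩ : ∃ p : W, σ i * σ j = p := ⟨_, rfl⟩
  rw [hp] at hpm hbase hsss ⊢
  set m := M i j with hm
  have hmove : ∀ k : ℕ, σ j * p ^ k = (p ^ k)⁻¹ * σ j := by
    intro k
    induction k with
    | zero => simp
    | succ k ihk =>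
      rw [pow_succ, ← mul_assoc, ihk, mul_assoc, hbase, ← mul_assoc, ← mul_inv_rev,
        ← pow_succ', ← pow_succ]
  have he : ∀ k : ℕ, (p ^ k)⁻¹ * σ j * p ^ k = (p ^ (2 * k))⁻¹ * σ j := by
    intro k
    rw [mul_assoc, hmove k, ← mul_assoc, ← mul_inv_rev, ← pow_add, two_mul]
  have hf : ∀ k : ℕ, (p ^ k)⁻¹ * (σ j * σ i * σ j) * p ^ k = (p ^ (2 * k + 1))⁻¹ * σ j := by
    intro k
    rw [hsss, mul_assoc, mul_assoc, hmove k, ← mul_assoc, ← mul_assoc, ← mul_inv_rev,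
      ← mul_inv_rev, ← pow_succ', ← pow_add]
    have hkk : k + (k + 1) = 2 * k + 1 := by omega
    rw [hkk]
  set c : ℕ → ZMod 2 := fun l => if t = (p ^ l)⁻¹ * σ j then 1 else 0 with hc
  have hsum : ∀ n : ℕ, (∑ k ∈ Finset.range n,
        ((if t = (p ^ k)⁻¹ * σ j * p ^ k then (1 : ZMod 2) else 0)
          + (if t = (p ^ k)⁻¹ * (σ j * σ i * σ j) * p ^ k then (1 : ZMod 2) else 0)))
      = ∑ l ∈ Finset.range (2 * n), c l := by
    intro n
    induction n with
    | zero => simp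
    | succ n ihn =>
      have h2n : 2 * (n + 1) = 2 * n + 1 + 1 := by ring
      rw [Finset.sum_range_succ, ihn, h2n, Finset.sum_range_succ, Finset.sum_range_succ,
        add_assoc, hc]
      simp only [he n, hf n]
  rw [hsum m]
  have hsplit : (∑ l ∈ Finset.range (2 * m), c l) = 0 := by
    rw [two_mul, Finset.sum_range_add]
    have hcc : ∀ l : ℕ, c (m + l) = c l := by
      intro l
      simp only [hc, pow_add, hpm, one_mul]
    rw [Finset.sum_congr rfl fun l hl => hcc l, zmod2_add_self]
  rw [hsplit, add_zero, hpm]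
  show _ = (1 : Equiv.Perm (W × ZMod 2)) (t, ε)
  rw [Equiv.Perm.one_apply]
  refine Prod.ext ?_ rfl
  show (1 : W) * t * (1 : W)⁻¹ = t
  group

/-- The sign representation. -/
noncomputable def theta : W →* Equiv.Perm (W × ZMod 2) :=
  cs.lift ⟨eta cs, eta_liftable cs⟩

theorem theta_simple (i : B) : theta cs (σ i) = eta cs i :=
  cs.lift_apply_simple (eta_liftable cs) i

/-- The sign cocycle. -/
noncomputable def nn (w t : W) : ZMod 2 := ((theta cs w) (t, 0)).2

theorem theta_apply (w : W) : ∀ (t : W) (ε : ZMod 2),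
    theta cs w (t, ε) = (w * t * w⁻¹, ε + nn cs w t) := by
  induction w using cs.simple_induction_left with
  | one =>
    intro t ε
    have h0 : nn cs 1 t = 0 := by
      unfold nn
      rw [map_one, Equiv.Perm.one_apply]
    rw [map_one, Equiv.Perm.one_apply, h0]
    simp
  | mul_simple_left w i ih =>
    intro t ε
    have key : ∀ δ : ZMod 2, theta cs (σ i * w) (t, δ) =
        ((σ i * w) * t * (σ i * w)⁻¹,
          δ + (nn cs w t + if w * t * w⁻¹ = σ i then 1 else 0)) := by
      intro δ
      rw [map_mul, Equiv.Perm.mul_apply, ih t δ, theta_simple, eta_apply]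
      refine Prod.ext ?_ ?_
      · show σ i * (w * t * w⁻¹) * σ i = σ i * w * t * (σ i * w)⁻¹
        rw [mul_inv_rev, cs.inv_simple]
        group
      · show δ + nn cs w t + _ = δ + _
        rw [add_assoc]
    have hnn : nn cs (σ i * w) t = nn cs w t + if w * t * w⁻¹ = σ i then 1 else 0 := by
      have h := congrArg Prod.snd (key 0)
      simpa [nn] using h
    rw [key ε, hnn]

theorem nn_mul (u v t : W) : nn cs (u * v) t = nn cs v t + nn cs u (v * t * v⁻¹) := by
  have h2 : theta cs (u * v) (t, 0) = theta cs u (theta cs v (t, 0)) := by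
    rw [map_mul, Equiv.Perm.mul_apply]
  have h3 : theta cs u (theta cs v (t, 0)) =
      (u * (v * t * v⁻¹) * u⁻¹, nn cs v t + nn cs u (v * t * v⁻¹)) := by
    rw [theta_apply cs v t 0, zero_add, theta_apply cs u (v * t * v⁻¹) (nn cs v t)]
  calc nn cs (u * v) t = (theta cs (u * v) (t, 0)).2 := rfl
  _ = (u * (v * t * v⁻¹) * u⁻¹, nn cs v t + nn cs u (v * t * v⁻¹)).2 := by rw [h2, h3]
  _ = nn cs v t + nn cs u (v * t * v⁻¹) := rfl

theorem nn_simple (i : B) (t : W) : nn cs (σ i) t = if t = σ i then 1 else 0 := by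
  unfold nn
  rw [theta_simple, eta_apply, zero_add]

theorem nn_count (ω : List B) (t : W) :
    nn cs (π ω) t = (List.count t (cs.rightInvSeq ω) : ZMod 2) := by
  induction ω with
  | nil =>
    have : nn cs 1 t = 0 := by
      unfold nn
      rw [map_one, Equiv.Perm.one_apply]
    simpa [this] using (by rw [cs.wordProd_nil] : nn cs (π ([] : List B)) t = nn cs 1 t)
  | cons i ω ih =>
    rw [cs.wordProd_cons, nn_mul, ih, nn_simple]
    have hris : cs.rightInvSeq (i :: ω) = ((π ω)⁻¹ * σ i * π ω) :: cs.rightInvSeq ω := rfl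
    have hcond : ((π ω) * t * (π ω)⁻¹ = σ i) ↔ (t = (π ω)⁻¹ * σ i * (π ω)) :=
      conj_eq_iff (π ω) t (σ i)
    rw [hris, List.count_cons]
    simp only [beq_iff_eq, Nat.cast_add, Nat.cast_ite, Nat.cast_one, Nat.cast_zero, hcond]
    rcases em (t = (π ω)⁻¹ * σ i * π ω) with hh | hh
    · rw [if_pos hh, if_pos hh.symm]
    · rw [if_neg hh, if_neg (fun h => hh h.symm)]

theorem length_lt_of_nn_one {w t : W} (h : nn cs w t = 1) : ℓ (w * t) < ℓ w := by
  obtain ⟨ω, hred, hw⟩ := cs.exists_reduced_word' w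
  have hcount : (List.count t (cs.rightInvSeq ω) : ZMod 2) = 1 := by
    rw [← nn_count, ← hw, h]
  have hmem : t ∈ cs.rightInvSeq ω := by
    by_contra hnot
    rw [List.count_eq_zero_of_not_mem hnot] at hcount
    simp at hcount
  obtain ⟨k, hk, hkt⟩ := List.getElem_of_mem hmem
  have hk' : k < ω.length := by
    rwa [cs.length_rightInvSeq] at hk
  have hgetD : (cs.rightInvSeq ω).getD k 1 = t := by
    rw [List.getD_eq_getElem _ _ hk, hkt]
  have herase : w * t = π (ω.eraseIdx k) := by
    rw [hw, ← hgetD, cs.wordProd_mul_getD_rightInvSeq]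
  have hle : ℓ (w * t) ≤ (ω.eraseIdx k).length := by
    rw [herase]
    exact cs.length_wordProd_le _
  have hlen : (ω.eraseIdx k).length + 1 = ω.length := List.length_eraseIdx_add_one hk'
  have hlw : ℓ w = ω.length := by rw [hw]; exact hred
  omega

theorem nn_reflection_self {t : W} (ht : cs.IsReflection t) : nn cs t t = 1 := by
  obtain ⟨u, i, rfl⟩ := ht
  set t := u * σ i * u⁻¹ with hts
  have hinv : nn cs u⁻¹ t = nn cs u (σ i) := by
    have h1 : theta cs u (σ i, 0) = (t, nn cs u (σ i)) := by
      rw [theta_apply]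
      simp [hts]
    have h2 : theta cs u⁻¹ (t, nn cs u (σ i)) = (σ i, nn cs u (σ i) + nn cs u⁻¹ t) := by
      rw [theta_apply]
      refine Prod.ext ?_ rfl
      show u⁻¹ * t * u⁻¹⁻¹ = σ i
      rw [hts]
      group
    have h3 : theta cs u⁻¹ (theta cs u (σ i, 0)) = (σ i, 0) := by
      rw [← Equiv.Perm.mul_apply, ← map_mul, inv_mul_cancel, map_one, Equiv.Perm.one_apply]
    rw [h1, h2] at h3
    have h4 := congrArg Prod.snd h3
    exact zmod2_eq_of_add_eq_zero _ _ h4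
  have hconj : u⁻¹ * t * u⁻¹⁻¹ = σ i := by
    rw [hts]; group
  have hmain : nn cs ((u * σ i) * u⁻¹) t = nn cs u⁻¹ t + nn cs (u * σ i) (u⁻¹ * t * u⁻¹⁻¹) :=
    nn_mul cs (u * σ i) u⁻¹ t
  have hmid : nn cs (u * σ i) (σ i) = nn cs (σ i) (σ i) + nn cs u (σ i * σ i * (σ i)⁻¹) :=
    nn_mul cs u (σ i) (σ i)
  have hsimp : σ i * σ i * (σ i)⁻¹ = σ i := by group
  have hσ : nn cs (σ i) (σ i) = 1 := by rw [nn_simple]; simp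
  have hfin : nn cs t t = nn cs u (σ i) + (1 + nn cs u (σ i)) := by
    calc nn cs t t = nn cs ((u * σ i) * u⁻¹) t := by rw [hts, mul_assoc]
    _ = nn cs u⁻¹ t + nn cs (u * σ i) (u⁻¹ * t * u⁻¹⁻¹) := hmain
    _ = nn cs u (σ i) + (1 + nn cs u (σ i)) := by
        rw [hconj, hinv, hmid, hsimp, hσ]
  rw [hfin, zmod2_aab]

theorem nn_one_of_inversion {w t : W} (ht : cs.IsReflection t) (h : ℓ (w * t) < ℓ w) :
    nn cs w t = 1 := by
  rcases zmod2_cases (nn cs w t) with h0 | h1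
  · exfalso
    have hwt : nn cs (w * t) t = 1 := by
      rw [nn_mul, nn_reflection_self cs ht]
      have htt : t * t * t⁻¹ = t := by
        rw [ht.mul_self, one_mul, ht.inv]
      rw [htt, h0, add_zero]
    have := length_lt_of_nn_one cs hwt
    rw [mul_assoc, ht.mul_self, mul_one] at this
    omega
  · exact h1

/-! ### Words in a subset of the simple reflections -/

theorem exists_word_of_mem_closure {K : Set W} (hK : K ⊆ Set.range cs.simple) {u : W}
    (hu : u ∈ Subgroup.closure K) :
    ∃ ω : List B, (∀ i ∈ ω, σ i ∈ K) ∧ π ω = u := by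
  induction hu using Subgroup.closure_induction with
  | mem x hx =>
    obtain ⟨i, hi⟩ := hK hx
    exact ⟨[i], by simpa [hi] using hx, by simpa using hi⟩
  | one => exact ⟨[], by simp, by simp⟩
  | mul x y _ _ ihx ihy =>
    obtain ⟨ω₁, h₁, hp₁⟩ := ihx
    obtain ⟨ω₂, h₂, hp₂⟩ := ihy
    refine ⟨ω₁ ++ ω₂, ?_, by rw [cs.wordProd_append, hp₁, hp₂]⟩
    intro i hi
    rcases List.mem_append.mp hi with hi | hi
    · exact h₁ i hi
    · exact h₂ i hi
  | inv x _ ihx =>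
    obtain ⟨ω, h₁, hp₁⟩ := ihx
    refine ⟨ω.reverse, ?_, by rw [cs.wordProd_reverse, hp₁]⟩
    intro i hi
    exact h₁ i (List.mem_reverse.mp hi)

theorem wordProd_mem_closure {K : Set W} {ω : List B} (hω : ∀ i ∈ ω, σ i ∈ K) :
    π ω ∈ Subgroup.closure K := by
  induction ω with
  | nil => rw [cs.wordProd_nil]; exact one_mem _
  | cons i ω ih =>
    rw [cs.wordProd_cons]
    exact mul_mem (Subgroup.subset_closure (hω i (by simp)))
      (ih fun j hj => hω j (by simp [hj]))

theorem exists_reduced_word_subset {K : Set W} {u : W}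
    (hu : u ∈ Subgroup.closure K) (hK : K ⊆ Set.range cs.simple) :
    ∃ ω : List B, (∀ i ∈ ω, σ i ∈ K) ∧ cs.IsReduced ω ∧ π ω = u := by
  classical
  obtain ⟨ω₀, hmem₀, hprod₀⟩ := exists_word_of_mem_closure cs hK hu
  subst hprod₀
  clear hu
  suffices haux : ∀ (n : ℕ) (ω : List B), ω.length = n → (∀ i ∈ ω, σ i ∈ K) →
      ∃ ω' : List B, (∀ i ∈ ω', σ i ∈ K) ∧ cs.IsReduced ω' ∧ π ω' = π ω by
    exact haux ω₀.length ω₀ rfl hmem₀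
  intro n
  induction n using Nat.strong_induction_on with
  | _ n ihn =>
    intro ω hlen hmem
    by_cases hred : cs.IsReduced ω
    · exact ⟨ω, hmem, hred, rfl⟩
    · have hex : ∃ nj : ℕ, ¬ cs.IsReduced (ω.take nj) :=
        ⟨ω.length, by rwa [List.take_length]⟩
      have hj1pos : Nat.find hex ≠ 0 := by
        intro h0
        have := Nat.find_spec hex
        rw [h0] at this
        exact this (by simp [CoxeterSystem.IsReduced])
      obtain ⟨j, hj⟩ : ∃ j, Nat.find hex = j + 1 :=
        ⟨Nat.find hex - 1, (Nat.succ_pred_eq_of_pos (Nat.pos_of_ne_zero hj1pos)).symm⟩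
      have hjred : cs.IsReduced (ω.take j) := by
        by_contra hcon
        exact absurd hcon (by simpa using Nat.find_min hex (by omega : j < Nat.find hex))
      have hjnred : ¬ cs.IsReduced (ω.take (j + 1)) := by
        rw [← hj]; exact Nat.find_spec hex
      have hjlt : j < ω.length := by
        by_contra hge
        push_neg at hge
        apply hred
        have h := hjred
        rwa [List.take_of_length_le hge] at h
      set i := ω[j]'hjlt with hi
      have htake : ω.take (j + 1) = ω.take j ++ [i] := (List.take_concat_get' ω j hjlt).symm
      set w := π (ω.take j) with hwdef
      have hlw : ℓ w = j := by
        have := hjred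
        rwa [CoxeterSystem.IsReduced, List.length_take, min_eq_left hjlt.le] at this
      have hprod1 : π (ω.take (j + 1)) = w * σ i := by
        rw [htake, cs.wordProd_append, cs.wordProd_singleton]
      have hlt : ℓ (w * σ i) < ℓ w := by
        have hne : ℓ (π (ω.take (j + 1))) ≠ (ω.take (j + 1)).length := hjnred
        have hlen1 : (ω.take (j + 1)).length = j + 1 := by
          rw [List.length_take]; omega
        have hle : ℓ (π (ω.take (j + 1))) ≤ j + 1 := by
          have := cs.length_wordProd_le (ω.take (j + 1))
          omega
        rcases cs.length_mul_simple w i with hcase | hcase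
        · exfalso
          rw [hprod1] at hne hle
          omega
        · omega
      have hnn : nn cs w (σ i) = 1 :=
        nn_one_of_inversion cs (cs.isReflection_simple i) hlt
      have hcount : (List.count (σ i) (cs.rightInvSeq (ω.take j)) : ZMod 2) = 1 := by
        rw [← nn_count, ← hwdef, hnn]
      have hmemris : σ i ∈ cs.rightInvSeq (ω.take j) := by
        by_contra hnot
        rw [List.count_eq_zero_of_not_mem hnot] at hcount
        simp at hcount
      obtain ⟨k, hk, hkt⟩ := List.getElem_of_mem hmemris
      have hk' : k < (ω.take j).length := by
        rwa [cs.length_rightInvSeq] at hk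
      have herase : w * σ i = π ((ω.take j).eraseIdx k) := by
        rw [hwdef, ← cs.wordProd_mul_getD_rightInvSeq (ω.take j) k]
        congr 1
        rw [List.getD_eq_getElem _ _ hk, hkt]
      set ω' := (ω.take j).eraseIdx k ++ ω.drop (j + 1) with hω'
      have hprodeq : π ω' = π ω := by
        rw [hω', cs.wordProd_append, ← herase, ← hprod1, ← cs.wordProd_append,
          List.take_append_drop]
      have hmem' : ∀ i' ∈ ω', σ i' ∈ K := by
        intro i' hi'
        rcases List.mem_append.mp hi' with h' | h'
        · exact hmem i' (List.take_subset j ω ((List.eraseIdx_sublist _ k).subset h'))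
        · exact hmem i' (List.drop_subset (j + 1) ω h')
      have hlen' : ω'.length < n := by
        have h1 : ((ω.take j).eraseIdx k).length + 1 = (ω.take j).length :=
          List.length_eraseIdx_add_one hk'
        have h2 : (ω.take j).length = j := by rw [List.length_take]; omega
        have h3 : (ω.drop (j + 1)).length = ω.length - (j + 1) := by
          rw [List.length_drop]
        rw [hω', List.length_append]
        omega
      obtain ⟨ω'', hmem'', hred'', hprod''⟩ := ihn ω'.length hlen' ω' rfl hmem'
      exact ⟨ω'', hmem'', hred'', by rw [hprod'', hprodeq]⟩

theorem descent_all {K : Set W} (hK : K ⊆ Set.range cs.simple) {w : W}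
    (hdesc : ∀ t ∈ K, ℓ (w * t) < ℓ w) :
    ∀ u ∈ Subgroup.closure K, ℓ (w * u) + ℓ u = ℓ w := by
  suffices haux : ∀ (n : ℕ) (u : W), u ∈ Subgroup.closure K → ℓ u ≤ n →
      ℓ (w * u) + ℓ u = ℓ w by
    exact fun u hu => haux (ℓ u) u hu le_rfl
  intro n
  induction n with
  | zero =>
    intro u _ h0
    have : u = 1 := cs.length_eq_zero_iff.mp (by omega)
    simp [this]
  | succ n ihn =>
    intro u hu hle
    by_cases hu1 : u = 1
    · simp [hu1]
    · obtain ⟨ω, hmem, hred, hprod⟩ := exists_reduced_word_subset cs hu hK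
      cases ω with
      | nil => exact absurd (by rw [← hprod, cs.wordProd_nil]) hu1
      | cons i ω' =>
        have htK : σ i ∈ K := hmem i (by simp)
        set u' := π ω' with hu'def
        have hu'mem : u' ∈ Subgroup.closure K :=
          wordProd_mem_closure cs fun j hj => hmem j (by simp [hj])
        have hlu : ℓ u = ω'.length + 1 := by
          rw [← hprod]
          have := hred
          rwa [CoxeterSystem.IsReduced, List.length_cons] at this
        have hlu' : ℓ u' = ω'.length := by
          have : cs.IsReduced ω' := by
            have := CoxeterSystem.IsReduced.drop hred 1
            simpa using this
          rwa [CoxeterSystem.IsReduced] at this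
        have hueq : u = σ i * u' := by
          rw [← hprod, cs.wordProd_cons]
        set r := u'⁻¹ * σ i * u' with hrdef
        have h0 : nn cs u' r = 0 := by
          rcases zmod2_cases (nn cs u' r) with h | h
          · exact h
          · exfalso
            have := length_lt_of_nn_one cs h
            have hur : u' * r = u := by
              rw [hrdef, hueq]
              group
            rw [hur] at this
            omega
        have h2 : nn cs w (σ i) = 1 :=
          nn_one_of_inversion cs (cs.isReflection_simple i) (hdesc _ htK)
        have h3 : nn cs (w * u') r = 1 := by
          rw [nn_mul, h0, zero_add]
          have : u' * r * u'⁻¹ = σ i := by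
            rw [hrdef]; group
          rw [this, h2]
        have h4 : ℓ (w * u' * r) < ℓ (w * u') := length_lt_of_nn_one cs h3
        have weq : w * u' * r = w * u := by
          rw [hrdef, hueq]
          group
        rw [weq] at h4
        have hIH : ℓ (w * u') + ℓ u' = ℓ w := ihn u' hu'mem (by omega)
        have hlower : ℓ w - ℓ u ≤ ℓ (w * u) := cs.length_mul_ge_length_sub_length w u
        omega

/-! ### Helper lemmas about automorphisms and closures -/

theorem closure_stab {K : Set W} (γ : MulAut W) (hst : ∀ t ∈ K, γ t ∈ K) :
    ∀ x ∈ Subgroup.closure K, γ x ∈ Subgroup.closure K := by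
  intro x hx
  induction hx using Subgroup.closure_induction with
  | mem y hy => exact Subgroup.subset_closure (hst y hy)
  | one => rw [map_one]; exact one_mem _
  | mul a b _ _ iha ihb => rw [map_mul]; exact mul_mem iha ihb
  | inv a _ iha => rw [map_inv]; exact inv_mem iha

theorem conj_mem_closure {A : Set W} {H : Subgroup W} {z : W}
    (hgen : ∀ t ∈ A, z⁻¹ * t * z ∈ H) : ∀ x ∈ Subgroup.closure A, z⁻¹ * x * z ∈ H := by
  intro x hx
  induction hx using Subgroup.closure_induction with
  | mem y hy => exact hgen y hy
  | one => simpa using one_mem H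
  | mul a b _ _ iha ihb =>
    have hab : z⁻¹ * (a * b) * z = (z⁻¹ * a * z) * (z⁻¹ * b * z) := by group
    rw [hab]; exact mul_mem iha ihb
  | inv a _ iha =>
    have hai : z⁻¹ * a⁻¹ * z = (z⁻¹ * a * z)⁻¹ := by group
    rw [hai]; exact inv_mem iha

theorem length_map_le (γ : MulAut W) (hγ : ∀ i : B, ∃ i', γ (σ i) = σ i') (w : W) :
    ℓ (γ w) ≤ ℓ w := by
  obtain ⟨ω, hlen, hw⟩ := cs.exists_reduced_word w
  have key : ∀ ω' : List B, ℓ (γ (π ω')) ≤ ω'.length := by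
    intro ω'
    induction ω' with
    | nil => simp
    | cons i ω' ih =>
      rw [cs.wordProd_cons, map_mul]
      obtain ⟨i', hi'⟩ := hγ i
      rw [hi']
      have h1 := cs.length_mul_le (σ i') (γ (π ω'))
      have h2 := cs.length_simple i'
      simp only [List.length_cons]
      omega
  calc ℓ (γ w) = ℓ (γ (π ω)) := by rw [← hw]
  _ ≤ ω.length := key ω
  _ = ℓ w := by rw [hw]; exact (hlen : ℓ (π ω) = ω.length).symm

end ConjAux

/-- if `I, J ∈ S̄`, `z ∈ W^Γ` and `z⁻¹ s z ∈ W_J` for some `s ∈ I`, then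
`z⁻¹ w_I z = w_J`. -/
theorem conj_longest_eq_longest {B W : Type*} [Finite B] [Group W] {M : CoxeterMatrix B}
    (cs : CoxeterSystem M W) (Γ : Subgroup (MulAut W))
    (hΓ : ∀ γ ∈ Γ, ⇑γ '' Set.range cs.simple = Set.range cs.simple)
    (wI : Set W → W)
    (hwI : ∀ I : Set W, IsFinParabolicOrbit cs Γ I → IsLongestIn cs I (wI I))
    (I J : Set W) (hI : IsFinParabolicOrbit cs Γ I) (hJ : IsFinParabolicOrbit cs Γ J)
    (z : W) (hz : z ∈ fixedSubgroup Γ)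
    (s : W) (hs : s ∈ I) (h : z⁻¹ * s * z ∈ Subgroup.closure J) :
    z⁻¹ * wI I * z = wI J := by
  classical
  obtain ⟨s₀, hs₀, hIorb⟩ := hI.1
  obtain ⟨t₀, ht₀, hJorb⟩ := hJ.1
  have hzfix : ∀ γ ∈ Γ, γ z = z := hz
  have hsimple : ∀ γ ∈ Γ, ∀ i : B, ∃ i', γ (cs.simple i) = cs.simple i' := by
    intro γ hγ i
    have hmem : γ (cs.simple i) ∈ Set.range cs.simple := by
      rw [← hΓ γ hγ]
      exact Set.mem_image_of_mem _ ⟨i, rfl⟩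
    obtain ⟨i', hi'⟩ := hmem
    exact ⟨i', hi'.symm⟩
  have hlen : ∀ γ ∈ Γ, ∀ w : W, cs.length (γ w) = cs.length w := by
    intro γ hγ w
    refine le_antisymm (ConjAux.length_map_le cs γ (hsimple γ hγ) w) ?_
    have h2 := ConjAux.length_map_le cs γ⁻¹ (hsimple γ⁻¹ (inv_mem hγ)) (γ w)
    rwa [MulAut.inv_apply_self W γ w] at h2
  have hIsub : I ⊆ Set.range cs.simple := by
    intro t ht
    rw [hIorb] at ht
    obtain ⟨γ, hγ, rfl⟩ := ht
    rw [← hΓ γ hγ]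
    exact Set.mem_image_of_mem _ hs₀
  have hJsub : J ⊆ Set.range cs.simple := by
    intro t ht
    rw [hJorb] at ht
    obtain ⟨γ, hγ, rfl⟩ := ht
    rw [← hΓ γ hγ]
    exact Set.mem_image_of_mem _ ht₀
  have hIstab : ∀ γ ∈ Γ, ∀ t ∈ I, γ t ∈ I := by
    intro γ hγ t ht
    rw [hIorb] at ht ⊢
    obtain ⟨δ, hδ, rfl⟩ := ht
    exact ⟨γ * δ, mul_mem hγ hδ, rfl⟩
  have hJstab : ∀ γ ∈ Γ, ∀ t ∈ J, γ t ∈ J := by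
    intro γ hγ t ht
    rw [hJorb] at ht ⊢
    obtain ⟨δ, hδ, rfl⟩ := ht
    exact ⟨γ * δ, mul_mem hγ hδ, rfl⟩
  have horbI : ∀ t, t ∈ I ↔ ∃ γ ∈ Γ, γ s = t := by
    have hs' := hs
    rw [hIorb] at hs'
    obtain ⟨δ, hδ, hδs⟩ := hs'
    intro t
    constructor
    · intro ht
      rw [hIorb] at ht
      obtain ⟨γ', hγ', rfl⟩ := ht
      refine ⟨γ' * δ⁻¹, mul_mem hγ' (inv_mem hδ), ?_⟩
      rw [← hδs]
      exact congrArg (⇑γ') (MulAut.inv_apply_self W δ s₀)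
    · rintro ⟨γ', hγ', rfl⟩
      rw [hIorb, ← hδs]
      exact ⟨γ' * δ, mul_mem hγ' hδ, rfl⟩
  have horbJ : ∀ x ∈ J, ∀ t, t ∈ J ↔ ∃ γ ∈ Γ, γ x = t := by
    intro x hx
    rw [hJorb] at hx
    obtain ⟨δ, hδ, hδx⟩ := hx
    intro t
    constructor
    · intro ht
      rw [hJorb] at ht
      obtain ⟨γ', hγ', rfl⟩ := ht
      refine ⟨γ' * δ⁻¹, mul_mem hγ' (inv_mem hδ), ?_⟩
      rw [← hδx]
      exact congrArg (⇑γ') (MulAut.inv_apply_self W δ t₀)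
    · rintro ⟨γ', hγ', rfl⟩
      rw [hJorb, ← hδx]
      exact ⟨γ' * δ, mul_mem hγ' hδ, rfl⟩
  obtain ⟨hwIImem, hwIImax⟩ := hwI I hI
  obtain ⟨hwIJmem, hwIJmax⟩ := hwI J hJ
  have descI : ∀ t ∈ I, cs.length (wI I * t) < cs.length (wI I) := by
    intro t ht
    obtain ⟨i, hi⟩ := hIsub ht
    have hmemt : wI I * t ∈ Subgroup.closure I :=
      mul_mem hwIImem (Subgroup.subset_closure ht)
    have hle := hwIImax _ hmemt
    rcases cs.length_mul_simple (wI I) i with hcase | hcase <;> rw [hi] at hcase <;> omega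
  have hfixI : ∀ γ ∈ Γ, γ (wI I) = wI I := by
    intro γ hγ
    have hmem' : γ (wI I) ∈ Subgroup.closure I :=
      ConjAux.closure_stab γ (hIstab γ hγ) _ hwIImem
    have hlen' : cs.length (γ (wI I)) = cs.length (wI I) := hlen γ hγ _
    have hE := ConjAux.descent_all cs hIsub descI ((wI I)⁻¹ * γ (wI I))
      (mul_mem (inv_mem hwIImem) hmem')
    have hsimp : wI I * ((wI I)⁻¹ * γ (wI I)) = γ (wI I) := by group
    rw [hsimp, hlen'] at hE
    have h0 : cs.length ((wI I)⁻¹ * γ (wI I)) = 0 := by omega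
    exact (inv_mul_eq_one.mp (cs.length_eq_zero_iff.mp h0)).symm
  set y := z⁻¹ * wI I * z with hy
  have hconjI : ∀ x ∈ Subgroup.closure I, z⁻¹ * x * z ∈ Subgroup.closure J := by
    apply ConjAux.conj_mem_closure
    intro t ht
    obtain ⟨γ, hγ, hγt⟩ := (horbI t).mp ht
    have hz1 : γ z = z := hzfix γ hγ
    have hz2 : γ z⁻¹ = z⁻¹ := by rw [map_inv, hz1]
    have hcomm : z⁻¹ * γ s * z = γ (z⁻¹ * s * z) := by
      rw [map_mul, map_mul, hz1, hz2]
    rw [← hγt, hcomm]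
    exact ConjAux.closure_stab γ (hJstab γ hγ) _ h
  have hymem : y ∈ Subgroup.closure J := hconjI _ hwIImem
  have hyfix : ∀ γ ∈ Γ, γ y = y := by
    intro γ hγ
    rw [hy, map_mul, map_mul, map_inv, hzfix γ hγ, hfixI γ hγ]
  have hwIne : wI I ≠ 1 := by
    intro h1
    have hls : cs.length s ≤ cs.length (wI I) := hwIImax s (Subgroup.subset_closure hs)
    obtain ⟨i, hi⟩ := hIsub hs
    rw [h1, cs.length_one, ← hi, cs.length_simple] at hls
    omega
  have hyne : y ≠ 1 := by
    intro h1
    apply hwIne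
    have h2 : wI I = z * y * z⁻¹ := by rw [hy]; group
    rw [h2, h1, mul_one, mul_inv_cancel]
  obtain ⟨ωy, hωymem, hωyred, hωyprod⟩ := ConjAux.exists_reduced_word_subset cs hymem hJsub
  have hωyne : ωy ≠ [] := by
    intro hnil
    apply hyne
    rw [← hωyprod, hnil, cs.wordProd_nil]
  have ht₁J : cs.simple (ωy.getLast hωyne) ∈ J := hωymem _ (List.getLast_mem hωyne)
  have hdrop : y * cs.simple (ωy.getLast hωyne) = cs.wordProd ωy.dropLast := by
    have h3 : ωy.dropLast ++ [ωy.getLast hωyne] = ωy := List.dropLast_append_getLast hωyne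
    have h4 := congrArg cs.wordProd h3
    rw [cs.wordProd_append, cs.wordProd_singleton] at h4
    rw [← hωyprod, ← h4, cs.simple_mul_simple_cancel_right]
  have hdesc₁ : cs.length (y * cs.simple (ωy.getLast hωyne)) < cs.length y := by
    rw [hdrop]
    have h4 := cs.length_wordProd_le ωy.dropLast
    have h5 : cs.length y = ωy.length := by rw [← hωyprod]; exact hωyred
    have h6 : ωy.dropLast.length = ωy.length - 1 := List.length_dropLast
    have h7 : 0 < ωy.length := List.length_pos_iff.mpr hωyne
    omega
  have descJ : ∀ t ∈ J, cs.length (y * t) < cs.length y := by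
    intro t ht
    obtain ⟨γ, hγ, rfl⟩ := (horbJ _ ht₁J t).mp ht
    have h8 : y * γ (cs.simple (ωy.getLast hωyne)) = γ (y * cs.simple (ωy.getLast hωyne)) := by
      rw [map_mul, hyfix γ hγ]
    rw [h8, hlen γ hγ]
    exact hdesc₁
  have hE := ConjAux.descent_all cs hJsub descJ (y⁻¹ * wI J)
    (mul_mem (inv_mem hymem) hwIJmem)
  have h9 : y * (y⁻¹ * wI J) = wI J := by group
  rw [h9] at hE
  have h10 : cs.length y ≤ cs.length (wI J) := hwIJmax y hymem
  have h11 : cs.length (y⁻¹ * wI J) = 0 := by omega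
  exact inv_mul_eq_one.mp (cs.length_eq_zero_iff.mp h11)
end

section
/- Let I_0 ⊆ S be such that W_{I_0} is finite and γ(I_0) = I_0 for all γ ∈ Γ. Then 𝒲 := {w ∈ X_{I_0} : w W_{I_0} = W_{I_0} w} is a subgroup of W, and γ(𝒲) = 𝒲 for all γ ∈ Γ. -/
open CoxeterSystem List


namespace CalWAux

open scoped Classical

variable {B W : Type*} [Group W] {M : CoxeterMatrix B} (cs : CoxeterSystem M W)

local prefix:100 "ℓ" => cs.length
local prefix:100 "π" => cs.wordProd

/-- The permutation-representation-like action used to define the inversion parity. -/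
noncomputable def sig (i : B) : Function.End (W × ZMod 2) :=
  fun p => (cs.simple i * p.1 * cs.simple i,
    p.2 + if p.1 = cs.simple i then 1 else 0)

lemma zmod2_add_self : ∀ a : ZMod 2, a + a = 0 := by decide

lemma zmod2_eq_of_add_eq_zero {a b : ZMod 2} (h : a + b = 0) : a = b := by
  revert h; revert a b; decide

lemma zmod2_ne_one {a : ZMod 2} (h : ¬ a = 1) : a = 0 := by
  revert h; revert a; decide

lemma zmod2_cases : ∀ a : ZMod 2, a = 0 ∨ a = 1 := by decide

lemma simple_conj_pow (i j : B) (k : ℕ) :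
    cs.simple j * (cs.simple i * cs.simple j) ^ k
      = ((cs.simple i * cs.simple j) ^ k)⁻¹ * cs.simple j := by
  induction k with
  | zero => simp
  | succ k ih =>
    have hbase : cs.simple j * (cs.simple i * cs.simple j)
        = (cs.simple i * cs.simple j)⁻¹ * cs.simple j := by
      rw [mul_inv_rev, cs.inv_simple, cs.inv_simple, mul_assoc]
    calc cs.simple j * (cs.simple i * cs.simple j) ^ (k+1)
        = (cs.simple j * (cs.simple i * cs.simple j)) * (cs.simple i * cs.simple j) ^ k := by
          rw [pow_succ', ← mul_assoc]
      _ = (cs.simple i * cs.simple j)⁻¹ * (cs.simple j * (cs.simple i * cs.simple j) ^ k) := by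
          rw [hbase, mul_assoc]
      _ = ((cs.simple i * cs.simple j) ^ (k+1))⁻¹ * cs.simple j := by
          rw [ih, ← mul_assoc, pow_succ, mul_inv_rev]
          simp [mul_inv_rev, cs.inv_simple, mul_assoc]

lemma conj_eq_iff {a x y : W} : a * x * a⁻¹ = y ↔ x = a⁻¹ * y * a := by
  constructor
  · rintro rfl; group
  · rintro rfl; group

lemma simple_conj_eq_iff (j : B) (v y : W) :
    cs.simple j * v * cs.simple j = y ↔ v = cs.simple j * y * cs.simple j := by
  constructor
  · rintro rfl
    simp [mul_assoc, cs.simple_mul_simple_cancel_left, cs.simple_mul_simple_self]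
  · rintro rfl
    simp [mul_assoc, cs.simple_mul_simple_cancel_left, cs.simple_mul_simple_self]

lemma sig_liftable : M.IsLiftable (sig cs) := by
  intro i j
  set p : W := cs.simple i * cs.simple j with hp
  have hpm : p ^ M i j = 1 := cs.simple_mul_simple_pow i j
  have hconj : ∀ k : ℕ, (p ^ k)⁻¹ * cs.simple j * p ^ k = cs.simple j * p ^ (2 * k) := by
    intro k
    have h1 := simple_conj_pow cs i j k
    rw [← hp] at h1
    rw [← h1, mul_assoc, ← pow_add, two_mul]
  have key : ∀ k : ℕ, ∀ x : W × ZMod 2,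
      ((sig cs i * sig cs j) ^ k) x
        = (p ^ k * x.1 * (p ^ k)⁻¹,
           x.2 + ∑ n ∈ Finset.range (2 * k), (if x.1 = cs.simple j * p ^ n then 1 else 0)) := by
    intro k
    induction k with
    | zero => intro x; simp; rfl
    | succ k ih =>
      intro x
      rw [pow_succ']
      have happ : ((sig cs i * sig cs j) * (sig cs i * sig cs j) ^ k) x
          = (sig cs i) ((sig cs j) (((sig cs i * sig cs j) ^ k) x)) := rfl
      rw [happ, ih]
      simp only [sig]
      have e1 : (cs.simple i * (cs.simple j * (p ^ k * x.1 * (p ^ k)⁻¹) * cs.simple j) *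
          cs.simple i) = p ^ (k+1) * x.1 * (p ^ (k+1))⁻¹ := by
        rw [pow_succ' p k, hp]
        rw [mul_inv_rev (cs.simple i * cs.simple j), mul_inv_rev, cs.inv_simple, cs.inv_simple]
        group
      have e2 : (p ^ k * x.1 * (p ^ k)⁻¹ = cs.simple j) ↔ (x.1 = cs.simple j * p ^ (2*k)) := by
        rw [conj_eq_iff, hconj]
      have e3 : (cs.simple j * (p ^ k * x.1 * (p ^ k)⁻¹) * cs.simple j = cs.simple i)
          ↔ (x.1 = cs.simple j * p ^ (2*k+1)) := by
        rw [simple_conj_eq_iff, conj_eq_iff]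
        have hAB : (p ^ k)⁻¹ * (cs.simple j * cs.simple i * cs.simple j) * p ^ k
            = cs.simple j * p ^ (2*k+1) := by
          have h2 : (p ^ k)⁻¹ * (cs.simple j * cs.simple i * cs.simple j) * p ^ k
              = ((p ^ k)⁻¹ * cs.simple j * p ^ k) * p := by
            rw [mul_assoc (cs.simple j) (cs.simple i) (cs.simple j), ← hp,
              ← mul_assoc ((p^k)⁻¹) (cs.simple j) p, mul_assoc ((p^k)⁻¹ * cs.simple j) p (p^k),
              ← pow_succ', pow_succ, ← mul_assoc]
          rw [h2, hconj, mul_assoc, ← pow_succ]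
        rw [hAB]
      rw [Prod.ext_iff]
      constructor
      · exact e1
      · show _ + _ + _ = _
        rw [if_congr e2 rfl rfl]
        simp only [e3]
        rw [show 2 * (k+1) = (2*k) + 1 + 1 by ring]
        rw [Finset.sum_range_succ, Finset.sum_range_succ]
        ring
  have : ((sig cs i * sig cs j) ^ M i j) = 1 := by
    funext x
    rw [key (M i j) x, hpm]
    have hsum : ∑ n ∈ Finset.range (2 * M i j),
        (if x.1 = cs.simple j * p ^ n then (1:ZMod 2) else 0) = 0 := by
      rw [two_mul, Finset.sum_range_add]
      have : ∀ n, (if x.1 = cs.simple j * p ^ (M i j + n) then (1:ZMod 2) else 0)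
          = (if x.1 = cs.simple j * p ^ n then (1:ZMod 2) else 0) := by
        intro n; rw [pow_add, hpm, one_mul]
      simp only [this]
      exact zmod2_add_self _
    rw [hsum, add_zero]
    show _ = x
    simp
  exact this

/-- The parity homomorphism. -/
noncomputable def eta : W →* Function.End (W × ZMod 2) :=
  cs.lift ⟨sig cs, sig_liftable cs⟩

/-- `nu cs w t` is `1` iff `t` is a right inversion of `w`. -/
noncomputable def nu (w t : W) : ZMod 2 := ((eta cs w) (t, 0)).2

lemma eta_simple (i : B) : eta cs (cs.simple i) = sig cs i :=
  cs.lift_apply_simple (sig_liftable cs) i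

lemma nu_one (t : W) : nu cs 1 t = 0 := by
  unfold nu; rw [map_one]; rfl

lemma eta_apply (w : W) : ∀ t e, eta cs w (t, e) = (w * t * w⁻¹, e + nu cs w t) := by
  induction w using cs.simple_induction_left with
  | one =>
    intro t e
    rw [map_one, nu_one cs t]
    show (t, e) = _
    simp
  | mul_simple_left w i ih =>
    have hsplit : ∀ (q : W × ZMod 2),
        eta cs (cs.simple i * w) q = sig cs i (eta cs w q) := by
      intro q; rw [map_mul, eta_simple]; rfl
    intro t e
    have hnu : nu cs (cs.simple i * w) t
        = nu cs w t + (if w * t * w⁻¹ = cs.simple i then 1 else 0) := by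
      unfold nu
      rw [hsplit, ih t 0]
      simp [sig]
    rw [hsplit, ih t e, hnu]
    show (cs.simple i * (w * t * w⁻¹) * cs.simple i, (e + nu cs w t) + _) = _
    refine Prod.ext ?_ ?_
    · show cs.simple i * (w * t * w⁻¹) * cs.simple i = (cs.simple i * w) * t * (cs.simple i * w)⁻¹
      rw [mul_inv_rev, cs.inv_simple]
      group
    · show (e + nu cs w t) + _ = e + (nu cs w t + _)
      rw [add_assoc]

lemma nu_mul (x y t : W) : nu cs (x * y) t = nu cs y t + nu cs x (y * t * y⁻¹) := by
  unfold nu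
  have h : eta cs (x * y) (t, 0) = (eta cs x) (eta cs y (t, 0)) := by rw [map_mul]; rfl
  rw [h, eta_apply cs y t 0, zero_add, eta_apply cs x (y * t * y⁻¹) (nu cs y t)]
  rfl

lemma nu_simple (i : B) (t : W) :
    nu cs (cs.simple i) t = if t = cs.simple i then 1 else 0 := by
  unfold nu
  rw [eta_simple]
  show (0 : ZMod 2) + _ = _
  rw [zero_add]

lemma nu_inv (w t : W) : nu cs w⁻¹ t = nu cs w (w⁻¹ * t * w) := by
  have h := nu_mul cs w w⁻¹ t
  rw [mul_inv_cancel, nu_one] at h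
  rw [inv_inv] at h
  exact zmod2_eq_of_add_eq_zero h.symm

lemma nu_refl_self {t : W} (ht : cs.IsReflection t) : nu cs t t = 1 := by
  obtain ⟨u, i, rfl⟩ := ht
  set t := u * cs.simple i * u⁻¹ with hts
  have h1 : nu cs t t = nu cs (cs.simple i * u⁻¹) t + nu cs u ((cs.simple i * u⁻¹) * t * (cs.simple i * u⁻¹)⁻¹) := by
    rw [← nu_mul cs u (cs.simple i * u⁻¹) t, ← mul_assoc, hts]
  have e1 : (cs.simple i * u⁻¹) * t * (cs.simple i * u⁻¹)⁻¹ = cs.simple i := by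
    rw [hts, mul_inv_rev, inv_inv, cs.inv_simple]
    group
    rw [cs.simple_mul_simple_self i, one_mul]
  have h2 := nu_mul cs (cs.simple i) u⁻¹ t
  simp only [inv_inv] at h2
  have e2 : u⁻¹ * t * u = cs.simple i := by rw [hts]; group
  rw [e2] at h2
  have h3 : nu cs u⁻¹ t = nu cs u (cs.simple i) := by rw [nu_inv, e2]
  rw [h1, e1, h2, h3, nu_simple]
  simp only [if_pos rfl]
  generalize nu cs u (cs.simple i) = a
  revert a; decide

lemma nu_wordProd (ω : List B) (t : W) :
    nu cs (π ω) t = ((cs.rightInvSeq ω).count t : ZMod 2) := by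
  induction ω with
  | nil =>
    rw [cs.wordProd_nil, nu_one]
    simp
  | cons i ω ih =>
    rw [cs.wordProd_cons, nu_mul, ih, rightInvSeq]
    rw [List.count_cons]
    have : ((π ω)⁻¹ * cs.simple i * π ω == t) = ((π ω) * t * (π ω)⁻¹ == cs.simple i) := by
      by_cases h : (π ω)⁻¹ * cs.simple i * π ω = t
      · have : (π ω) * t * (π ω)⁻¹ = cs.simple i := by rw [← h]; group
        simp [h, this]
      · have : ¬ ((π ω) * t * (π ω)⁻¹ = cs.simple i) := by
          intro hc
          apply h
          rw [← hc]; group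
        simp [h, this]
    rw [this, nu_simple]
    push_cast
    by_cases h : (π ω) * t * (π ω)⁻¹ = cs.simple i
    · have h' : t = (π ω)⁻¹ * cs.simple i * (π ω) := by rw [← h]; group
      simp [h, h']
    · have h' : ¬ (t = (π ω)⁻¹ * cs.simple i * (π ω)) := by
        intro hc; apply h; rw [hc]; group
      simp [h, h']

lemma isRightInversion_iff_nu {t : W} (ht : cs.IsReflection t) (w : W) :
    cs.IsRightInversion w t ↔ nu cs w t = 1 := by
  constructor
  · intro h
    by_contra hne
    have h0 : nu cs w t = 0 := zmod2_ne_one hne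
    have key : nu cs (w * t) t = 1 := by
      have e : t * t * t⁻¹ = t := by rw [ht.mul_self, one_mul, ht.inv]
      rw [nu_mul, e, nu_refl_self cs ht, h0, add_zero]
    obtain ⟨ω, hred, hπ⟩ := cs.exists_reduced_word' (w * t)
    have hmem : t ∈ cs.rightInvSeq ω := by
      by_contra hmem
      rw [hπ, nu_wordProd, List.count_eq_zero_of_not_mem hmem] at key
      simp at key
    have hinv : cs.IsRightInversion (w * t) t := hπ ▸ cs.isRightInversion_of_mem_rightInvSeq hred hmem
    have := hinv.2
    rw [mul_assoc, ht.mul_self, mul_one] at this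
    exact Nat.lt_asymm h.2 this
  · intro h
    obtain ⟨ω, hred, hπ⟩ := cs.exists_reduced_word' w
    have hmem : t ∈ cs.rightInvSeq ω := by
      by_contra hmem
      rw [hπ, nu_wordProd, List.count_eq_zero_of_not_mem hmem] at h
      simp at h
    exact hπ ▸ cs.isRightInversion_of_mem_rightInvSeq hred hmem

lemma not_isRightInversion_iff_nu {t : W} (ht : cs.IsReflection t) (w : W) :
    ℓ w < ℓ (w * t) ↔ nu cs w t = 0 := by
  have hne := ht.length_mul_left_ne w
  constructor
  · intro h
    rcases zmod2_cases (nu cs w t) with h0 | h1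
    · exact h0
    · exfalso
      have := ((isRightInversion_iff_nu cs ht w).mpr h1).2
      exact Nat.lt_asymm h this
  · intro h
    rcases Nat.lt_or_gt_of_ne hne with hlt | hgt
    · exfalso
      have := (isRightInversion_iff_nu cs ht w).mp ⟨ht, hlt⟩
      rw [h] at this
      exact one_ne_zero this.symm
    · exact hgt

lemma isLeftInversion_iff_nu {t : W} (ht : cs.IsReflection t) (w : W) :
    cs.IsLeftInversion w t ↔ nu cs w⁻¹ t = 1 := by
  rw [← cs.isRightInversion_inv_iff, isRightInversion_iff_nu cs ht]

lemma not_isLeftInversion_iff_nu {t : W} (ht : cs.IsReflection t) (w : W) :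
    ℓ w < ℓ (t * w) ↔ nu cs w⁻¹ t = 0 := by
  have : ℓ (t * w) = ℓ (w⁻¹ * t) := by
    rw [← cs.length_inv (w⁻¹ * t)]
    simp [ht.inv]
  rw [this, ← cs.length_inv w]
  exact not_isRightInversion_iff_nu cs ht w⁻¹

lemma left_exchange {i : B} {ω : List B} (h : ℓ (cs.simple i * π ω) < ℓ (π ω)) :
    ∃ j, j < ω.length ∧ cs.simple i * π ω = π (ω.eraseIdx j) := by
  have hrefl := cs.isReflection_simple i
  have h1 : nu cs (π ω)⁻¹ (cs.simple i) = 1 :=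
    (isLeftInversion_iff_nu cs hrefl (π ω)).mp ⟨hrefl, h⟩
  rw [← cs.wordProd_reverse, nu_wordProd] at h1
  have hmem : cs.simple i ∈ cs.rightInvSeq ω.reverse := by
    by_contra hmem
    rw [List.count_eq_zero_of_not_mem hmem] at h1
    simp at h1
  rw [cs.rightInvSeq_reverse] at hmem
  rw [List.mem_reverse] at hmem
  obtain ⟨j, hj, hget⟩ := List.mem_iff_getElem.mp hmem
  rw [cs.length_leftInvSeq] at hj
  refine ⟨j, hj, ?_⟩
  have := cs.getD_leftInvSeq_mul_wordProd ω j
  rw [← List.getD_eq_getElem _ 1 (by rw [cs.length_leftInvSeq]; exact hj)] at hget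
  rw [hget] at this
  exact this

lemma exists_reduced_subword :
    ∀ n (ω : List B), ω.length ≤ n →
      ∃ ω' : List B, π ω' = π ω ∧ cs.IsReduced ω' ∧ ∀ b ∈ ω', b ∈ ω := by
  intro n
  induction n with
  | zero =>
    intro ω hω
    rw [Nat.le_zero, List.length_eq_zero_iff] at hω
    subst hω
    exact ⟨[], rfl, by simp [CoxeterSystem.IsReduced], by simp⟩
  | succ n ih =>
    intro ω hω
    match ω with
    | [] => exact ⟨[], rfl, by simp [CoxeterSystem.IsReduced], by simp⟩
    | i :: ω'' =>
      have h2 : ω''.length ≤ n := by simpa using hω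
      obtain ⟨ω₂, hπ₂, hred₂, hsub₂⟩ := ih ω'' h2
      rcases cs.length_simple_mul (π ω₂) i with hup | hdown
      · refine ⟨i :: ω₂, ?_, ?_, ?_⟩
        · rw [cs.wordProd_cons, cs.wordProd_cons, hπ₂]
        · show ℓ (π (i :: ω₂)) = _
          rw [cs.wordProd_cons, hup, hred₂]
          simp
        · intro b hb
          rcases List.mem_cons.mp hb with rfl | hb
          · exact List.mem_cons_self
          · exact List.mem_cons_of_mem _ (hsub₂ b hb)
      · have hlt : ℓ (cs.simple i * π ω₂) < ℓ (π ω₂) := by omega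
        obtain ⟨j, hj, hex⟩ := left_exchange cs hlt
        have hlen : (ω₂.eraseIdx j).length ≤ n := by
          have := List.length_eraseIdx_add_one hj
          have hw2 : ω₂.length = ℓ (π ω₂) := hred₂.symm
          have : (ω₂.eraseIdx j).length + 1 = ω₂.length := this
          have hle : ℓ (π ω₂) ≤ ω''.length := hπ₂ ▸ cs.length_wordProd_le ω''
          omega
        obtain ⟨ω₃, hπ₃, hred₃, hsub₃⟩ := ih (ω₂.eraseIdx j) hlen
        refine ⟨ω₃, ?_, hred₃, ?_⟩
        · rw [hπ₃, ← hex, cs.wordProd_cons, hπ₂]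
        · intro b hb
          exact List.mem_cons_of_mem _ (hsub₂ b (List.eraseIdx_subset (hsub₃ b hb)))

variable (I₀ : Set W)

lemma wordProd_mem_closure {ω : List B} (h : ∀ b ∈ ω, cs.simple b ∈ I₀) :
    π ω ∈ Subgroup.closure I₀ := by
  induction ω with
  | nil => rw [cs.wordProd_nil]; exact one_mem _
  | cons i ω ih =>
    rw [cs.wordProd_cons]
    exact mul_mem (Subgroup.subset_closure (h i (List.mem_cons_self)))
      (ih (fun b hb => h b (List.mem_cons_of_mem _ hb)))

lemma exists_I_word (hI₀ : I₀ ⊆ Set.range cs.simple) {u : W}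
    (hu : u ∈ Subgroup.closure I₀) :
    ∃ ω : List B, cs.IsReduced ω ∧ π ω = u ∧ ∀ b ∈ ω, cs.simple b ∈ I₀ := by
  have base : ∃ ω : List B, π ω = u ∧ ∀ b ∈ ω, cs.simple b ∈ I₀ := by
    induction hu using Subgroup.closure_induction with
    | mem x hx =>
      obtain ⟨b, rfl⟩ := hI₀ hx
      exact ⟨[b], by simp, by simpa using hx⟩
    | one => exact ⟨[], by simp, by simp⟩
    | mul x y hx hy ihx ihy =>
      obtain ⟨ω₁, h1, h1'⟩ := ihx
      obtain ⟨ω₂, h2, h2'⟩ := ihy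
      refine ⟨ω₁ ++ ω₂, ?_, ?_⟩
      · rw [cs.wordProd_append, h1, h2]
      · intro b hb
        rcases List.mem_append.mp hb with h | h
        · exact h1' b h
        · exact h2' b h
    | inv x hx ihx =>
      obtain ⟨ω₁, h1, h1'⟩ := ihx
      refine ⟨ω₁.reverse, ?_, ?_⟩
      · rw [cs.wordProd_reverse, h1]
      · intro b hb
        exact h1' b (List.mem_reverse.mp hb)
  obtain ⟨ω, hπ, hsub⟩ := base
  obtain ⟨ω', hπ', hred', hsub'⟩ := exists_reduced_subword cs ω.length ω le_rfl
  exact ⟨ω', hred', hπ' ▸ hπ ▸ rfl, fun b hb => hsub b (hsub' b hb)⟩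

lemma mem_I_of_length_one (hI₀ : I₀ ⊆ Set.range cs.simple) {u : W}
    (hu : u ∈ Subgroup.closure I₀) (h1 : ℓ u = 1) : u ∈ I₀ := by
  obtain ⟨ω, hred, hπ, hsub⟩ := exists_I_word cs I₀ hI₀ hu
  have hlen : ω.length = 1 := by rw [← hred, hπ, h1]
  obtain ⟨b, rfl⟩ := List.length_eq_one_iff.mp hlen
  have : π [b] = cs.simple b := cs.wordProd_singleton b
  rw [← hπ, this]
  exact hsub b (by simp)

/-- D1: `w` is a minimal right coset representative. -/
def D1 (w : W) : Prop := ∀ t ∈ I₀, ℓ w < ℓ (t * w)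

lemma coset_decomp (hI₀ : I₀ ⊆ Set.range cs.simple) :
    ∀ n (w : W), ℓ w ≤ n → ∃ u x : W, u ∈ Subgroup.closure I₀ ∧ D1 cs I₀ x ∧
      w = u * x ∧ ℓ w = ℓ u + ℓ x := by
  intro n
  induction n with
  | zero =>
    intro w hw
    refine ⟨1, w, one_mem _, ?_, by simp, by simp⟩
    intro t ht
    obtain ⟨b, rfl⟩ := hI₀ ht
    rcases cs.length_simple_mul w b with h | h <;> omega
  | succ n ih =>
    intro w hw
    by_cases hD : D1 cs I₀ w
    · exact ⟨1, w, one_mem _, hD, by simp, by simp⟩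
    · simp only [D1, not_forall] at hD
      obtain ⟨t, ht, hle⟩ := hD
      obtain ⟨b, rfl⟩ := hI₀ ht
      have hne := cs.length_simple_mul_ne w b
      have hlt : ℓ (cs.simple b * w) < ℓ w := by omega
      have hdrop : ℓ (cs.simple b * w) + 1 = ℓ w := by
        rcases cs.length_simple_mul w b with h | h <;> omega
      obtain ⟨u', x, hu', hx, heq, hadd⟩ := ih (cs.simple b * w) (by omega)
      refine ⟨cs.simple b * u', x, mul_mem (Subgroup.subset_closure ht) hu', hx, ?_, ?_⟩
      · rw [mul_assoc, ← heq, ← mul_assoc, cs.simple_mul_simple_self, one_mul]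
      · have hw_eq : w = cs.simple b * u' * x := by
          rw [mul_assoc, ← heq, ← mul_assoc, cs.simple_mul_simple_self, one_mul]
        have h1 : ℓ (cs.simple b * u') ≤ ℓ u' + 1 := by
          have := cs.length_mul_le (cs.simple b) u'
          rw [cs.length_simple] at this
          omega
        have h2 : ℓ w ≤ ℓ (cs.simple b * u') + ℓ x := by
          rw [hw_eq]; exact cs.length_mul_le _ _
        omega

lemma additivity (hI₀ : I₀ ⊆ Set.range cs.simple) :
    ∀ n (w : W), ℓ w ≤ n → D1 cs I₀ w → ∀ (m : ℕ) (u : W), u ∈ Subgroup.closure I₀ →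
      ℓ u ≤ m → ℓ (u * w) = ℓ u + ℓ w := by
  intro n
  induction n with
  | zero =>
    intro w hw _ m u _ _
    have : w = 1 := cs.length_eq_zero_iff.mp (by omega)
    subst this
    simp
  | succ n ihn =>
    intro w hw hD m
    induction m with
    | zero =>
      intro u _ hu0
      have : u = 1 := cs.length_eq_zero_iff.mp (by omega)
      subst this
      simp
    | succ m ihm =>
      intro u hu hum
      by_cases h1 : ℓ u = 0
      · have : u = 1 := cs.length_eq_zero_iff.mp h1
        subst this
        simp
      obtain ⟨ωu, hredu, hπu, hsubu⟩ := exists_I_word cs I₀ hI₀ hu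
      match ωu, hredu, hπu, hsubu with
      | [], _, hπu, _ =>
        exfalso; apply h1
        rw [← hπu, cs.wordProd_nil, cs.length_one]
      | b :: ω₂, hredu, hπu, hsubu =>
      have hsb : cs.simple b ∈ I₀ := hsubu b (List.mem_cons_self)
      set u₂ := π ω₂ with hu₂def
      have hu₂mem : u₂ ∈ Subgroup.closure I₀ :=
        wordProd_mem_closure cs I₀ (fun c hc => hsubu c (List.mem_cons_of_mem _ hc))
      have hred₂ : cs.IsReduced ω₂ := by
        have := hredu.drop 1
        simpa using this
      have hlenu : ℓ u = ω₂.length + 1 := by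
        rw [← hπu, hredu]
        simp
      have hlenu₂ : ℓ u₂ = ω₂.length := hred₂
      have hueq : u = cs.simple b * u₂ := by rw [← hπu, cs.wordProd_cons]
      have hadd₂ : ℓ (u₂ * w) = ℓ u₂ + ℓ w := ihm u₂ hu₂mem (by omega)
      rcases cs.length_simple_mul (u₂ * w) b with hup | hdown
      · have hgoal : ℓ (cs.simple b * u₂) = ℓ u := by rw [← hueq]
        rw [hueq, mul_assoc, hup, hadd₂]
        omega
      · exfalso
        have hlt : ℓ (cs.simple b * (u₂ * w)) < ℓ (u₂ * w) := by omega
        obtain ⟨ωw, hredw, hπw⟩ := cs.exists_reduced_word' w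
        have hπcat : π (ω₂ ++ ωw) = u₂ * w := by
          rw [cs.wordProd_append, ← hπw]
        have hlt' : ℓ (cs.simple b * π (ω₂ ++ ωw)) < ℓ (π (ω₂ ++ ωw)) := by
          rw [hπcat]; exact hlt
        obtain ⟨j, hj, hex⟩ := left_exchange cs hlt'
        rw [hπcat] at hex
        rw [List.length_append] at hj
        by_cases hcase : j < ω₂.length
        · rw [List.eraseIdx_append_of_lt_length hcase ωw, cs.wordProd_append, ← hπw] at hex
          have hcanc : cs.simple b * u₂ = π (ω₂.eraseIdx j) := by
            have : (cs.simple b * u₂) * w = π (ω₂.eraseIdx j) * w := by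
              rw [mul_assoc]; exact hex
            exact mul_right_cancel this
          have hlen1 : ℓ (cs.simple b * u₂) ≤ (ω₂.eraseIdx j).length := by
            rw [hcanc]; exact cs.length_wordProd_le _
          have hlen2 : (ω₂.eraseIdx j).length + 1 = ω₂.length :=
            List.length_eraseIdx_add_one hcase
          rw [← hueq] at hlen1
          omega
        · push_neg at hcase
          rw [List.eraseIdx_append_of_length_le hcase ωw, cs.wordProd_append] at hex
          set x₀ := π (ωw.eraseIdx (j - ω₂.length)) with hx₀def
          have hx₀lt : ℓ x₀ < ℓ w := by
            have hjw : j - ω₂.length < ωw.length := by omega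
            have h3 : (ωw.eraseIdx (j - ω₂.length)).length + 1 = ωw.length :=
              List.length_eraseIdx_add_one hjw
            have h4 : ℓ x₀ ≤ (ωw.eraseIdx (j - ω₂.length)).length :=
              cs.length_wordProd_le _
            have h5 : ℓ w = ωw.length := by rw [hπw, hredw]
            omega
          have hweq : w = (u₂⁻¹ * cs.simple b * u₂) * x₀ := by
            have h6 : u₂ * w = cs.simple b * (u₂ * x₀) := by
              rw [← hex, ← mul_assoc, ← mul_assoc, cs.simple_mul_simple_self, one_mul]
            calc w = u₂⁻¹ * (u₂ * w) := by group
              _ = u₂⁻¹ * (cs.simple b * (u₂ * x₀)) := by rw [h6]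
              _ = (u₂⁻¹ * cs.simple b * u₂) * x₀ := by group
          have hrmem : u₂⁻¹ * cs.simple b * u₂ ∈ Subgroup.closure I₀ :=
            mul_mem (mul_mem (inv_mem hu₂mem) (Subgroup.subset_closure hsb)) hu₂mem
          obtain ⟨u₃, x, hu₃, hDx, hxeq, hxadd⟩ :=
            coset_decomp cs I₀ hI₀ (ℓ x₀) x₀ le_rfl
          set v := (u₂⁻¹ * cs.simple b * u₂) * u₃ with hvdef
          have hvmem : v ∈ Subgroup.closure I₀ := mul_mem hrmem hu₃
          have hweq2 : w = v * x := by
            rw [hweq, hxeq, hvdef]; group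
          have hxlt : ℓ x < ℓ w := by omega
          have houter := ihn x (by omega) hDx
          by_cases hv1 : v = 1
          · rw [hv1, one_mul] at hweq2
            subst hweq2
            omega
          · obtain ⟨ωv, hredv, hπv, hsubv⟩ := exists_I_word cs I₀ hI₀ hvmem
            match ωv, hredv, hπv, hsubv with
            | [], _, hπv, _ =>
              exact hv1 (by rw [← hπv, cs.wordProd_nil])
            | c :: ω₄, hredv, hπv, hsubv =>
            have hsc : cs.simple c ∈ I₀ := hsubv c (List.mem_cons_self)
            set v₄ := π ω₄ with hv₄def
            have hv₄mem : v₄ ∈ Subgroup.closure I₀ :=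
              wordProd_mem_closure cs I₀ (fun d hd => hsubv d (List.mem_cons_of_mem _ hd))
            have hred₄ : cs.IsReduced ω₄ := by
              have := hredv.drop 1
              simpa using this
            have hlenv : ℓ v = ω₄.length + 1 := by
              rw [← hπv, hredv]; simp
            have hlenv₄ : ℓ v₄ = ω₄.length := hred₄
            have hveq : v = cs.simple c * v₄ := by rw [← hπv, cs.wordProd_cons]
            have hlw : ℓ w = ℓ v + ℓ x := by
              rw [hweq2]
              exact houter (ℓ v) v hvmem le_rfl
            have hscw : ℓ (cs.simple c * w) = ℓ v₄ + ℓ x := by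
              have : cs.simple c * w = v₄ * x := by
                rw [hweq2, hveq, ← mul_assoc, ← mul_assoc, cs.simple_mul_simple_self, one_mul]
              rw [this]
              exact houter (ℓ v₄) v₄ hv₄mem le_rfl
            have hcontra := hD (cs.simple c) hsc
            omega

/-- The normalizer condition. -/
def NormCond (w : W) : Prop :=
  ∀ p : W, p ∈ Subgroup.closure I₀ ↔ w * p * w⁻¹ ∈ Subgroup.closure I₀

lemma add' (hI₀ : I₀ ⊆ Set.range cs.simple) {w u : W} (hD : D1 cs I₀ w)
    (hu : u ∈ Subgroup.closure I₀) : ℓ (u * w) = ℓ u + ℓ w :=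
  additivity cs I₀ hI₀ (ℓ w) w le_rfl hD (ℓ u) u hu le_rfl

lemma length_simple_of_mem {t : W} (hI₀ : I₀ ⊆ Set.range cs.simple) (ht : t ∈ I₀) :
    ℓ t = 1 := by
  obtain ⟨b, rfl⟩ := hI₀ ht
  exact cs.length_simple b

lemma D1_inv (hI₀ : I₀ ⊆ Set.range cs.simple) {w : W} (hD : D1 cs I₀ w)
    (hN : NormCond I₀ w) : D1 cs I₀ w⁻¹ := by
  intro t ht
  set q := w * t * w⁻¹ with hq
  have hqmem : q ∈ Subgroup.closure I₀ := (hN t).mp (Subgroup.subset_closure ht)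
  have hq1 : q ≠ 1 := by
    intro h
    have ht1 : t = 1 := by
      have e : w⁻¹ * q * w = t := by rw [hq]; group
      rw [← e, h]; group
    have hlt := length_simple_of_mem cs I₀ hI₀ ht
    rw [ht1, cs.length_one] at hlt
    exact absurd hlt (by omega)
  have hlq : 1 ≤ ℓ q := by
    by_contra h
    exact hq1 (cs.length_eq_zero_iff.mp (by omega))
  have hadd : ℓ (q * w) = ℓ q + ℓ w := add' cs I₀ hI₀ hD hqmem
  have hqw : q * w = w * t := by rw [hq]; group
  have htinv : t⁻¹ = t := by
    obtain ⟨b, rfl⟩ := hI₀ ht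
    exact cs.inv_simple b
  have h2 : ℓ (t * w⁻¹) = ℓ (w * t) := by
    rw [← cs.length_inv (t * w⁻¹), mul_inv_rev, htinv, inv_inv]
  rw [h2, ← hqw, hadd, cs.length_inv w]
  omega

lemma conj_simple_mem (hI₀ : I₀ ⊆ Set.range cs.simple) {w t : W} (hD : D1 cs I₀ w)
    (hN : NormCond I₀ w) (ht : t ∈ I₀) : w⁻¹ * t * w ∈ I₀ := by
  set r := w⁻¹ * t * w with hr
  have hrmem : r ∈ Subgroup.closure I₀ := by
    apply (hN r).mpr
    have : w * r * w⁻¹ = t := by rw [hr]; group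
    rw [this]
    exact Subgroup.subset_closure ht
  have htinv : t⁻¹ = t := by
    obtain ⟨b, rfl⟩ := hI₀ ht
    exact cs.inv_simple b
  have hrinv : r⁻¹ = r := by rw [hr, mul_inv_rev, mul_inv_rev, htinv, inv_inv]; group
  have hwr : w * r = t * w := by rw [hr]; group
  have h1 : ℓ (t * w) = ℓ w + 1 := by
    have hlow := hD t ht
    have hup : ℓ (t * w) ≤ ℓ t + ℓ w := cs.length_mul_le t w
    rw [length_simple_of_mem cs I₀ hI₀ ht] at hup
    omega
  have h2 : ℓ (w * r) = ℓ (r * w⁻¹) := by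
    rw [← cs.length_inv (r * w⁻¹), mul_inv_rev, hrinv, inv_inv]
  have h3 : ℓ (r * w⁻¹) = ℓ r + ℓ w⁻¹ :=
    add' cs I₀ hI₀ (D1_inv cs I₀ hI₀ hD hN) hrmem
  have h4 : ℓ r = 1 := by
    have := cs.length_inv w
    rw [hwr] at h2
    omega
  exact mem_I_of_length_one cs I₀ hI₀ hrmem h4

lemma D1_mul (hI₀ : I₀ ⊆ Set.range cs.simple) {w w' : W} (hD : D1 cs I₀ w)
    (hN : NormCond I₀ w) (hD' : D1 cs I₀ w') : D1 cs I₀ (w * w') := by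
  intro t ht
  obtain ⟨b, hb⟩ := hI₀ ht
  have hrefl : cs.IsReflection t := by rw [← hb]; exact cs.isReflection_simple b
  apply (not_isLeftInversion_iff_nu cs hrefl (w * w')).mpr
  have hsplit : nu cs (w * w')⁻¹ t = nu cs w⁻¹ t + nu cs w'⁻¹ (w⁻¹ * t * w) := by
    rw [mul_inv_rev]
    have := nu_mul cs w'⁻¹ w⁻¹ t
    rw [inv_inv] at this
    exact this
  rw [hsplit]
  have hz1 : nu cs w⁻¹ t = 0 :=
    (not_isLeftInversion_iff_nu cs hrefl w).mp (hD t ht)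
  have hmem : w⁻¹ * t * w ∈ I₀ := conj_simple_mem cs I₀ hI₀ hD hN ht
  have hrefl2 : cs.IsReflection (w⁻¹ * t * w) := by
    have := hrefl.conj w⁻¹
    rwa [inv_inv] at this
  have hz2 : nu cs w'⁻¹ (w⁻¹ * t * w) = 0 :=
    (not_isLeftInversion_iff_nu cs hrefl2 w').mp (hD' _ hmem)
  rw [hz1, hz2, add_zero]

lemma image_eq_iff (P : Subgroup W) (w : W) :
    ((w * ·) '' (P : Set W) = (· * w) '' (P : Set W))
      ↔ ∀ p : W, p ∈ P ↔ w * p * w⁻¹ ∈ P := by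
  constructor
  · intro h p
    constructor
    · intro hp
      have h1 : w * p ∈ (w * ·) '' (P : Set W) := ⟨p, hp, rfl⟩
      rw [h] at h1
      obtain ⟨q, hq, hqe⟩ := h1
      have : w * p * w⁻¹ = q := by
        simp only at hqe
        rw [← hqe]; group
      rw [this]; exact hq
    · intro hp
      have h1 : (w * p * w⁻¹) * w ∈ (· * w) '' (P : Set W) := ⟨_, hp, rfl⟩
      rw [← h] at h1
      obtain ⟨q, hq, hqe⟩ := h1
      simp only at hqe
      have : q = p := by
        have h2 : w * q = w * p := by rw [hqe]; group
        exact mul_left_cancel h2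
      rw [← this]; exact hq
  · intro h
    ext y
    simp only [Set.mem_image]
    constructor
    · rintro ⟨p, hp, rfl⟩
      exact ⟨w * p * w⁻¹, (h p).mp hp, by group⟩
    · rintro ⟨q, hq, rfl⟩
      refine ⟨w⁻¹ * q * w, (h _).mpr ?_, by group⟩
      have : w * (w⁻¹ * q * w) * w⁻¹ = q := by group
      rw [this]; exact hq

lemma length_map_eq {γ : MulAut W}
    (hγ : ∀ v ∈ Set.range cs.simple, γ v ∈ Set.range cs.simple)
    (hγ' : ∀ v ∈ Set.range cs.simple, γ⁻¹ v ∈ Set.range cs.simple) (w : W) :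
    ℓ (γ w) = ℓ w := by
  have key : ∀ (δ : MulAut W), (∀ v ∈ Set.range cs.simple, δ v ∈ Set.range cs.simple) →
      ∀ v : W, ℓ (δ v) ≤ ℓ v := by
    intro δ hδ v
    obtain ⟨ω, hred, rfl⟩ := cs.exists_reduced_word' v
    have : ∀ (ω : List B), ∃ ω' : List B, ω'.length = ω.length ∧ π ω' = δ (π ω) := by
      intro ω
      induction ω with
      | nil => exact ⟨[], rfl, by simp⟩
      | cons i ω ih =>
        obtain ⟨c, hc⟩ := hδ (cs.simple i) ⟨i, rfl⟩
        obtain ⟨ω', hl, hp⟩ := ih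
        exact ⟨c :: ω', by simp [hl], by rw [cs.wordProd_cons, cs.wordProd_cons, map_mul, hp, hc]⟩
    obtain ⟨ω', hl, hp⟩ := this ω
    calc ℓ (δ (π ω)) = ℓ (π ω') := by rw [hp]
      _ ≤ ω'.length := cs.length_wordProd_le ω'
      _ = ω.length := hl
      _ = ℓ (π ω) := hred.symm
  have h1 := key γ hγ w
  have h2 := key γ⁻¹ hγ' (γ w)
  have : γ⁻¹ (γ w) = w := by simp
  rw [this] at h2
  omega

end CalWAux


/-- The set `𝒲 = {w ∈ X_{I₀} : w W_{I₀} = W_{I₀} w}`, where `X_{I₀}` is the set of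
distinguished right coset representatives of `W_{I₀}` in `W`. -/
def calW {B W : Type*} [Group W] {M : CoxeterMatrix B} (cs : CoxeterSystem M W)
    (I₀ : Set W) : Set W :=
  {w : W | (∀ s ∈ I₀, cs.length w < cs.length (s * w)) ∧
    (w * ·) '' (Subgroup.closure I₀ : Set W) = (· * w) '' (Subgroup.closure I₀ : Set W)}

/-- `J` is a `Γ`-orbit on `S \ I₀` such that `W_{I₀ ∪ J}` is finite. -/
def IsScalOrbit {B W : Type*} [Group W] {M : CoxeterMatrix B} (cs : CoxeterSystem M W)
    (Γ : Subgroup (MulAut W)) (I₀ : Set W) (J : Set W) : Prop :=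
  (∃ s ∈ Set.range cs.simple \ I₀, J = {t | ∃ γ ∈ Γ, γ s = t}) ∧
    Finite ↥(Subgroup.closure (I₀ ∪ J))

/-- `𝒲` is a subgroup of `W`, and `γ(𝒲) = 𝒲` for all `γ ∈ Γ`. -/
theorem calW_subgroup_and_stable {B W : Type*} [Finite B] [Group W] {M : CoxeterMatrix B}
    (cs : CoxeterSystem M W) (Γ : Subgroup (MulAut W))
    (hΓ : ∀ γ ∈ Γ, ⇑γ '' Set.range cs.simple = Set.range cs.simple)
    (I₀ : Set W) (hI₀ : I₀ ⊆ Set.range cs.simple)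
    (hfin : Finite ↥(Subgroup.closure I₀))
    (hstab : ∀ γ ∈ Γ, ⇑γ '' I₀ = I₀) :
    (∃ H : Subgroup W, (H : Set W) = calW cs I₀) ∧
      ∀ γ ∈ Γ, ⇑γ '' calW cs I₀ = calW cs I₀ := by
  classical
  have hset : ∀ w : W, w ∈ calW cs I₀ ↔
      CalWAux.D1 cs I₀ w ∧ CalWAux.NormCond I₀ w := by
    intro w
    exact and_congr Iff.rfl (CalWAux.image_eq_iff (Subgroup.closure I₀) w)
  constructor
  · refine ⟨{ carrier := calW cs I₀,
              one_mem' := ?one, mul_mem' := ?mul, inv_mem' := ?inv }, rfl⟩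
    case one =>
      refine (hset 1).mpr ⟨?_, ?_⟩
      · intro t ht
        obtain ⟨b, rfl⟩ := hI₀ ht
        rw [mul_one, cs.length_one, cs.length_simple]
        omega
      · intro p; simp
    case mul =>
      intro a b ha hb
      rw [hset] at ha hb
      obtain ⟨hDa, hNa⟩ := ha
      obtain ⟨hDb, hNb⟩ := hb
      refine (hset _).mpr ⟨CalWAux.D1_mul cs I₀ hI₀ hDa hNa hDb, ?_⟩
      intro p
      rw [hNb p, hNa (b * p * b⁻¹)]
      have e : a * (b * p * b⁻¹) * a⁻¹ = (a * b) * p * (a * b)⁻¹ := by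
        rw [mul_inv_rev]; group
      rw [e]
    case inv =>
      intro a ha
      rw [hset] at ha
      obtain ⟨hDa, hNa⟩ := ha
      refine (hset _).mpr ⟨CalWAux.D1_inv cs I₀ hI₀ hDa hNa, ?_⟩
      intro p
      have e : a * (a⁻¹ * p * a) * a⁻¹ = p := by group
      have h := hNa (a⁻¹ * p * a)
      rw [e] at h
      rw [inv_inv]
      exact h.symm
  · have hrange : ∀ δ : MulAut W, ⇑δ '' Set.range cs.simple = Set.range cs.simple →
        ∀ v ∈ Set.range cs.simple, δ v ∈ Set.range cs.simple := by
      intro δ hδ v hv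
      rw [← hδ]; exact ⟨v, hv, rfl⟩
    have hlen : ∀ δ : MulAut W, δ ∈ Γ → ∀ v, cs.length (δ v) = cs.length v := by
      intro δ hδ v
      exact CalWAux.length_map_eq cs (hrange δ (hΓ δ hδ))
        (hrange δ⁻¹ (hΓ δ⁻¹ (inv_mem hδ))) v
    have hPmemfwd : ∀ δ : MulAut W, δ ∈ Γ → ∀ q : W,
        q ∈ Subgroup.closure I₀ → δ q ∈ Subgroup.closure I₀ := by
      intro δ hδ q hq
      have h1 : Subgroup.closure I₀ = Subgroup.closure (⇑δ.toMonoidHom '' I₀) := by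
        rw [MulEquiv.coe_toMonoidHom, hstab δ hδ]
      rw [h1, ← MonoidHom.map_closure]
      exact Subgroup.mem_map.mpr ⟨q, hq, rfl⟩
    have hPmem : ∀ δ : MulAut W, δ ∈ Γ → ∀ q : W,
        q ∈ Subgroup.closure I₀ ↔ δ q ∈ Subgroup.closure I₀ := by
      intro δ hδ q
      constructor
      · exact hPmemfwd δ hδ q
      · intro hq
        have := hPmemfwd δ⁻¹ (inv_mem hδ) (δ q) hq
        simpa using this
    have hstep : ∀ δ : MulAut W, δ ∈ Γ → ∀ w ∈ calW cs I₀, δ w ∈ calW cs I₀ := by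
      intro δ hδ w hw
      rw [hset] at hw
      obtain ⟨hDw, hNw⟩ := hw
      refine (hset _).mpr ⟨?_, ?_⟩
      · intro t ht
        rw [← hstab δ hδ] at ht
        obtain ⟨t₀, ht₀, rfl⟩ := ht
        rw [← map_mul, hlen δ hδ, hlen δ hδ]
        exact hDw t₀ ht₀
      · intro p
        have e : δ w * p * (δ w)⁻¹ = δ (w * δ⁻¹ p * w⁻¹) := by
          rw [map_mul, map_mul, map_inv]
          simp
        rw [e, ← hPmem δ hδ, ← hNw (δ⁻¹ p)]
        constructor
        · intro hp
          have := hPmemfwd δ⁻¹ (inv_mem hδ) p hp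
          simpa using this
        · intro hp
          have := hPmemfwd δ hδ _ hp
          simpa using this
    intro γ hγmem
    apply Set.eq_of_subset_of_subset
    · rintro y ⟨w, hw, rfl⟩
      exact hstep γ hγmem w hw
    · intro w hw
      refine ⟨γ⁻¹ w, hstep γ⁻¹ (inv_mem hγmem) w hw, ?_⟩
      simp
end

section
/- Fix I_0 ⊆ S with W_{I_0} finite and γ(I_0) = I_0 for all γ ∈ Γ. Let 𝒮 be the set of Γ-orbits J on S ∖ I_0 such that W_{I_0 ∪ J} is finite, and assume w_{I_0 ∪ J} ∈ N_W(W_{I_0}) for all J ∈ 𝒮. Then for each J ∈ 𝒮, the element s_J := w_{I_0 ∪ J} w_{I_0} satisfies s_J = w_{I_0} w_{I_0 ∪ J}, lies in 𝒲^Γ (the Γ-fixed points of 𝒲 := {w ∈ X_{I_0} : w W_{I_0} = W_{I_0} w}), and satisfies s_J² = 1. -/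
open CoxeterSystem

open CoxeterSystem List

namespace StrongExch

variable {B W : Type*} [Group W] [DecidableEq W] {M : CoxeterMatrix B}
  (cs : CoxeterSystem M W)

local prefix:100 "s" => cs.simple
local prefix:100 "π" => cs.wordProd
local prefix:100 "ℓ" => cs.length
local prefix:100 "ris" => cs.rightInvSeq

lemma rightInvSeq_cons (i : B) (ω : List B) :
    ris (i :: ω) = ((π ω)⁻¹ * (s i) * (π ω)) :: ris ω := rfl

/-- The basic permutation of `W × ZMod 2`. -/
def sigma (i : B) : Equiv.Perm (W × ZMod 2) :=
  Function.Involutive.toPerm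
    (fun p => (s i * p.1 * s i, p.2 + if p.1 = s i then 1 else 0))
    (by
      rintro ⟨w, ε⟩
      have hfix : s i * (s i * w * s i) * s i = w := by
        calc s i * (s i * w * s i) * s i
            = (s i * s i) * w * (s i * s i) := by group
          _ = w := by rw [cs.simple_mul_simple_self]; group
      have h : (s i * w * s i = s i) ↔ (w = s i) := by
        constructor
        · intro h
          have h2 := congrArg (fun x => s i * x * s i) h
          rw [hfix] at h2
          rw [h2, cs.simple_mul_simple_self, one_mul]
        · intro h; rw [h, cs.simple_mul_simple_self, one_mul]
      simp only [Prod.mk.injEq]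
      refine ⟨hfix, ?_⟩
      rw [if_congr h rfl rfl, add_assoc]
      have : ∀ x : ZMod 2, x + x = 0 := by decide
      by_cases hw : w = s i <;> simp [hw, this])

lemma sigma_apply (i : B) (w : W) (ε : ZMod 2) :
    sigma cs i (w, ε) = (s i * w * s i, ε + if w = s i then 1 else 0) := rfl

/-- applying a word of sigmas -/
lemma prod_sigma_apply (ω : List B) (w : W) (ε : ZMod 2) :
    (ω.map (sigma cs)).prod (w, ε) =
      (π ω * w * (π ω)⁻¹, ε + ((ris ω).count w : ZMod 2)) := by
  induction ω generalizing ε with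
  | nil => simp
  | cons i ω ih =>
      rw [List.map_cons, List.prod_cons, Equiv.Perm.mul_apply, ih, sigma_apply,
        cs.wordProd_cons, rightInvSeq_cons]
      simp only [List.count_cons, Prod.mk.injEq]
      constructor
      · rw [mul_inv_rev, cs.inv_simple]; group
      · have h : (π ω * w * (π ω)⁻¹ = s i) ↔ (w = (π ω)⁻¹ * s i * π ω) := by
          constructor
          · intro h; rw [← h]; group
          · intro h; rw [h]; group
        have hc : ((π ω)⁻¹ * s i * π ω == w) = decide (w = (π ω)⁻¹ * s i * π ω) := by
          simp [BEq.beq, eq_comm]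
        rw [hc, if_congr h rfl rfl]
        push_cast
        by_cases hw : w = (π ω)⁻¹ * s i * π ω <;> simp [hw] <;> ring

end StrongExch

namespace Stage2

open StrongExch

variable {B W : Type*} [Group W] [DecidableEq W] {M : CoxeterMatrix B}
  (cs : CoxeterSystem M W)

local prefix:100 "s" => cs.simple
local prefix:100 "π" => cs.wordProd
local prefix:100 "ℓ" => cs.length
local prefix:100 "ris" => cs.rightInvSeq

lemma drop_alternatingWord (i j : B) (n d : ℕ) (hd : d ≤ n) :
    (alternatingWord i j n).drop d = alternatingWord i j (n - d) := by
  induction n generalizing d with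
  | zero => simp [alternatingWord]
  | succ n ih =>
      cases d with
      | zero => simp
      | succ e =>
          rw [alternatingWord_succ' i j n, List.drop_succ_cons, ih e (by omega)]
          congr 1
          omega

lemma getD_ris_eq (ω : List B) (k : ℕ) (hk : k < ω.length) :
    (ris ω).getD k 1 = (π (ω.drop (k + 1)))⁻¹ * π (ω.drop k) := by
  rw [cs.getD_rightInvSeq]
  have h : ω.drop k = ω[k] :: ω.drop (k+1) := List.drop_eq_getElem_cons hk
  rw [h, cs.wordProd_cons]
  rw [List.getElem?_eq_getElem hk]
  simp [mul_assoc]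

lemma simple_mul_pow (i j : B) (a : ℤ) :
    s j * (s i * s j) ^ a = (s i * s j) ^ (-a) * s j := by
  have hc : (MulAut.conj (s j)) (s i * s j) = (s i * s j)⁻¹ := by
    rw [MulAut.conj_apply, cs.inv_simple, mul_inv_rev, cs.inv_simple, cs.inv_simple]
    calc s j * (s i * s j) * s j = s j * s i * (s j * s j) := by group
      _ = s j * s i := by rw [cs.simple_mul_simple_self, mul_one]
  have h2 := map_zpow (MulAut.conj (s j)) (s i * s j) a
  rw [hc, inv_zpow, ← zpow_neg] at h2
  rw [MulAut.conj_apply, cs.inv_simple] at h2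
  calc s j * (s i * s j) ^ a = (s j * (s i * s j) ^ a * s j) * s j := by
        rw [mul_assoc, cs.simple_mul_simple_self, mul_one]
    _ = (s i * s j) ^ (-a) * s j := by rw [h2]

lemma getD_ris_alternatingWord (i j : B) (n k : ℕ) (hk : k < n) :
    (ris (alternatingWord i j n)).getD k 1
      = (s i * s j) ^ (-((n - k - 1 : ℕ) : ℤ)) * s j := by
  have hlen : (alternatingWord i j n).length = n := length_alternatingWord i j n
  obtain ⟨n', hn'⟩ : ∃ n', n - k - 1 = n' := ⟨_, rfl⟩
  rw [getD_ris_eq cs _ k (by omega),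
    drop_alternatingWord i j n (k+1) (by omega), drop_alternatingWord i j n k (by omega)]
  have h1 : n - (k + 1) = n' := by omega
  have h2 : n - k = n' + 1 := by omega
  rw [hn', h1, h2, cs.prod_alternatingWord_eq_mul_pow, cs.prod_alternatingWord_eq_mul_pow]
  rcases Nat.even_or_odd n' with he | ho
  · obtain ⟨a, ha⟩ := he
    have h3 : n' / 2 = a := by omega
    have h4 : (n' + 1) / 2 = a := by omega
    have h5 : ¬ Even (n' + 1) := by
      rw [Nat.even_add_one]
      exact not_not.mpr ⟨a, ha⟩
    have he' : Even n' := ⟨a, ha⟩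
    simp only [he', h5, if_true, if_false, h3, h4, one_mul]
    rw [← zpow_natCast (s i * s j) a]
    calc ((s i * s j) ^ (a:ℤ))⁻¹ * (s j * (s i * s j) ^ (a:ℤ))
        = (s i * s j) ^ (-(a:ℤ)) * ((s i * s j) ^ (-(a:ℤ)) * s j) := by
          rw [simple_mul_pow cs i j, zpow_neg]
      _ = (s i * s j) ^ (-(n':ℤ)) * s j := by
          rw [← mul_assoc, ← zpow_add]
          congr 2
          omega
  · obtain ⟨a, ha⟩ := ho
    have h3 : n' / 2 = a := by omega
    have h4 : (n' + 1) / 2 = a + 1 := by omega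
    have h5 : Even (n' + 1) := by
      rw [Nat.even_add_one]
      simp [Nat.odd_iff.mp ⟨a, ha⟩, Nat.even_iff]
    have ho' : ¬ Even n' := by simp [Nat.even_iff, Nat.odd_iff.mp ⟨a, ha⟩]
    simp only [ho', h5, if_true, if_false, h3, h4, one_mul]
    rw [mul_inv_rev, cs.inv_simple, ← zpow_natCast (s i * s j) a, ← zpow_natCast (s i * s j) (a+1)]
    calc (((s i * s j) ^ (a:ℤ))⁻¹ * s j) * ((s i * s j) ^ (((a:ℕ)+1 : ℕ):ℤ))
        = (s i * s j) ^ (-(a:ℤ)) * ((s i * s j) ^ (-(((a:ℕ)+1:ℕ):ℤ)) * s j) := by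
          rw [mul_assoc, simple_mul_pow cs i j, ← zpow_neg]
      _ = (s i * s j) ^ (-(n':ℤ)) * s j := by
          rw [← mul_assoc, ← zpow_add]
          congr 2
          push_cast
          omega

end Stage2

namespace Stage3

open StrongExch Stage2

variable {B W : Type*} [Group W] [DecidableEq W] {M : CoxeterMatrix B}
  (cs : CoxeterSystem M W)

local prefix:100 "s" => cs.simple
local prefix:100 "π" => cs.wordProd
local prefix:100 "ℓ" => cs.length
local prefix:100 "ris" => cs.rightInvSeq

lemma prod_map_sigma_alt (i j : B) (m : ℕ) :
    ((alternatingWord i j (2*m)).map (sigma cs)).prod = (sigma cs i * sigma cs j) ^ m := by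
  induction m with
  | zero => simp [alternatingWord]
  | succ m ih =>
      have h1 : 2 * (m + 1) = (2 * m + 1) + 1 := by ring
      rw [h1, alternatingWord_succ' i j, alternatingWord_succ' i j]
      have h2 : ¬ Even (2*m+1) := by simp [Nat.even_add_one]
      have h3 : Even (2*m) := ⟨m, by ring⟩
      rw [if_neg h2, if_pos h3, List.map_cons, List.map_cons, List.prod_cons, List.prod_cons,
        ih, pow_succ' (sigma cs i * sigma cs j) m, mul_assoc]

lemma take_ris_alt_eq_drop (i j : B) (m : ℕ) (hm : (s i * s j) ^ m = 1) :
    (ris (alternatingWord i j (2*m))).take m = (ris (alternatingWord i j (2*m))).drop m := by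
  set l := ris (alternatingWord i j (2*m)) with hl
  have hlen : l.length = 2*m := by
    rw [hl, cs.length_rightInvSeq, length_alternatingWord]
  have hmc : (s i * s j) ^ (-(m:ℤ)) = 1 := by
    rw [zpow_neg, zpow_natCast, hm, inv_one]
  apply List.ext_getElem
  · simp [hlen]; omega
  · intro k h1 h2
    rw [List.getElem_take, List.getElem_drop]
    have hk : k < m := by
      rw [List.length_take, hlen] at h1
      omega
    have e1 : l[k] = l.getD k 1 := (List.getD_eq_getElem l 1 (by omega)).symm
    have e2 : l[m+k] = l.getD (m+k) 1 := (List.getD_eq_getElem l 1 (by omega)).symm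
    rw [e1, e2, hl, getD_ris_alternatingWord cs i j _ k (by omega),
      getD_ris_alternatingWord cs i j _ (m+k) (by omega)]
    have h3 : (2*m - k - 1 : ℕ) = (2*m - (m+k) - 1 : ℕ) + m := by omega
    rw [h3]
    push_cast
    rw [neg_add, zpow_add, hmc, mul_one]

lemma liftable : M.IsLiftable (sigma cs) := by
  intro i j
  set m := M i j with hm
  apply Equiv.ext
  rintro ⟨w, ε⟩
  rw [← prod_map_sigma_alt cs i j m, prod_sigma_apply]
  have hpow : (s i * s j) ^ m = 1 := cs.simple_mul_simple_pow i j
  have hprod : π (alternatingWord i j (2*m)) = 1 := by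
    rw [cs.prod_alternatingWord_eq_mul_pow, if_pos ⟨m, by ring⟩, one_mul]
    rw [(by omega : 2*m/2 = m), hpow]
  have hcount : ((ris (alternatingWord i j (2*m))).count w : ZMod 2) = 0 := by
    have h4 : (ris (alternatingWord i j (2*m))).count w
        = 2 * ((ris (alternatingWord i j (2*m))).take m).count w := by
      conv_lhs => rw [← List.take_append_drop m (ris (alternatingWord i j (2*m)))]
      rw [List.count_append, ← take_ris_alt_eq_drop cs i j m hpow]
      omega
    rw [h4]
    push_cast
    rw [(by decide : (2 : ZMod 2) = 0), zero_mul]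
  rw [hprod, hcount]
  simp

noncomputable def permRep : W →* Equiv.Perm (W × ZMod 2) := cs.lift ⟨sigma cs, liftable cs⟩

lemma permRep_simple (i : B) : permRep cs (s i) = sigma cs i :=
  cs.lift_apply_simple (liftable cs) i

lemma permRep_wordProd (ω : List B) :
    permRep cs (π ω) = (ω.map (sigma cs)).prod := by
  unfold CoxeterSystem.wordProd
  rw [map_list_prod, List.map_map]
  congr 1
  apply List.map_congr_left
  intro i _
  exact permRep_simple cs i

noncomputable def eta (w t : W) : ZMod 2 := ((permRep cs w) (t, 0)).2

lemma eta_wordProd (ω : List B) (t : W) :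
    eta cs (π ω) t = ((ris ω).count t : ZMod 2) := by
  show ((permRep cs (π ω)) (t, 0)).2 = _
  rw [permRep_wordProd, prod_sigma_apply]
  simp

lemma permRep_apply (w t : W) (ε : ZMod 2) :
    permRep cs w (t, ε) = (w * t * w⁻¹, ε + eta cs w t) := by
  obtain ⟨ω, rfl⟩ := cs.wordProd_surjective w
  rw [permRep_wordProd, prod_sigma_apply, eta_wordProd]

lemma eta_mul (u v t : W) :
    eta cs (u * v) t = eta cs v t + eta cs u (v * t * v⁻¹) := by
  show ((permRep cs (u * v)) (t, 0)).2 = _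
  rw [map_mul, Equiv.Perm.mul_apply, permRep_apply cs v t 0, zero_add,
    permRep_apply cs u (v * t * v⁻¹) (eta cs v t)]

lemma eta_one (t : W) : eta cs 1 t = 0 := by
  show ((permRep cs 1) (t, 0)).2 = 0
  rw [map_one]
  rfl

lemma eta_simple_self (i : B) : eta cs (s i) (s i) = 1 := by
  show ((permRep cs (s i)) (s i, 0)).2 = 1
  rw [permRep_simple, sigma_apply, if_pos rfl]
  simp

lemma eta_self {t : W} (ht : cs.IsReflection t) : eta cs t t = 1 := by
  obtain ⟨v, i, rfl⟩ := ht
  set t := v * s i * v⁻¹ with hteq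
  have c1 : v⁻¹ * t * (v⁻¹)⁻¹ = s i := by rw [hteq]; group
  have h0 : eta cs v⁻¹ t + eta cs v (s i) = 0 := by
    rw [← c1, ← eta_mul, mul_inv_cancel, eta_one]
  have c2 : (s i * v⁻¹) * t * (s i * v⁻¹)⁻¹ = s i := by
    rw [hteq, mul_inv_rev, inv_inv, cs.inv_simple]
    calc s i * v⁻¹ * (v * s i * v⁻¹) * (v * s i)
        = s i * (v⁻¹ * v) * s i * (v⁻¹ * v) * s i := by group
      _ = s i := by
          rw [inv_mul_cancel, mul_one, mul_one, cs.simple_mul_simple_self, one_mul]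
  have c3 : eta cs (s i * v⁻¹) t = eta cs v⁻¹ t + 1 := by
    rw [eta_mul, c1, eta_simple_self]
  have c4 : t = v * (s i * v⁻¹) := by rw [hteq, mul_assoc]
  calc eta cs t t = eta cs (v * (s i * v⁻¹)) t := by rw [← c4]
    _ = eta cs (s i * v⁻¹) t + eta cs v ((s i * v⁻¹) * t * (s i * v⁻¹)⁻¹) := eta_mul ..
    _ = (eta cs v⁻¹ t + eta cs v (s i)) + 1 := by rw [c3, c2]; ring
    _ = 1 := by rw [h0, zero_add]

lemma length_mul_lt_of_eta_eq_one {w t : W} (h : eta cs w t = 1) :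
    ℓ (w * t) < ℓ w := by
  obtain ⟨ω, hred, rfl⟩ := cs.exists_reduced_word' w
  rw [eta_wordProd] at h
  have hmem : t ∈ ris ω := by
    by_contra hmem
    rw [List.count_eq_zero_of_not_mem hmem] at h
    simp at h
  obtain ⟨j, hj, hjt⟩ := List.getElem_of_mem hmem
  rw [cs.length_rightInvSeq] at hj
  have := cs.wordProd_mul_getD_rightInvSeq ω j
  rw [List.getD_eq_getElem _ 1 (by rw [cs.length_rightInvSeq]; omega), hjt] at this
  rw [this]
  calc ℓ (π (ω.eraseIdx j)) ≤ (ω.eraseIdx j).length := cs.length_wordProd_le _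
    _ < ω.length := by
        have := List.length_eraseIdx_add_one (l := ω) (i := j) hj
        omega
    _ = ℓ (π ω) := hred.symm

lemma eta_eq_one_iff {w t : W} (ht : cs.IsReflection t) :
    eta cs w t = 1 ↔ ℓ (w * t) < ℓ w := by
  constructor
  · exact length_mul_lt_of_eta_eq_one cs
  · intro h
    rcases (by decide : ∀ x : ZMod 2, x = 0 ∨ x = 1) (eta cs w t) with h0 | h1
    · exfalso
      have c1 : t * t * t⁻¹ = t := by group
      have h2 : eta cs (w * t) t = 1 := by
        rw [eta_mul, c1, eta_self cs ht, h0, add_zero]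
      have h3 := length_mul_lt_of_eta_eq_one cs h2
      rw [mul_assoc, ht.mul_self, mul_one] at h3
      omega
    · exact h1

/-- Strong exchange property. -/
theorem strong_exchange (ω : List B) {t : W} (ht : cs.IsReflection t)
    (h : ℓ (π ω * t) < ℓ (π ω)) :
    ∃ j < ω.length, π ω * t = π (ω.eraseIdx j) := by
  have h1 : eta cs (π ω) t = 1 := (eta_eq_one_iff cs ht).mpr h
  rw [eta_wordProd] at h1
  have hmem : t ∈ ris ω := by
    by_contra hmem
    rw [List.count_eq_zero_of_not_mem hmem] at h1
    simp at h1
  obtain ⟨j, hj, hjt⟩ := List.getElem_of_mem hmem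
  rw [cs.length_rightInvSeq] at hj
  refine ⟨j, hj, ?_⟩
  have := cs.wordProd_mul_getD_rightInvSeq ω j
  rw [List.getD_eq_getElem _ 1 (by rw [cs.length_rightInvSeq]; omega), hjt] at this
  exact this

end Stage3

namespace Stage4

open StrongExch Stage2 Stage3

variable {B W : Type*} [Group W] [DecidableEq W] {M : CoxeterMatrix B}
  (cs : CoxeterSystem M W)

local prefix:100 "s" => cs.simple
local prefix:100 "π" => cs.wordProd
local prefix:100 "ℓ" => cs.length

lemma word_shorten (ω : List B) (h : ¬ cs.IsReduced ω) :
    ∃ ω', π ω' = π ω ∧ ω'.length + 2 = ω.length ∧ ∀ i ∈ ω', i ∈ ω := by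
  induction ω with
  | nil => exact absurd (by simp [CoxeterSystem.IsReduced]) h
  | cons i ω₀ ih =>
      by_cases h₀ : cs.IsReduced ω₀
      · have hred : ℓ (π ω₀) = ω₀.length := h₀
        have hlen : ℓ (s i * π ω₀) < ω₀.length + 1 := by
          have h1 : ℓ (π (i :: ω₀)) ≤ (i :: ω₀).length := cs.length_wordProd_le _
          have h2 : ℓ (π (i :: ω₀)) ≠ (i :: ω₀).length := fun hc => h hc
          rw [cs.wordProd_cons] at h1 h2
          simp only [List.length_cons] at h1 h2
          omega
        have hdesc : ℓ (s i * π ω₀) < ℓ (π ω₀) := by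
          rcases cs.length_simple_mul (π ω₀) i with h1 | h1 <;> omega
        have hdesc' : ℓ (π (ω₀.reverse) * s i) < ℓ (π (ω₀.reverse)) := by
          rw [cs.wordProd_reverse]
          have e1 : (π ω₀)⁻¹ * s i = (s i * π ω₀)⁻¹ := by
            rw [mul_inv_rev, cs.inv_simple]
          rw [e1, cs.length_inv, cs.length_inv]
          exact hdesc
        obtain ⟨j, hj, hje⟩ := strong_exchange cs ω₀.reverse (cs.isReflection_simple i) hdesc'
        rw [List.length_reverse] at hj
        refine ⟨(ω₀.reverse.eraseIdx j).reverse, ?_, ?_, ?_⟩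
        · rw [cs.wordProd_reverse, ← hje, cs.wordProd_reverse, cs.wordProd_cons]
          rw [mul_inv_rev, cs.inv_simple, inv_inv]
        · rw [List.length_reverse]
          have := List.length_eraseIdx_add_one (l := ω₀.reverse) (i := j)
            (by rwa [List.length_reverse])
          rw [List.length_reverse] at this
          simp only [List.length_cons]
          omega
        · intro i' hi'
          rw [List.mem_reverse] at hi'
          have h5 : i' ∈ ω₀.reverse := (List.eraseIdx_sublist ω₀.reverse j).mem hi'
          rw [List.mem_reverse] at h5
          exact List.mem_cons_of_mem i h5
      · obtain ⟨ω', h1, h2, h3⟩ := ih h₀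
        refine ⟨i :: ω', ?_, ?_, ?_⟩
        · rw [cs.wordProd_cons, cs.wordProd_cons, h1]
        · simp only [List.length_cons]; omega
        · intro i' hi'
          rcases List.mem_cons.mp hi' with h4 | h4
          · cases h4
            exact List.mem_cons_self
          · exact List.mem_cons_of_mem i (h3 i' h4)

lemma exists_reduced_sub (ω : List B) :
    ∃ ω', cs.IsReduced ω' ∧ π ω' = π ω ∧ ∀ i ∈ ω', i ∈ ω := by
  generalize hn : ω.length = n
  induction n using Nat.strong_induction_on generalizing ω with
  | _ n ih =>
      by_cases h : cs.IsReduced ω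
      · exact ⟨ω, h, rfl, fun _ h => h⟩
      · obtain ⟨ω₁, h1, h2, h3⟩ := word_shorten cs ω h
        obtain ⟨ω', h4, h5, h6⟩ := ih ω₁.length (by omega) ω₁ rfl
        exact ⟨ω', h4, h5.trans h1, fun i hi => h3 i (h6 i hi)⟩

end Stage4

namespace Stage5

open StrongExch Stage2 Stage3 Stage4

variable {B W : Type*} [Group W] [DecidableEq W] {M : CoxeterMatrix B}
  (cs : CoxeterSystem M W)

local prefix:100 "s" => cs.simple
local prefix:100 "π" => cs.wordProd
local prefix:100 "ℓ" => cs.length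

variable {I : Set W}

lemma exists_word (hI : I ⊆ Set.range cs.simple) {u : W} (hu : u ∈ Subgroup.closure I) :
    ∃ ω, π ω = u ∧ ∀ i ∈ ω, s i ∈ I := by
  induction hu using Subgroup.closure_induction with
  | mem x hx =>
      obtain ⟨i, hi⟩ := hI hx
      exact ⟨[i], by simp [hi], by simp [hi ▸ hx]⟩
  | one => exact ⟨[], by simp, by simp⟩
  | mul x y hx hy ihx ihy =>
      obtain ⟨ω₁, h1, h2⟩ := ihx
      obtain ⟨ω₂, h3, h4⟩ := ihy
      refine ⟨ω₁ ++ ω₂, by rw [cs.wordProd_append, h1, h3], ?_⟩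
      intro i hi
      rcases List.mem_append.mp hi with h | h
      · exact h2 i h
      · exact h4 i h
  | inv x hx ihx =>
      obtain ⟨ω₁, h1, h2⟩ := ihx
      refine ⟨ω₁.reverse, by rw [cs.wordProd_reverse, h1], ?_⟩
      intro i hi
      exact h2 i (List.mem_reverse.mp hi)

lemma exists_reduced_word_subset (hI : I ⊆ Set.range cs.simple) {u : W}
    (hu : u ∈ Subgroup.closure I) :
    ∃ ω, cs.IsReduced ω ∧ π ω = u ∧ ∀ i ∈ ω, s i ∈ I := by
  obtain ⟨ω, h1, h2⟩ := exists_word cs hI hu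
  obtain ⟨ω', h3, h4, h5⟩ := exists_reduced_sub cs ω
  exact ⟨ω', h3, h4.trans h1, fun i hi => h2 i (h5 i hi)⟩

lemma exists_left_descent_in (hI : I ⊆ Set.range cs.simple) {u : W}
    (hu : u ∈ Subgroup.closure I) (hne : u ≠ 1) :
    ∃ i, s i ∈ I ∧ ℓ (s i * u) < ℓ u ∧ s i * u ∈ Subgroup.closure I := by
  obtain ⟨ω, h1, h2, h3⟩ := exists_reduced_word_subset cs hI hu
  match ω, h1, h2, h3 with
  | [], _, h2, _ => exact absurd (by simp [← h2]) hne
  | i :: ω₀, h1, h2, h3 =>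
      refine ⟨i, h3 i List.mem_cons_self, ?_, ?_⟩
      · have h4 : s i * u = π ω₀ := by
          rw [← h2, cs.wordProd_cons, cs.simple_mul_simple_cancel_left]
        have h5 : ℓ u = ω₀.length + 1 := by rw [← h2]; exact h1
        rw [h4]
        calc ℓ (π ω₀) ≤ ω₀.length := cs.length_wordProd_le _
          _ < ℓ u := by omega
      · exact mul_mem (Subgroup.subset_closure (h3 i List.mem_cons_self)) hu

lemma exists_right_descent_in (hI : I ⊆ Set.range cs.simple) {u : W}
    (hu : u ∈ Subgroup.closure I) (hne : u ≠ 1) :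
    ∃ i, s i ∈ I ∧ ℓ (u * s i) < ℓ u ∧ u * s i ∈ Subgroup.closure I := by
  obtain ⟨i, h1, h2, h3⟩ := exists_left_descent_in cs hI (inv_mem hu) (by simpa using hne)
  refine ⟨i, h1, ?_, ?_⟩
  · have e : u * s i = (s i * u⁻¹)⁻¹ := by rw [mul_inv_rev, inv_inv, cs.inv_simple]
    rw [e, cs.length_inv, ← cs.length_inv u]
    exact h2
  · exact mul_mem hu (Subgroup.subset_closure h1)

lemma length_mul_reflection_lt {w : W} (hI : I ⊆ Set.range cs.simple)
    (hwmem : w ∈ Subgroup.closure I) (hwmax : ∀ u ∈ Subgroup.closure I, ℓ u ≤ ℓ w)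
    {t : W} (htI : t ∈ Subgroup.closure I)
    (ht : cs.IsReflection t) : ℓ (w * t) < ℓ w := by
  have h1 : ℓ (w * t) ≤ ℓ w := hwmax _ (mul_mem hwmem htI)
  have h2 : ℓ (w * t) ≠ ℓ w := ht.length_mul_left_ne w
  omega

lemma longest_add_length_inv_mul {w : W} (hI : I ⊆ Set.range cs.simple)
    (hwmem : w ∈ Subgroup.closure I) (hwmax : ∀ u ∈ Subgroup.closure I, ℓ u ≤ ℓ w) :
    ∀ u ∈ Subgroup.closure I, ℓ u + ℓ (u⁻¹ * w) = ℓ w := by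
  have hwinvmem : w⁻¹ ∈ Subgroup.closure I := inv_mem hwmem
  intro u hu
  generalize hn : ℓ u = n
  induction n using Nat.strong_induction_on generalizing u with
  | _ n ih =>
      rcases eq_or_ne u 1 with rfl | hne
      · simp at hn ⊢
        omega
      · obtain ⟨i, h1, h2, h3⟩ := exists_right_descent_in cs hI hu hne
        have h4 : ℓ (u * s i) = ℓ u - 1 ∧ 1 ≤ ℓ u := by
          rcases cs.length_mul_simple u i with h | h <;> omega
        set u' := u * s i with hu'
        have hu'u : u' * s i = u := by
          rw [hu', mul_assoc, cs.simple_mul_simple_self, mul_one]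
        have ht : cs.IsReflection (u' * s i * u'⁻¹) := ⟨u', i, rfl⟩
        have htI : u' * s i * u'⁻¹ ∈ Subgroup.closure I :=
          mul_mem (mul_mem h3 (Subgroup.subset_closure h1)) (inv_mem h3)
        have hmax' : ∀ v ∈ Subgroup.closure I, ℓ v ≤ ℓ w⁻¹ := fun v hv => by
          rw [cs.length_inv]; exact hwmax v hv
        have h5 : eta cs w⁻¹ (u' * s i * u'⁻¹) = 1 := by
          rw [eta_eq_one_iff cs ht]
          exact length_mul_reflection_lt cs hI hwinvmem hmax' htI ht
        have h6 : eta cs u' (s i) = 0 := by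
          rcases (by decide : ∀ x : ZMod 2, x = 0 ∨ x = 1) (eta cs u' (s i)) with h | h
          · exact h
          · exfalso
            have := length_mul_lt_of_eta_eq_one cs h
            rw [hu'u] at this
            omega
        have h7 : eta cs (w⁻¹ * u') (s i) = 1 := by
          rw [eta_mul, h6, h5, zero_add]
        have h8 : ℓ (w⁻¹ * u' * s i) < ℓ (w⁻¹ * u') :=
          length_mul_lt_of_eta_eq_one cs h7
        have h9 : ℓ (u⁻¹ * w) = ℓ (u'⁻¹ * w) - 1 ∧ ℓ (u'⁻¹ * w) ≥ 1 := by
          have e1 : u⁻¹ * w = ((w⁻¹ * u') * s i)⁻¹ := by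
            rw [← hu'u]
            simp [mul_assoc, mul_inv_rev, cs.inv_simple]
          have e2 : u'⁻¹ * w = (w⁻¹ * u')⁻¹ := by simp [mul_inv_rev]
          rw [e1, e2, cs.length_inv, cs.length_inv]
          rcases cs.length_mul_simple (w⁻¹ * u') i with h | h <;> omega
        have h10 := ih (n-1) (by omega) u' h3 (by omega)
        have h11 : ℓ (u'⁻¹ * w) ≤ ℓ w := by omega
        omega

lemma longest_unique {w u : W} (hI : I ⊆ Set.range cs.simple)
    (hwmem : w ∈ Subgroup.closure I) (hwmax : ∀ v ∈ Subgroup.closure I, ℓ v ≤ ℓ w)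
    (humem : u ∈ Subgroup.closure I) (hulen : ℓ u = ℓ w) : u = w := by
  have h1 := longest_add_length_inv_mul cs hI hwmem hwmax u humem
  rw [hulen] at h1
  have h2 : ℓ (u⁻¹ * w) = 0 := by omega
  have h3 : u⁻¹ * w = 1 := cs.length_eq_zero_iff.mp h2
  calc u = u * (u⁻¹ * w) := by rw [h3, mul_one]
    _ = w := by group

lemma longest_mul_self {w : W} (hI : I ⊆ Set.range cs.simple)
    (hwmem : w ∈ Subgroup.closure I) (hwmax : ∀ v ∈ Subgroup.closure I, ℓ v ≤ ℓ w) :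
    w * w = 1 := by
  have h1 : w⁻¹ = w :=
    longest_unique cs hI hwmem hwmax (inv_mem hwmem) (cs.length_inv w)
  calc w * w = w * w⁻¹ := by rw [h1]
    _ = 1 := mul_inv_cancel w

lemma longest_mul_mem_length (hI : I ⊆ Set.range cs.simple) {w : W}
    (hwmem : w ∈ Subgroup.closure I) (hwmax : ∀ v ∈ Subgroup.closure I, ℓ v ≤ ℓ w) :
    ∀ u ∈ Subgroup.closure I, ℓ u + ℓ (u * w) = ℓ w := by
  intro u hu
  have := longest_add_length_inv_mul cs hI hwmem hwmax u⁻¹ (inv_mem hu)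
  rwa [inv_inv, cs.length_inv u] at this

lemma longest_mul_mem_length_right (hI : I ⊆ Set.range cs.simple) {w : W}
    (hwmem : w ∈ Subgroup.closure I) (hwmax : ∀ v ∈ Subgroup.closure I, ℓ v ≤ ℓ w) :
    ∀ u ∈ Subgroup.closure I, ℓ u + ℓ (w * u) = ℓ w := by
  intro u hu
  have hmax' : ∀ v ∈ Subgroup.closure I, ℓ v ≤ ℓ w⁻¹ := fun v hv => by
    rw [cs.length_inv]; exact hwmax v hv
  have h1 := longest_mul_mem_length cs hI (inv_mem hwmem) hmax' u⁻¹ (inv_mem hu)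
  rw [cs.length_inv u, (by rw [mul_inv_rev] : u⁻¹ * w⁻¹ = (w * u)⁻¹),
    cs.length_inv, cs.length_inv w] at h1
  exact h1

end Stage5

namespace Stage6

open StrongExch Stage2 Stage3 Stage4 Stage5

variable {B W : Type*} [Group W] [DecidableEq W] {M : CoxeterMatrix B}
  (cs : CoxeterSystem M W)

local prefix:100 "s" => cs.simple
local prefix:100 "π" => cs.wordProd
local prefix:100 "ℓ" => cs.length

lemma aut_wordProd (γ : MulAut W) (g : B → B) (hg : ∀ i, γ (s i) = s (g i)) (ω : List B) :
    γ (π ω) = π (ω.map g) := by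
  induction ω with
  | nil => simp
  | cons i ω ih =>
      rw [cs.wordProd_cons, map_mul, ih, hg, List.map_cons, cs.wordProd_cons]

lemma aut_length_le (γ : MulAut W) (hγ : ∀ i : B, ∃ i', γ (s i) = s i') (w : W) :
    ℓ (γ w) ≤ ℓ w := by
  choose g hg using hγ
  obtain ⟨ω, hω, rfl⟩ := cs.exists_reduced_word' w
  rw [aut_wordProd cs γ g hg ω]
  calc ℓ (π (ω.map g)) ≤ (ω.map g).length := cs.length_wordProd_le _
    _ = ω.length := List.length_map g
    _ = ℓ (π ω) := hω.symm

lemma aut_length_eq (γ : MulAut W) (h1 : ∀ i : B, ∃ i', γ (s i) = s i')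
    (h2 : ∀ i : B, ∃ i', γ⁻¹ (s i) = s i') (w : W) : ℓ (γ w) = ℓ w := by
  refine le_antisymm (aut_length_le cs γ h1 w) ?_
  have h3 := aut_length_le cs γ⁻¹ h2 (γ w)
  rwa [(by simp : γ⁻¹ (γ w) = w)] at h3

lemma aut_mem_closure (γ : MulAut W) {I : Set W} (hst : γ '' I = I) {x : W}
    (hx : x ∈ Subgroup.closure I) : γ x ∈ Subgroup.closure I := by
  have h := MonoidHom.map_closure γ.toMonoidHom I
  have h2 : γ x ∈ Subgroup.map γ.toMonoidHom (Subgroup.closure I) := ⟨x, hx, rfl⟩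
  rw [h] at h2
  have h3 : ⇑(MulEquiv.toMonoidHom γ) '' I = ⇑γ '' I := rfl
  rwa [h3, hst] at h2

end Stage6


open StrongExch Stage2 Stage3 Stage4 Stage5 Stage6

/-- for `J ∈ 𝒮`, the element `s_J := w_{I₀ ∪ J} w_{I₀}` equals
`w_{I₀} w_{I₀ ∪ J}`, lies in `𝒲^Γ`, and squares to `1`. -/
theorem sJ_mem_calW_fixed_and_sq_one {B W : Type*} [Finite B] [Group W] {M : CoxeterMatrix B}
    (cs : CoxeterSystem M W) (Γ : Subgroup (MulAut W))
    (hΓ : ∀ γ ∈ Γ, ⇑γ '' Set.range cs.simple = Set.range cs.simple)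
    (I₀ : Set W) (hI₀ : I₀ ⊆ Set.range cs.simple)
    (hfin : Finite ↥(Subgroup.closure I₀))
    (hstab : ∀ γ ∈ Γ, ⇑γ '' I₀ = I₀)
    (wlong : Set W → W)
    (hw0 : IsLongestIn cs I₀ (wlong I₀))
    (hwlong : ∀ J : Set W, IsScalOrbit cs Γ I₀ J → IsLongestIn cs (I₀ ∪ J) (wlong (I₀ ∪ J)))
    (hnorm : ∀ J : Set W, IsScalOrbit cs Γ I₀ J →
      wlong (I₀ ∪ J) ∈ Subgroup.normalizer (Subgroup.closure I₀)) :
    ∀ J : Set W, IsScalOrbit cs Γ I₀ J →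
      wlong (I₀ ∪ J) * wlong I₀ = wlong I₀ * wlong (I₀ ∪ J) ∧
      wlong (I₀ ∪ J) * wlong I₀ ∈ calW cs I₀ ∧
      (∀ γ ∈ Γ, γ (wlong (I₀ ∪ J) * wlong I₀) = wlong (I₀ ∪ J) * wlong I₀) ∧
      (wlong (I₀ ∪ J) * wlong I₀) * (wlong (I₀ ∪ J) * wlong I₀) = 1 := by
  classical
  intro J hJ
  obtain ⟨hw0mem, hw0max⟩ := hw0
  obtain ⟨hw1mem, hw1max⟩ := hwlong J hJ
  have hn' := hnorm J hJ
  obtain ⟨w₀, hw₀def⟩ : ∃ x, wlong I₀ = x := ⟨_, rfl⟩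
  obtain ⟨w₁, hw₁def⟩ : ∃ x, wlong (I₀ ∪ J) = x := ⟨_, rfl⟩
  rw [hw₀def] at hw0mem hw0max ⊢
  rw [hw₁def] at hw1mem hw1max hn' ⊢
  -- J consists of simple reflections
  have hJS : J ⊆ Set.range cs.simple := by
    obtain ⟨s₀, hs₀, hJdef⟩ := hJ.1
    intro t ht
    rw [hJdef] at ht
    obtain ⟨γ, hγ, rfl⟩ := ht
    rw [← hΓ γ hγ]
    exact Set.mem_image_of_mem _ hs₀.1
  have hIJ : I₀ ∪ J ⊆ Set.range cs.simple := Set.union_subset hI₀ hJS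
  have hPQ : Subgroup.closure I₀ ≤ Subgroup.closure (I₀ ∪ J) :=
    Subgroup.closure_mono Set.subset_union_left
  have hn := hn'
  -- involutions
  have w1sq : w₁ * w₁ = 1 := longest_mul_self cs hIJ hw1mem hw1max
  have w0sq : w₀ * w₀ = 1 := longest_mul_self cs hI₀ hw0mem hw0max
  have w1inv : w₁⁻¹ = w₁ := inv_eq_of_mul_eq_one_left w1sq
  -- conjugation by w₁ preserves length on Q
  have conj_len : ∀ u ∈ Subgroup.closure (I₀ ∪ J),
      cs.length (w₁ * u * w₁) = cs.length u := by
    intro u hu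
    have h1 := longest_mul_mem_length_right cs hIJ hw1mem hw1max u hu
    have h2 : w₁ * u ∈ Subgroup.closure (I₀ ∪ J) := mul_mem hw1mem hu
    have h3 := longest_mul_mem_length cs hIJ hw1mem hw1max (w₁ * u) h2
    have h4 : cs.length (w₁ * u) ≤ cs.length w₁ := hw1max _ h2
    omega
  -- w₁ w₀ w₁ = w₀
  have ceq : w₁ * w₀ * w₁ = w₀ := by
    have hc1 : w₁ * w₀ * w₁ ∈ Subgroup.closure I₀ := by
      have := (Subgroup.mem_normalizer_iff.mp hn w₀).mp hw0mem
      rwa [w1inv] at this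
    have hc2 : cs.length (w₁ * w₀ * w₁) = cs.length w₀ :=
      conj_len w₀ (hPQ hw0mem)
    exact longest_unique cs hI₀ hw0mem hw0max hc1 hc2
  have comm : w₁ * w₀ = w₀ * w₁ := by
    calc w₁ * w₀ = w₁ * w₀ * (w₁ * w₁) := by rw [w1sq, mul_one]
      _ = (w₁ * w₀ * w₁) * w₁ := by group
      _ = w₀ * w₁ := by rw [ceq]
  have sq1 : (w₁ * w₀) * (w₁ * w₀) = 1 := by
    calc (w₁ * w₀) * (w₁ * w₀) = w₁ * (w₀ * w₁) * w₀ := by group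
      _ = w₁ * (w₁ * w₀) * w₀ := by rw [comm]
      _ = (w₁ * w₁) * (w₀ * w₀) := by group
      _ = 1 := by rw [w1sq, w0sq, one_mul]
  refine ⟨comm, ⟨?_, ?_⟩, ?_, sq1⟩
  · -- length condition
    intro x hx
    obtain ⟨i, hi⟩ := hI₀ hx
    have hxP : x ∈ Subgroup.closure I₀ := Subgroup.subset_closure hx
    have hxQ : x ∈ Subgroup.closure (I₀ ∪ J) := hPQ hxP
    have ht'P : w₁ * x * w₁ ∈ Subgroup.closure I₀ := by
      have := (Subgroup.mem_normalizer_iff.mp hn x).mp hxP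
      rwa [w1inv] at this
    have ht'len : cs.length (w₁ * x * w₁) = 1 := by
      rw [conj_len x hxQ, ← hi, cs.length_simple]
    have ht'refl : cs.IsReflection (w₁ * x * w₁) := by
      have e0 : w₁ * x * w₁ = w₁ * cs.simple i * w₁⁻¹ := by rw [hi, w1inv]
      rw [e0]
      exact ⟨w₁, i, rfl⟩
    have htw0 : cs.length ((w₁ * x * w₁) * w₀) < cs.length w₀ := by
      have h1 : (w₁ * x * w₁) * w₀ ∈ Subgroup.closure I₀ := mul_mem ht'P hw0mem
      have h2 := hw0max _ h1
      have h3 := ht'refl.length_mul_right_ne w₀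
      omega
    have e : x * (w₁ * w₀) = w₁ * ((w₁ * x * w₁) * w₀) := by
      calc x * (w₁ * w₀) = (w₁ * w₁) * (x * (w₁ * w₀)) := by rw [w1sq, one_mul]
        _ = w₁ * ((w₁ * x * w₁) * w₀) := by group
    have h5 := longest_mul_mem_length_right cs hIJ hw1mem hw1max
      ((w₁ * x * w₁) * w₀) (mul_mem (hPQ ht'P) (hPQ hw0mem))
    have h6 := longest_mul_mem_length_right cs hIJ hw1mem hw1max w₀ (hPQ hw0mem)
    rw [e]
    omega
  · -- coset condition
    have hmem : w₁ * w₀ ∈ Subgroup.normalizer (Subgroup.closure I₀) :=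
      mul_mem hn (Subgroup.le_normalizer hw0mem)
    ext x
    simp only [Set.mem_image, SetLike.mem_coe]
    constructor
    · rintro ⟨p, hp, rfl⟩
      refine ⟨(w₁ * w₀) * p * (w₁ * w₀)⁻¹,
        (Subgroup.mem_normalizer_iff.mp hmem p).mp hp, by group⟩
    · rintro ⟨p, hp, rfl⟩
      refine ⟨(w₁ * w₀)⁻¹ * p * (w₁ * w₀), ?_, by group⟩
      have := (Subgroup.mem_normalizer_iff.mp
        (inv_mem hmem) p).mp hp
      rwa [inv_inv] at this
  · -- Γ-fixed
    intro γ hγ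
    have hsimp : ∀ δ : MulAut W, δ ∈ Γ → ∀ i : B, ∃ i', δ (cs.simple i) = cs.simple i' := by
      intro δ hδ i
      have : δ (cs.simple i) ∈ Set.range cs.simple := by
        rw [← hΓ δ hδ]
        exact Set.mem_image_of_mem _ ⟨i, rfl⟩
      obtain ⟨i', hi'⟩ := this
      exact ⟨i', hi'.symm⟩
    have hlen : ∀ v : W, cs.length (γ v) = cs.length v :=
      aut_length_eq cs γ (hsimp γ hγ) (hsimp γ⁻¹ (inv_mem hγ))
    have hJstab : ⇑γ '' J = J := by
      obtain ⟨s₀, hs₀, hJdef⟩ := hJ.1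
      rw [hJdef]
      ext t
      constructor
      · rintro ⟨t', ⟨δ, hδ, rfl⟩, rfl⟩
        exact ⟨γ * δ, mul_mem hγ hδ, rfl⟩
      · rintro ⟨δ, hδ, rfl⟩
        exact ⟨(γ⁻¹ * δ) s₀, ⟨γ⁻¹ * δ, mul_mem (inv_mem hγ) hδ, rfl⟩, by
          simp [MulAut.mul_apply]⟩
    have hIJstab : ⇑γ '' (I₀ ∪ J) = I₀ ∪ J := by
      rw [Set.image_union, hstab γ hγ, hJstab]
    have hγw0 : γ w₀ = w₀ :=
      longest_unique cs hI₀ hw0mem hw0max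
        (aut_mem_closure γ (hstab γ hγ) hw0mem) (hlen w₀)
    have hγw1 : γ w₁ = w₁ :=
      longest_unique cs hIJ hw1mem hw1max
        (aut_mem_closure γ hIJstab hw1mem) (hlen w₁)
    rw [map_mul, hγw0, hγw1]
end
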